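/- arXiv:1502.03049 — 4 statements merged into one kernel-verified Lean document; each statement's English description precedes it below -/
import Mathlib

section
/- Let A be an n×n random matrix with jointly independent entries taking values in {0,1}, with E A = (p_ij), and let d ≥ e be a number such that (1/n)·Σ_{i,j=1}^n p_ij ≤ d. Then for any r ≥ 1, with probability at least 1 − e^{−2rn}, one has ‖A − E A‖_{∞→1} ≤ 5·r·n·√d. -/
open MeasureTheory ProbabilityTheory

noncomputable def opNorm {m k : Type*} [Fintype m] [Fintype k] [DecidableEq k]
    (B : Matrix m k ℝ) : ℝ :=
  ‖(Matrix.toEuclideanLin B).toContinuousLinearMap‖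

noncomputable def normInfOne {m k : Type*} [Fintype m] [Fintype k] (B : Matrix m k ℝ) : ℝ :=
  ⨆ p : (m → ({-1, 1} : Set ℝ)) × (k → ({-1, 1} : Set ℝ)),
    ∑ i, ∑ j, (p.1 i : ℝ) * B i j * (p.2 j : ℝ)

def submatrixSet {n k : ℕ} (B : Matrix (Fin n) (Fin k) ℝ)
    (I : Finset (Fin n)) (J : Finset (Fin k)) : Matrix I J ℝ :=
  fun i j => B i.1 j.1

noncomputable def avgOp {n : ℕ} (B : Matrix (Fin n) (Fin n) ℝ) : Matrix (Fin n) (Fin n) ℝ :=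
  fun i j => B i j / (Real.sqrt (∑ l, B i l) * Real.sqrt (∑ l, B l j))

noncomputable def lap {n : ℕ} (B : Matrix (Fin n) (Fin n) ℝ) : Matrix (Fin n) (Fin n) ℝ :=
  fun i j => (if i = j ∧ 0 < ∑ l, B i l then (1 : ℝ) else 0) - avgOp B i j

def reg {n : ℕ} (B : Matrix (Fin n) (Fin n) ℝ) (τ : ℝ) : Matrix (Fin n) (Fin n) ℝ :=
  fun i j => B i j + τ

def maskMatrix {n : ℕ} (M : Matrix (Fin n) (Fin n) ℝ) (S : Finset (Fin n × Fin n)) :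
    Matrix (Fin n) (Fin n) ℝ :=
  fun i j => if (i, j) ∈ S then M i j else 0

open Classical in
noncomputable def secondSmallestEigenvalue {n : ℕ} (M : Matrix (Fin n) (Fin n) ℝ) : ℝ :=
  if hM : M.IsHermitian then
    (Multiset.sort (Finset.univ.val.map hM.eigenvalues) (· ≤ ·)).getD 1 0
  else 0


lemma aux_exp_quad {x : ℝ} (hx : |x| ≤ 1) : Real.exp x - 1 - x ≤ x ^ 2 := by
  have h := Real.exp_bound hx (n := 2) (by norm_num)
  have hsum : ∑ i ∈ Finset.range 2, x ^ i / (Nat.factorial i) = 1 + x := by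
    simp [Finset.sum_range_succ]
  rw [hsum] at h
  have h2 : |x| ^ 2 = x ^ 2 := by rw [sq_abs]
  rw [h2] at h
  norm_num [Nat.factorial] at h
  have := abs_le.1 h
  nlinarith [sq_nonneg x]

lemma aux_mgf {Ω : Type*} [MeasureSpace Ω] [IsProbabilityMeasure (ℙ : Measure Ω)]
    (X : Ω → ℝ) (hX : Measurable X) (h01 : ∀ ω, X ω = 0 ∨ X ω = 1)
    (q c lam : ℝ) (hq : (∫ ω, X ω) = q) (hc : c = -1 ∨ c = 1)
    (hlam0 : 0 ≤ lam) (hlam1 : lam ≤ 1) :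
    mgf (fun ω => c * (X ω - q)) ℙ lam ≤ Real.exp (q * lam ^ 2) := by
  have hc1 : c ^ 2 = 1 := by rcases hc with h | h <;> simp [h]
  have hcabs : |c| = 1 := by rcases hc with h | h <;> simp [h]
  have hq0 : 0 ≤ q := hq ▸ integral_nonneg (fun ω => by rcases h01 ω with h | h <;> simp [h])
  set m := lam * c with hm
  have hmabs : |m| ≤ 1 := by
    rw [hm, abs_mul, hcabs, mul_one, abs_of_nonneg hlam0]; exact hlam1
  have hXint : Integrable X ℙ := by
    refine Integrable.mono' (integrable_const 1) hX.aestronglyMeasurable (ae_of_all _ fun ω => ?_)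
    rcases h01 ω with h | h <;> simp [h]
  have hpt : ∀ ω, Real.exp (lam * (c * (X ω - q)))
      = Real.exp (-(m * q)) * (1 + (Real.exp m - 1) * X ω) := by
    intro ω
    have harg : lam * (c * (X ω - q)) = -(m * q) + m * X ω := by rw [hm]; ring
    rw [harg, Real.exp_add]
    rcases h01 ω with h | h <;> simp [h]
  have hmgf : mgf (fun ω => c * (X ω - q)) ℙ lam
      = Real.exp (-(m * q)) * (1 + (Real.exp m - 1) * q) := by
    rw [mgf]
    simp_rw [hpt]
    rw [integral_const_mul, integral_add (integrable_const 1) (hXint.const_mul _),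
      integral_const, integral_const_mul, hq]
    simp
  rw [hmgf]
  have h1 : 1 + (Real.exp m - 1) * q ≤ Real.exp ((Real.exp m - 1) * q) := by
    have := Real.add_one_le_exp ((Real.exp m - 1) * q)
    linarith
  calc Real.exp (-(m * q)) * (1 + (Real.exp m - 1) * q)
      ≤ Real.exp (-(m * q)) * Real.exp ((Real.exp m - 1) * q) := by
        exact mul_le_mul_of_nonneg_left h1 (Real.exp_pos _).le
    _ = Real.exp ((Real.exp m - 1 - m) * q) := by rw [← Real.exp_add]; ring_nf
    _ ≤ Real.exp (q * lam ^ 2) := by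
        apply Real.exp_le_exp.2
        have hb : Real.exp m - 1 - m ≤ m ^ 2 := aux_exp_quad hmabs
        have hm2 : m ^ 2 = lam ^ 2 := by rw [hm, mul_pow, hc1, mul_one]
        nlinarith

lemma aux_tail (n : ℕ) (Ω : Type*) [MeasureSpace Ω] [IsProbabilityMeasure (ℙ : Measure Ω)]
    (A : Ω → Matrix (Fin n) (Fin n) ℝ) (p : Matrix (Fin n) (Fin n) ℝ) (d r : ℝ)
    (hmeas : ∀ i j, Measurable fun ω => A ω i j)
    (h01 : ∀ ω i j, A ω i j = 0 ∨ A ω i j = 1)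
    (hindep : iIndepFun
      (fun (q : Fin n × Fin n) ω => A ω q.1 q.2) ℙ)
    (hmean : ∀ i j, (∫ ω, A ω i j) = p i j)
    (hd : Real.exp 1 ≤ d)
    (havg : (1 / (n : ℝ)) * ∑ i, ∑ j, p i j ≤ d)
    (hr : 1 ≤ r) (hn : 1 ≤ n)
    (x y : Fin n → ℝ) (hx : ∀ i, x i = -1 ∨ x i = 1) (hy : ∀ j, y j = -1 ∨ y j = 1) :
    ℙ {ω | 5 * r * n * Real.sqrt d < ∑ i, ∑ j, x i * (A ω i j - p i j) * y j}
      ≤ ENNReal.ofReal (Real.exp (-4 * r * n)) := by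
  have hd0 : (0:ℝ) < d := lt_of_lt_of_le (Real.exp_pos 1) hd
  have hd1 : (1:ℝ) ≤ d := le_trans (by nlinarith [Real.add_one_le_exp (1:ℝ)]) hd
  have hs0 : (0:ℝ) < Real.sqrt d := Real.sqrt_pos.2 hd0
  have hs1 : (1:ℝ) ≤ Real.sqrt d := by
    rw [show (1:ℝ) = Real.sqrt 1 by simp]; exact Real.sqrt_le_sqrt hd1
  set lam : ℝ := (Real.sqrt d)⁻¹ with hlam
  have hlam0 : 0 < lam := inv_pos.2 hs0
  have hlam1 : lam ≤ 1 := by rw [hlam]; exact inv_le_one_of_one_le₀ hs1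
  -- p entries in [0,1]
  have hp0 : ∀ i j, 0 ≤ p i j := fun i j =>
    (hmean i j) ▸ integral_nonneg (fun ω => by rcases h01 ω i j with h | h <;> simp [h])
  have hAint : ∀ i j, Integrable (fun ω => A ω i j) ℙ := by
    intro i j
    refine Integrable.mono' (integrable_const 1) (hmeas i j).aestronglyMeasurable
      (ae_of_all _ fun ω => ?_)
    rcases h01 ω i j with h | h <;> simp [h]
  have hp1 : ∀ i j, p i j ≤ 1 := by
    intro i j
    rw [← hmean i j]
    calc (∫ ω, A ω i j) ≤ ∫ _ω, (1:ℝ) := by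
          refine integral_mono (hAint i j) (integrable_const 1) (fun ω => ?_)
          rcases h01 ω i j with h | h <;> simp [h]
      _ = 1 := by simp
  -- the summands
  set Y : Fin n × Fin n → Ω → ℝ :=
    fun q ω => (x q.1 * y q.2) * (A ω q.1 q.2 - p q.1 q.2) with hY
  have hYmeas : ∀ q, Measurable (Y q) :=
    fun q => (((hmeas q.1 q.2).sub measurable_const).const_mul _)
  have hYindep : iIndepFun Y ℙ := by
    exact hindep.comp (fun q v => (x q.1 * y q.2) * (v - p q.1 q.2))
      (fun q => (measurable_id.sub measurable_const).const_mul _)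
  set S : Ω → ℝ := fun ω => ∑ q : Fin n × Fin n, Y q ω with hS
  have hSmeas : Measurable S := Finset.measurable_sum _ (fun q _ => hYmeas q)
  have hYbd : ∀ q ω, |Y q ω| ≤ 2 := by
    intro q ω
    rw [hY, abs_mul, abs_mul]
    have h1 : |x q.1| = 1 := by rcases hx q.1 with h | h <;> simp [h]
    have h2 : |y q.2| = 1 := by rcases hy q.2 with h | h <;> simp [h]
    rw [h1, h2, one_mul, one_mul]
    have := hp0 q.1 q.2; have := hp1 q.1 q.2
    rcases h01 ω q.1 q.2 with h | h
    · rw [h, abs_of_nonpos (by linarith)]; linarith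
    · rw [h, abs_of_nonneg (by linarith)]; linarith
  have hSbd : ∀ ω, |S ω| ≤ 2 * (n^2 : ℕ) := by
    intro ω
    calc |S ω| ≤ ∑ q : Fin n × Fin n, |Y q ω| := Finset.abs_sum_le_sum_abs _ _
      _ ≤ ∑ _q : Fin n × Fin n, (2:ℝ) := Finset.sum_le_sum (fun q _ => hYbd q ω)
      _ = 2 * (n^2 : ℕ) := by simp [Fintype.card_prod]; ring
  have hint : Integrable (fun ω => Real.exp (lam * S ω)) ℙ := by
    refine Integrable.mono' (integrable_const (Real.exp (2 * (n^2:ℕ))))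
      (((hSmeas.const_mul _).exp).aestronglyMeasurable) (ae_of_all _ fun ω => ?_)
    rw [Real.norm_eq_abs, abs_of_pos (Real.exp_pos _), Real.exp_le_exp]
    calc lam * S ω ≤ |lam * S ω| := le_abs_self _
      _ = lam * |S ω| := by rw [abs_mul, abs_of_pos hlam0]
      _ ≤ 1 * (2 * (n^2:ℕ)) := by
          apply mul_le_mul hlam1 (hSbd ω) (abs_nonneg _) zero_le_one
      _ = 2 * (n^2:ℕ) := one_mul _
  -- mgf bound
  have hsum_p : ∑ q : Fin n × Fin n, p q.1 q.2 ≤ d * n := by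
    have hn0 : (0:ℝ) < n := by exact_mod_cast hn
    rw [Fintype.sum_prod_type]
    rw [one_div, inv_mul_le_iff₀ hn0] at havg
    linarith [havg]
  have hmgf : mgf S ℙ lam ≤ Real.exp (n : ℝ) := by
    rw [hS, show (fun ω => ∑ q : Fin n × Fin n, Y q ω) = ∑ q : Fin n × Fin n, Y q by
      funext ω; simp]
    rw [hYindep.mgf_sum hYmeas]
    calc ∏ q : Fin n × Fin n, mgf (Y q) ℙ lam
        ≤ ∏ q : Fin n × Fin n, Real.exp (p q.1 q.2 * lam ^ 2) := by
          refine Finset.prod_le_prod (fun q _ => mgf_nonneg) (fun q _ => ?_)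
          exact aux_mgf (fun ω => A ω q.1 q.2) (hmeas q.1 q.2) (fun ω => h01 ω q.1 q.2)
            (p q.1 q.2) (x q.1 * y q.2) lam (hmean q.1 q.2)
            (by rcases hx q.1 with h | h <;> rcases hy q.2 with h' | h' <;> simp [h, h'])
            hlam0.le hlam1
      _ = Real.exp (∑ q : Fin n × Fin n, p q.1 q.2 * lam ^ 2) := (Real.exp_sum _ _).symm
      _ ≤ Real.exp (n : ℝ) := by
          apply Real.exp_le_exp.2
          rw [← Finset.sum_mul]
          have hlam2 : lam ^ 2 = d⁻¹ := by
            rw [hlam, ← Real.sqrt_inv, Real.sq_sqrt (by positivity)]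
          rw [hlam2]
          calc (∑ q : Fin n × Fin n, p q.1 q.2) * d⁻¹ ≤ (d * n) * d⁻¹ := by
                apply mul_le_mul_of_nonneg_right hsum_p (by positivity)
            _ = n := by field_simp
  -- Chernoff
  have hcher := measure_ge_le_exp_mul_mgf (μ := ℙ) (X := S) (5 * r * n * Real.sqrt d)
    hlam0.le hint
  have hsetE : {ω | 5 * r * n * Real.sqrt d < ∑ i, ∑ j, x i * (A ω i j - p i j) * y j}
      ⊆ {ω | 5 * r * n * Real.sqrt d ≤ S ω} := by
    intro ω hω
    simp only [Set.mem_setOf_eq] at hω ⊢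
    have heq : S ω = ∑ i, ∑ j, x i * (A ω i j - p i j) * y j := by
      simp only [hS, hY, Fintype.sum_prod_type]
      exact Finset.sum_congr rfl fun i _ => Finset.sum_congr rfl fun j _ => by ring
    linarith [heq, hω]
  calc ℙ {ω | 5 * r * n * Real.sqrt d < ∑ i, ∑ j, x i * (A ω i j - p i j) * y j}
      ≤ ℙ {ω | 5 * r * n * Real.sqrt d ≤ S ω} := measure_mono hsetE
    _ = ENNReal.ofReal (ℙ {ω | 5 * r * n * Real.sqrt d ≤ S ω}).toReal :=
        (ENNReal.ofReal_toReal (measure_ne_top _ _)).symm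
    _ ≤ ENNReal.ofReal (Real.exp (-lam * (5 * r * n * Real.sqrt d)) * mgf S ℙ lam) :=
        ENNReal.ofReal_le_ofReal hcher
    _ ≤ ENNReal.ofReal (Real.exp (-4 * r * n)) := by
        apply ENNReal.ofReal_le_ofReal
        have h1 : -lam * (5 * r * n * Real.sqrt d) = -(5 * r * n) := by
          rw [hlam]; field_simp
        rw [h1]
        calc Real.exp (-(5 * r * n)) * mgf S ℙ lam
            ≤ Real.exp (-(5 * r * n)) * Real.exp (n : ℝ) :=
              mul_le_mul_of_nonneg_left hmgf (Real.exp_pos _).le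
          _ = Real.exp (-(5 * r * n) + n) := (Real.exp_add _ _).symm
          _ ≤ Real.exp (-4 * r * n) := by
              apply Real.exp_le_exp.2
              have hn0 : (0:ℝ) ≤ n := Nat.cast_nonneg n
              nlinarith

/-- Concentration of adjacency matrices in the ℓ∞→ℓ1 norm (Lemma 4.1). -/
theorem stmt3 (n : ℕ) (Ω : Type*) [MeasureSpace Ω] [IsProbabilityMeasure (ℙ : Measure Ω)]
    (A : Ω → Matrix (Fin n) (Fin n) ℝ) (p : Matrix (Fin n) (Fin n) ℝ) (d r : ℝ)
    (hmeas : ∀ i j, Measurable fun ω => A ω i j)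
    (h01 : ∀ ω i j, A ω i j = 0 ∨ A ω i j = 1)
    (hindep : iIndepFun
      (fun (q : Fin n × Fin n) ω => A ω q.1 q.2) ℙ)
    (hmean : ∀ i j, (∫ ω, A ω i j) = p i j)
    (hd : Real.exp 1 ≤ d)
    (havg : (1 / (n : ℝ)) * ∑ i, ∑ j, p i j ≤ d)
    (hr : 1 ≤ r) :
    ENNReal.ofReal (1 - Real.exp (-2 * r * n)) ≤
      ℙ {ω | normInfOne (A ω - p) ≤ 5 * r * n * Real.sqrt d} := by
  classical
  rcases Nat.eq_zero_or_pos n with hn | hn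
  · subst hn
    norm_num
  have hnR : (1:ℝ) ≤ n := by exact_mod_cast hn
  haveI hne : Nonempty ({-1, 1} : Set ℝ) := ⟨⟨1, by simp⟩⟩
  let T : Type := ((Fin n → ({-1, 1} : Set ℝ)) × (Fin n → ({-1, 1} : Set ℝ)))
  set t := 5 * r * n * Real.sqrt d with ht
  set bad : T → Set Ω :=
    fun pr => {ω | t < ∑ i, ∑ j, (pr.1 i : ℝ) * (A ω i j - p i j) * (pr.2 j : ℝ)} with hbad
  have hSmeas : ∀ pr : T, Measurable
      (fun ω => ∑ i, ∑ j, (pr.1 i : ℝ) * (A ω i j - p i j) * (pr.2 j : ℝ)) := by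
    intro pr
    refine Finset.measurable_sum _ (fun i _ => Finset.measurable_sum _ (fun j _ => ?_))
    exact (((hmeas i j).sub measurable_const).const_mul _).mul_const _
  have hbadmeas : ∀ pr : T, MeasurableSet (bad pr) :=
    fun pr => measurableSet_lt measurable_const (hSmeas pr)
  have hbadle : ∀ pr : T, ℙ (bad pr) ≤ ENNReal.ofReal (Real.exp (-4 * r * n)) := by
    intro pr
    exact aux_tail n Ω A p d r hmeas h01 hindep hmean hd havg hr hn
      (fun i => (pr.1 i : ℝ)) (fun j => (pr.2 j : ℝ))
      (fun i => (Set.mem_insert_iff.mp (pr.1 i).2).imp id Set.mem_singleton_iff.mp)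
      (fun j => (Set.mem_insert_iff.mp (pr.2 j).2).imp id Set.mem_singleton_iff.mp)
  have hcard2 : Fintype.card ({-1, 1} : Set ℝ) = 2 := by
    rw [Set.card_insert _ (by norm_num : (-1:ℝ) ∉ ({1} : Set ℝ)), Set.card_singleton]
  have hcardT : (Fintype.card T : ℝ) ≤ 4 ^ n := by
    show ((Fintype.card (((Fin n → ({-1, 1} : Set ℝ)) × (Fin n → ({-1, 1} : Set ℝ))))) : ℝ) ≤ 4 ^ n
    rw [Fintype.card_prod, Fintype.card_fun, hcard2, Fintype.card_fin]
    push_cast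
    rw [show ((2:ℝ)^n * 2^n) = 4^n by rw [← mul_pow]; norm_num]
  have hcardbound : (Fintype.card T : ℝ) * Real.exp (-4 * r * n) ≤ Real.exp (-2 * r * n) := by
    have h4 : (4:ℝ) ≤ Real.exp 2 := by
      have h1 := Real.exp_one_gt_d9
      have : Real.exp 2 = Real.exp 1 * Real.exp 1 := by
        rw [← Real.exp_add]; norm_num
      nlinarith
    have h4n : (4:ℝ) ^ n ≤ Real.exp (2 * n) := by
      calc (4:ℝ) ^ n ≤ (Real.exp 2) ^ n := pow_le_pow_left₀ (by norm_num) h4 n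
        _ = Real.exp (2 * n) := by rw [← Real.exp_nat_mul]; ring_nf
    calc (Fintype.card T : ℝ) * Real.exp (-4 * r * n)
        ≤ Real.exp (2 * n) * Real.exp (-4 * r * n) := by
          apply mul_le_mul_of_nonneg_right (le_trans hcardT h4n) (Real.exp_pos _).le
      _ = Real.exp (2 * n + -4 * r * n) := (Real.exp_add _ _).symm
      _ ≤ Real.exp (-2 * r * n) := by
          apply Real.exp_le_exp.2
          nlinarith [Real.exp_pos 1]
  have hU : ℙ (⋃ pr : T, bad pr) ≤ ENNReal.ofReal (Real.exp (-2 * r * n)) := by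
    calc ℙ (⋃ pr : T, bad pr) ≤ ∑ pr : T, ℙ (bad pr) := measure_iUnion_fintype_le _ _
      _ ≤ ∑ _q : T, ENNReal.ofReal (Real.exp (-4 * r * n)) :=
          Finset.sum_le_sum (fun pr _ => hbadle pr)
      _ = (Fintype.card T : ENNReal) * ENNReal.ofReal (Real.exp (-4 * r * n)) := by
          rw [Finset.sum_const, Finset.card_univ, nsmul_eq_mul]
      _ = ENNReal.ofReal ((Fintype.card T : ℝ) * Real.exp (-4 * r * n)) := by
          rw [ENNReal.ofReal_mul (Nat.cast_nonneg _), ENNReal.ofReal_natCast]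
      _ ≤ ENNReal.ofReal (Real.exp (-2 * r * n)) := ENNReal.ofReal_le_ofReal hcardbound
  have hsub : (⋃ pr : T, bad pr)ᶜ ⊆ {ω | normInfOne (A ω - p) ≤ t} := by
    intro ω hω
    simp only [Set.mem_compl_iff, Set.mem_iUnion, not_exists] at hω
    simp only [Set.mem_setOf_eq]
    rw [normInfOne]
    apply ciSup_le
    intro pr
    have h := hω pr
    simp only [hbad, Set.mem_setOf_eq, not_lt] at h
    simpa [Matrix.sub_apply] using h
  calc ENNReal.ofReal (1 - Real.exp (-2 * r * n))
      = 1 - ENNReal.ofReal (Real.exp (-2 * r * n)) := by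
        rw [ENNReal.ofReal_sub _ (Real.exp_pos _).le, ENNReal.ofReal_one]
    _ ≤ 1 - ℙ (⋃ pr : T, bad pr) := tsub_le_tsub_left hU 1
    _ = ℙ ((⋃ pr : T, bad pr)ᶜ) :=
        (prob_compl_eq_one_sub (MeasurableSet.iUnion (fun pr => hbadmeas pr))).symm
    _ ≤ ℙ {ω | normInfOne (A ω - p) ≤ t} := measure_mono hsub
end

section
/- There is an absolute constant C > 0 such that the following holds. Let r ≥ 1, d ≥ e, and let A and Ā be n×n real matrices satisfying ‖A − Ā‖_{∞→1} ≤ 5·r·n·√d. Then there exists a subset J₁ ⊆ [n] with |J₁| ≥ n − 0.1·n such that ‖(A − Ā)_{J₁×J₁}‖ ≤ C·r·√d. -/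
open MeasureTheory ProbabilityTheory

namespace GT41

lemma one_mem' : (1:ℝ) ∈ ({-1, 1} : Set ℝ) := by norm_num
lemma neg_one_mem' : (-1:ℝ) ∈ ({-1, 1} : Set ℝ) := by norm_num

instance : Finite ↥({-1, 1} : Set ℝ) :=
  Set.Finite.to_subtype ((Set.finite_singleton 1).insert (-1))

lemma sgn_mem (c : ℝ) : (if 0 ≤ c then (1:ℝ) else -1) ∈ ({-1, 1} : Set ℝ) := by
  by_cases h : 0 ≤ c <;> simp [h]

/-- values in the cube are dominated by the sup over sign vectors -/
lemma cube_le_normInfOne {n : ℕ} (B : Matrix (Fin n) (Fin n) ℝ) (x y : Fin n → ℝ)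
    (hx : ∀ i, |x i| ≤ 1) (hy : ∀ j, |y j| ≤ 1) :
    ∑ i, ∑ j, x i * B i j * y j ≤ normInfOne B := by
  have hbdd : BddAbove (Set.range
      (fun p : (Fin n → ({-1, 1} : Set ℝ)) × (Fin n → ({-1, 1} : Set ℝ)) =>
        ∑ i, ∑ j, (p.1 i : ℝ) * B i j * (p.2 j : ℝ))) :=
    Set.Finite.bddAbove (Set.finite_range _)
  set s : Fin n → ℝ := fun i => if 0 ≤ ∑ j, B i j * y j then (1:ℝ) else -1 with hs
  have hstep1 : ∑ i, ∑ j, x i * B i j * y j ≤ ∑ i, ∑ j, s i * B i j * y j := by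
    apply Finset.sum_le_sum
    intro i _
    have e1 : ∀ z : ℝ, ∑ j, z * B i j * y j = z * ∑ j, B i j * y j := by
      intro z; rw [Finset.mul_sum]; apply Finset.sum_congr rfl; intros; ring
    rw [e1, e1]
    have habs : |∑ j, B i j * y j| = s i * ∑ j, B i j * y j := by
      by_cases h : 0 ≤ ∑ j, B i j * y j
      · simp [hs, h, abs_of_nonneg h]
      · simp [hs, h, abs_of_neg (lt_of_not_ge h)]
    calc x i * ∑ j, B i j * y j ≤ |x i * ∑ j, B i j * y j| := le_abs_self _
      _ ≤ |∑ j, B i j * y j| := by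
          rw [abs_mul]
          exact mul_le_of_le_one_left (abs_nonneg _) (hx i)
      _ = s i * ∑ j, B i j * y j := habs
  set t : Fin n → ℝ := fun j => if 0 ≤ ∑ i, s i * B i j then (1:ℝ) else -1 with ht
  have hstep2 : ∑ i, ∑ j, s i * B i j * y j ≤ ∑ i, ∑ j, s i * B i j * t j := by
    rw [Finset.sum_comm (γ := Fin n)]
    nth_rewrite 2 [Finset.sum_comm (γ := Fin n)]
    apply Finset.sum_le_sum
    intro j _
    have e1 : ∀ z : ℝ, ∑ i, s i * B i j * z = (∑ i, s i * B i j) * z := by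
      intro z; rw [Finset.sum_mul]
    rw [e1, e1]
    have habs : |∑ i, s i * B i j| = (∑ i, s i * B i j) * t j := by
      by_cases h : 0 ≤ ∑ i, s i * B i j
      · simp [ht, h, abs_of_nonneg h]
      · simp [ht, h, abs_of_neg (lt_of_not_ge h)]
    calc (∑ i, s i * B i j) * y j ≤ |(∑ i, s i * B i j) * y j| := le_abs_self _
      _ ≤ |∑ i, s i * B i j| := by
          rw [abs_mul]
          exact mul_le_of_le_one_right (abs_nonneg _) (hy j)
      _ = (∑ i, s i * B i j) * t j := habs
  refine le_trans (le_trans hstep1 hstep2) ?_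
  have := le_ciSup hbdd
    ((fun i => (⟨s i, by by_cases h : 0 ≤ ∑ j, B i j * y j <;> simp [hs, h]⟩ :
        ({-1, 1} : Set ℝ)),
      fun j => (⟨t j, by by_cases h : 0 ≤ ∑ i, s i * B i j <;> simp [ht, h]⟩ :
        ({-1, 1} : Set ℝ))) :
      (Fin n → ({-1, 1} : Set ℝ)) × (Fin n → ({-1, 1} : Set ℝ)))
  exact this

lemma normInfOne_nonneg {n : ℕ} (B : Matrix (Fin n) (Fin n) ℝ) : 0 ≤ normInfOne B := by
  have := cube_le_normInfOne B (fun _ => 0) (fun _ => 0)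
    (fun _ => by norm_num) (fun _ => by norm_num)
  simpa using this



variable {ι : Type*} [Fintype ι] [DecidableEq ι]

def sg (b : Bool) : ℝ := if b then 1 else -1

lemma sg_sq (b : Bool) : sg b ^ 2 = 1 := by cases b <;> simp [sg]

noncomputable def Ex (f : (ι → Bool) → ℝ) : ℝ :=
  (∑ σ : ι → Bool, f σ) / 2 ^ (Fintype.card ι)

lemma Ex_add (f g : (ι → Bool) → ℝ) :
    Ex (fun σ => f σ + g σ) = Ex f + Ex g := by
  simp [Ex, Finset.sum_add_distrib, add_div]

lemma Ex_mul_left (c : ℝ) (f : (ι → Bool) → ℝ) :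
    Ex (fun σ => c * f σ) = c * Ex f := by
  simp [Ex, ← Finset.mul_sum, mul_div_assoc]

lemma Ex_const (c : ℝ) : Ex (fun _ : ι → Bool => c) = c := by
  simp only [Ex, Finset.sum_const, Finset.card_univ, Fintype.card_fun, Fintype.card_bool,
    nsmul_eq_mul]
  rw [mul_comm, mul_div_assoc]
  simp

lemma Ex_le_Ex {f g : (ι → Bool) → ℝ} (h : ∀ σ, f σ ≤ g σ) : Ex f ≤ Ex g := by
  unfold Ex
  have h2 : (0:ℝ) < 2 ^ (Fintype.card ι) := by positivity
  exact (div_le_div_iff_of_pos_right h2).mpr (Finset.sum_le_sum fun σ _ => h σ)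


lemma Ex_sum {α : Type*} (s : Finset α) (f : α → (ι → Bool) → ℝ) :
    Ex (fun σ => ∑ a ∈ s, f a σ) = ∑ a ∈ s, Ex (f a) := by
  unfold Ex
  rw [Finset.sum_comm, Finset.sum_div]

lemma Ex_nonneg {f : (ι → Bool) → ℝ} (h : ∀ σ, 0 ≤ f σ) : 0 ≤ Ex f := by
  have := Ex_le_Ex (f := fun _ : ι → Bool => (0:ℝ)) (g := f) h
  simpa [Ex_const] using this

/-- flip involution : expectation of F * sign(d-th coord) vanishes when F doesn't depend
on the d-th coordinate. -/
lemma Ex_mul_sg (d : ι) (F : (ι → Bool) → ℝ)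
    (hF : ∀ σ b, F (Function.update σ d b) = F σ) :
    Ex (fun σ => F σ * sg (σ d)) = 0 := by
  have hsum : ∑ σ : ι → Bool, F σ * sg (σ d) = 0 := by
    apply Finset.sum_ninvolution (g := fun σ => Function.update σ d (!(σ d)))
    · intro σ
      have h1 : F (Function.update σ d (!(σ d))) = F σ := hF σ _
      have h2 : (Function.update σ d (!(σ d))) d = !(σ d) := Function.update_self d _ σ
      rw [h1, h2]
      cases h : σ d <;> simp [sg]
    · intro σ _ h
      have := congrFun h d
      rw [Function.update_self] at this
      exact (Bool.not_ne_self (σ d)) this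
    · intro σ; exact Finset.mem_univ _
    · intro σ
      funext e
      by_cases he : e = d
      · subst he; simp
      · simp [Function.update_of_ne he]
  simp [Ex, hsum]

def linS (s : Finset ι) (a : ι → ℝ) (σ : ι → Bool) : ℝ := ∑ d ∈ s, a d * sg (σ d)

lemma linS_update {s : Finset ι} {d : ι} (hd : d ∉ s) (a : ι → ℝ) (σ : ι → Bool) (b : Bool) :
    linS s a (Function.update σ d b) = linS s a σ := by
  unfold linS
  apply Finset.sum_congr rfl
  intro e he
  have : e ≠ d := fun h => hd (h ▸ he)
  rw [Function.update_of_ne this]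

lemma linS_insert {s : Finset ι} {d : ι} (hd : d ∉ s) (a : ι → ℝ) (σ : ι → Bool) :
    linS (insert d s) a σ = a d * sg (σ d) + linS s a σ := by
  unfold linS; rw [Finset.sum_insert hd]

/-- second moments / covariance -/
lemma Ex_linS_mul (s : Finset ι) (a b : ι → ℝ) :
    Ex (fun σ => linS s a σ * linS s b σ) = ∑ d ∈ s, a d * b d := by
  induction s using Finset.induction_on with
  | empty => simp [linS, Ex_const]
  | @insert d s hd ih =>
    have key : ∀ σ : ι → Bool,
        linS (insert d s) a σ * linS (insert d s) b σ =
        (a d * b d) * (sg (σ d))^2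
          + (a d * linS s b σ + b d * linS s a σ) * sg (σ d)
          + linS s a σ * linS s b σ := by
      intro σ; rw [linS_insert hd, linS_insert hd]; ring
    calc Ex (fun σ => linS (insert d s) a σ * linS (insert d s) b σ)
        = Ex (fun σ => (a d * b d)
            + ((a d * linS s b σ + b d * linS s a σ) * sg (σ d)
              + linS s a σ * linS s b σ)) := by
          apply congrArg
          funext σ
          rw [key σ, sg_sq]; ring
      _ = a d * b d + (0 + ∑ e ∈ s, a e * b e) := by
          rw [Ex_add, Ex_const, Ex_add, ih]
          congr 1
          congr 1
          apply Ex_mul_sg d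
          intro σ bb
          rw [linS_update hd, linS_update hd]
      _ = ∑ e ∈ insert d s, a e * b e := by rw [Finset.sum_insert hd]; ring

/-- fourth moment bound -/
lemma Ex_linS_pow4 (s : Finset ι) (a : ι → ℝ) :
    Ex (fun σ => (linS s a σ)^4) ≤ 3 * (∑ d ∈ s, (a d)^2)^2 := by
  induction s using Finset.induction_on with
  | empty => simp [linS, Ex_const]
  | @insert d s hd ih =>
    have hsq : Ex (fun σ => (linS s a σ)^2) = ∑ e ∈ s, (a e)^2 := by
      have := Ex_linS_mul s a a
      simpa [pow_two] using this
    have key : ∀ σ : ι → Bool,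
        (linS (insert d s) a σ)^4 =
          (linS s a σ)^4 + 6 * (a d)^2 * (linS s a σ)^2 + (a d)^4
          + (4 * (a d)^3 * linS s a σ + 4 * a d * (linS s a σ)^3) * sg (σ d) := by
      intro σ
      rw [linS_insert hd]
      have ht : (sg (σ d))^2 = 1 := sg_sq _
      set t := sg (σ d)
      set S := linS s a σ
      set c := a d
      linear_combination (c^4*(t^2+1) + 4*c^3*S*t + 6*c^2*S^2) * ht
    calc Ex (fun σ => (linS (insert d s) a σ)^4)
        = Ex (fun σ => ((linS s a σ)^4 + 6 * (a d)^2 * (linS s a σ)^2 + (a d)^4)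
            + (4 * (a d)^3 * linS s a σ + 4 * a d * (linS s a σ)^3) * sg (σ d)) := by
          apply congrArg; funext σ; rw [key σ]
      _ = Ex (fun σ => (linS s a σ)^4 + 6 * (a d)^2 * (linS s a σ)^2 + (a d)^4) + 0 := by
          rw [Ex_add]
          congr 1
          apply Ex_mul_sg d
          intro σ bb
          rw [linS_update hd]
      _ = Ex (fun σ => (linS s a σ)^4) + (6 * (a d)^2 * Ex (fun σ => (linS s a σ)^2)
            + (a d)^4) := by
          rw [add_zero, Ex_add, Ex_add, Ex_const, Ex_mul_left]
          ring
      _ ≤ 3 * (∑ e ∈ s, (a e)^2)^2 + (6 * (a d)^2 * (∑ e ∈ s, (a e)^2) + (a d)^4) := by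
          rw [hsq]
          have h2 : (0:ℝ) ≤ ∑ e ∈ s, (a e)^2 := Finset.sum_nonneg fun e _ => sq_nonneg _
          nlinarith [ih]
      _ ≤ 3 * (∑ e ∈ insert d s, (a e)^2)^2 := by
          rw [Finset.sum_insert hd]
          have h2 : (0:ℝ) ≤ ∑ e ∈ s, (a e)^2 := Finset.sum_nonneg fun e _ => sq_nonneg _
          nlinarith [sq_nonneg (a d)]


open Matrix

/-- clamp to [-R, R] -/
noncomputable def cl (R t : ℝ) : ℝ := max (min t R) (-R)

lemma abs_cl_le {R : ℝ} (hR : 0 ≤ R) (t : ℝ) : |cl R t| ≤ R := by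
  rw [abs_le]
  exact ⟨le_max_right _ _, max_le (min_le_right _ _) (by linarith)⟩

lemma abs_cl_le_abs {R : ℝ} (hR : 0 ≤ R) (t : ℝ) : |cl R t| ≤ |t| := by
  unfold cl
  rcases le_total 0 t with ht | ht
  · have hmin : (0:ℝ) ≤ min t R := le_min ht hR
    rw [max_eq_left (by linarith : -R ≤ min t R), abs_of_nonneg hmin, abs_of_nonneg ht]
    exact min_le_left _ _
  · rw [min_eq_left (by linarith : t ≤ R)]
    have h1 : t ≤ max t (-R) := le_max_left _ _
    have h2 : max t (-R) ≤ 0 := max_le ht (by linarith)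
    rw [abs_of_nonpos h2, abs_of_nonpos ht]
    linarith

lemma sub_cl_sq_le {R : ℝ} (hR : 0 < R) (t : ℝ) : (t - cl R t)^2 ≤ t^4 / R^2 := by
  rw [le_div_iff₀ (by positivity : (0:ℝ) < R^2)]
  unfold cl
  rcases le_total t R with h1 | h1
  · rcases le_total (-R) t with h2 | h2
    · rw [min_eq_left h1, max_eq_left h2]; simp; positivity
    · rw [min_eq_left h1, max_eq_right h2]
      have h4 : 0 ≤ R * (-t - R) := mul_nonneg hR.le (by linarith)
      have h5 : R * (-t - R) ≤ t^2 := by nlinarith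
      nlinarith [h4, h5]
  · rw [min_eq_right h1, max_eq_left (by linarith : -R ≤ R)]
    have h4 : 0 ≤ R * (t - R) := mul_nonneg hR.le (by linarith)
    have h5 : R * (t - R) ≤ t^2 := by nlinarith
    nlinarith [h4, h5]

/-- Gram matrices (with nonneg weights) are positive semidefinite. -/
lemma gram_posSemidef {ι κ : Type*} [Fintype ι] [Fintype κ]
    (v : ι → κ → ℝ) (w : κ → ℝ) (hw : ∀ l, 0 ≤ w l) :
    Matrix.PosSemidef (Matrix.of (fun a b => ∑ l, w l * (v a l * v b l))) := by
  set A : Matrix κ ι ℝ := Matrix.of (fun l a => Real.sqrt (w l) * v a l) with hA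
  have key : Matrix.of (fun a b => ∑ l, w l * (v a l * v b l)) = Matrix.conjTranspose A * A := by
    ext a b
    simp only [Matrix.mul_apply, Matrix.conjTranspose_apply, Matrix.of_apply, star_trivial, hA]
    apply Finset.sum_congr rfl
    intro l _
    have h := Real.mul_self_sqrt (hw l)
    calc w l * (v a l * v b l) = (Real.sqrt (w l) * Real.sqrt (w l)) * (v a l * v b l) := by
          rw [h]
      _ = Real.sqrt (w l) * v a l * (Real.sqrt (w l) * v b l) := by ring
  rw [key]
  exact Matrix.posSemidef_conjTranspose_mul_self _

lemma psd_symm {ι : Type*} [Fintype ι] {G : Matrix ι ι ℝ} (h : G.PosSemidef)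
    (p q : ι) : G p q = G q p := by
  have := congrFun (congrFun h.1 p) q
  simpa [Matrix.conjTranspose_apply] using this.symm

lemma psd_diag_nonneg {ι : Type*} [Fintype ι] [DecidableEq ι] {G : Matrix ι ι ℝ}
    (h : G.PosSemidef) (a : ι) : 0 ≤ G a a := by
  have := h.dotProduct_mulVec_nonneg (Pi.single a 1)
  simpa [Matrix.mulVec_single, single_dotProduct] using this

lemma psd_quad_pair {ι : Type*} [Fintype ι] [DecidableEq ι] {G : Matrix ι ι ℝ}
    (h : G.PosSemidef) (a b : ι) (s t : ℝ) :
    0 ≤ s * (G a a * s + G a b * t) + t * (G b a * s + G b b * t) := by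
  have := h.dotProduct_mulVec_nonneg (Pi.single a s + Pi.single b t)
  rw [Matrix.mulVec_add, star_trivial, dotProduct_add, add_dotProduct,
    add_dotProduct] at this
  simp only [Matrix.mulVec_single, single_dotProduct, Pi.add_apply] at this
  simp only [Pi.smul_apply, Matrix.col_apply, op_smul_eq_mul] at this
  linarith

/-- entries of a PSD matrix with diagonal ≤ 1 are in [-1,1] -/
lemma psd_entry_le {ι : Type*} [Fintype ι] [DecidableEq ι] {G : Matrix ι ι ℝ}
    (h : G.PosSemidef) (hd : ∀ a, G a a ≤ 1) (a b : ι) : |G a b| ≤ 1 := by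
  rcases eq_or_ne a b with rfl | hab
  · rw [abs_le]; exact ⟨by linarith [psd_diag_nonneg h a], hd a⟩
  · have h1 := psd_quad_pair h a b 1 1
    have h2 := psd_quad_pair h a b 1 (-1)
    have hs := psd_symm h a b
    have ha := hd a; have hb := hd b
    rw [abs_le]
    constructor <;> nlinarith [h1, h2]



section GTCore

variable {n : ℕ}

private noncomputable def FF (B : Matrix (Fin n) (Fin n) ℝ)
    (G : Matrix (Fin n ⊕ Fin n) (Fin n ⊕ Fin n) ℝ) : ℝ :=
  ∑ i, ∑ j, B i j * G (Sum.inl i) (Sum.inr j)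

private def GG (n : ℕ) : Set (Matrix (Fin n ⊕ Fin n) (Fin n ⊕ Fin n) ℝ) :=
  {G | G.PosSemidef ∧ ∀ a, G a a ≤ 1}

lemma FF_continuous (B : Matrix (Fin n) (Fin n) ℝ) : Continuous (FF B) := by
  apply continuous_finset_sum
  intro i _
  apply continuous_finset_sum
  intro j _
  exact continuous_const.mul (continuous_id.matrix_elem _ _)

lemma GG_closed (n : ℕ) : IsClosed (GG n) := by
  have hEq : GG n =
      ({G : Matrix (Fin n ⊕ Fin n) (Fin n ⊕ Fin n) ℝ | ∀ a b, G b a = G a b} ∩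
       {G | ∀ x : Fin n ⊕ Fin n → ℝ, 0 ≤ dotProduct (star x) (G.mulVec x)}) ∩
      {G | ∀ a, G a a ≤ 1} := by
    ext G
    constructor
    · rintro ⟨hP, hdiag⟩
      obtain ⟨hH, hquad⟩ := Matrix.posSemidef_iff_dotProduct_mulVec.1 hP
      refine ⟨⟨?_, hquad⟩, hdiag⟩
      intro a b
      have := congrFun (congrFun hH a) b
      simpa [Matrix.conjTranspose_apply] using this
    · rintro ⟨⟨hH, hquad⟩, hdiag⟩
      refine ⟨Matrix.posSemidef_iff_dotProduct_mulVec.2 ⟨?_, hquad⟩, hdiag⟩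
      ext a b
      rw [Matrix.conjTranspose_apply, star_trivial]
      exact hH a b
  rw [hEq]
  apply IsClosed.inter
  · apply IsClosed.inter
    · have : {G : Matrix (Fin n ⊕ Fin n) (Fin n ⊕ Fin n) ℝ | ∀ a b, G b a = G a b} =
          ⋂ a, ⋂ b, {G : Matrix (Fin n ⊕ Fin n) (Fin n ⊕ Fin n) ℝ | G b a = G a b} := by
        ext G; simp [Set.mem_iInter]
      rw [this]
      exact isClosed_iInter fun a => isClosed_iInter fun b =>
        isClosed_eq ((continuous_id.matrix_elem _ _)) ((continuous_id.matrix_elem _ _))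
    · have : {G : Matrix (Fin n ⊕ Fin n) (Fin n ⊕ Fin n) ℝ |
          ∀ x : Fin n ⊕ Fin n → ℝ, 0 ≤ dotProduct (star x) (G.mulVec x)} =
          ⋂ x : Fin n ⊕ Fin n → ℝ,
            {G : Matrix (Fin n ⊕ Fin n) (Fin n ⊕ Fin n) ℝ |
              0 ≤ dotProduct (star x) (G.mulVec x)} := by
        ext G; simp [Set.mem_iInter]
      rw [this]
      refine isClosed_iInter fun x => isClosed_le continuous_const ?_
      have : (fun G : Matrix (Fin n ⊕ Fin n) (Fin n ⊕ Fin n) ℝ =>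
          dotProduct (star x) (G.mulVec x)) =
          fun G => ∑ a, (star x) a * ∑ b, G a b * x b := rfl
      rw [this]
      apply continuous_finset_sum
      intro a _
      refine continuous_const.mul ?_
      apply continuous_finset_sum
      intro b _
      exact (continuous_id.matrix_elem _ _).mul continuous_const
  · have : {G : Matrix (Fin n ⊕ Fin n) (Fin n ⊕ Fin n) ℝ | ∀ a, G a a ≤ 1} =
        ⋂ a, {G : Matrix (Fin n ⊕ Fin n) (Fin n ⊕ Fin n) ℝ | G a a ≤ 1} := by
      ext G; simp [Set.mem_iInter]
    rw [this]
    exact isClosed_iInter fun a =>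
      isClosed_le ((continuous_id.matrix_elem _ _)) continuous_const

lemma GG_compact (n : ℕ) : IsCompact (GG n) := by
  have hbox : IsCompact {G : Matrix (Fin n ⊕ Fin n) (Fin n ⊕ Fin n) ℝ |
      ∀ a b, G a b ∈ Set.Icc (-1:ℝ) 1} := by
    have h1 : {G : Matrix (Fin n ⊕ Fin n) (Fin n ⊕ Fin n) ℝ |
        ∀ a b, G a b ∈ Set.Icc (-1:ℝ) 1} =
        Set.pi Set.univ (fun _ : Fin n ⊕ Fin n =>
          Set.pi Set.univ (fun _ : Fin n ⊕ Fin n => Set.Icc (-1:ℝ) 1)) := by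
      ext G
      constructor
      · intro h a _ b _
        exact h a b
      · intro h a b
        exact h a (Set.mem_univ a) b (Set.mem_univ b)
    rw [h1]
    exact isCompact_univ_pi fun _ => isCompact_univ_pi fun _ => isCompact_Icc
  apply hbox.of_isClosed_subset (GG_closed n)
  intro G hG a b
  rw [Set.mem_Icc, ← abs_le]
  exact psd_entry_le hG.1 hG.2 a b

theorem grothendieck_inner (B : Matrix (Fin n) (Fin n) ℝ)
    {κ : Type*} [Fintype κ] (p q : Fin n → κ → ℝ)
    (hp : ∀ i, ∑ l, (p i l)^2 ≤ 1) (hq : ∀ j, ∑ l, (q j l)^2 ≤ 1) :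
    ∑ i, ∑ j, B i j * (∑ l, p i l * q j l) ≤ 122 * normInfOne B := by
  classical
  obtain ⟨G₀, hG₀, hmax⟩ := (GG_compact n).exists_isMaxOn
    ⟨0, Matrix.PosSemidef.zero, by simp⟩ (FF_continuous B).continuousOn
  set V := FF B G₀ with hVdef
  have hV0 : 0 ≤ V := by
    have h0 : (0 : Matrix (Fin n ⊕ Fin n) (Fin n ⊕ Fin n) ℝ) ∈ GG n :=
      ⟨Matrix.PosSemidef.zero, by simp⟩
    have := hmax h0
    rw [hVdef]
    simpa [FF] using this
  -- realize G₀ as a Gram matrix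
  have hPSD : Matrix.PosSemidef G₀ := hG₀.1
  have hdiag : ∀ a, G₀ a a ≤ 1 := hG₀.2
  obtain ⟨Bq, hBq⟩ : ∃ Bq : Matrix (Fin n ⊕ Fin n) (Fin n ⊕ Fin n) ℝ, G₀ = star Bq * Bq := by
    open scoped MatrixOrder Matrix.Norms.L2Operator in
    exact CStarAlgebra.nonneg_iff_eq_star_mul_self.mp hPSD.nonneg
  set u : (Fin n ⊕ Fin n) → (Fin n ⊕ Fin n) → ℝ := fun a c => Bq c a with hu
  have hGram : ∀ a b, ∑ c, u a c * u b c = G₀ a b := by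
    intro a b
    rw [hBq, Matrix.star_eq_conjTranspose, Matrix.mul_apply]
    simp [hu]
  -- random variables
  set Z : (Fin n ⊕ Fin n) → ((Fin n ⊕ Fin n) → Bool) → ℝ :=
    fun a => linS Finset.univ (u a) with hZ
  have hZZ : ∀ a b, Ex (fun σ => Z a σ * Z b σ) = G₀ a b := by
    intro a b
    rw [hZ]
    exact (Ex_linS_mul Finset.univ (u a) (u b)).trans (hGram a b)
  have hdiag0 : ∀ a, 0 ≤ G₀ a a := fun a => psd_diag_nonneg hPSD a
  have hZ4 : ∀ a, Ex (fun σ => (Z a σ)^4) ≤ 3 := by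
    intro a
    refine le_trans (Ex_linS_pow4 Finset.univ (u a)) ?_
    have h1 : ∑ c, (u a c)^2 = G₀ a a := by
      rw [← hGram a a]
      apply Finset.sum_congr rfl
      intro c _
      ring
    rw [h1]
    nlinarith [hdiag0 a, hdiag a]
  set R : ℝ := Real.sqrt 27 with hRdef
  have hRpos : 0 < R := Real.sqrt_pos.2 (by norm_num)
  have hR2 : R^2 = 27 := Real.sq_sqrt (by norm_num)
  set Zb : (Fin n ⊕ Fin n) → ((Fin n ⊕ Fin n) → Bool) → ℝ :=
    fun a σ => cl R (Z a σ) with hZb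
  set Zh : (Fin n ⊕ Fin n) → ((Fin n ⊕ Fin n) → Bool) → ℝ :=
    fun a σ => Z a σ - Zb a σ with hZh
  have hZb_sq : ∀ a, Ex (fun σ => (Zb a σ)^2) ≤ 1 := by
    intro a
    have hle : ∀ σ, (Zb a σ)^2 ≤ (Z a σ)^2 := by
      intro σ
      have := abs_cl_le_abs hRpos.le (Z a σ)
      calc (Zb a σ)^2 = |Zb a σ|^2 := (sq_abs _).symm
        _ ≤ |Z a σ|^2 := by
            apply pow_le_pow_left₀ (abs_nonneg _) this
        _ = (Z a σ)^2 := sq_abs _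
    refine le_trans (Ex_le_Ex hle) ?_
    have : Ex (fun σ => (Z a σ)^2) = G₀ a a := by
      rw [← hZZ a a]
      apply congrArg; funext σ; ring
    rw [this]; exact hdiag a
  have hZh_sq : ∀ a, Ex (fun σ => (Zh a σ)^2) ≤ 1/9 := by
    intro a
    have hle : ∀ σ, (Zh a σ)^2 ≤ (1/27) * (Z a σ)^4 := by
      intro σ
      have := sub_cl_sq_le hRpos (Z a σ)
      rw [hR2] at this
      calc (Zh a σ)^2 = (Z a σ - cl R (Z a σ))^2 := rfl
        _ ≤ (Z a σ)^4 / 27 := this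
        _ = (1/27) * (Z a σ)^4 := by ring
    refine le_trans (Ex_le_Ex hle) ?_
    rw [Ex_mul_left]
    have := hZ4 a
    linarith
  -- key bound for error terms
  have key : ∀ (W1 W2 : (Fin n ⊕ Fin n) → ((Fin n ⊕ Fin n) → Bool) → ℝ),
      (∀ a, Ex (fun σ => (W1 a σ)^2) ≤ 1) → (∀ a, Ex (fun σ => (W2 a σ)^2) ≤ 1) →
      ∑ i, ∑ j, B i j * Ex (fun σ => W1 (Sum.inl i) σ * W2 (Sum.inr j) σ) ≤ V := by
    intro W1 W2 h1 h2
    set T : (Fin n ⊕ Fin n) → ((Fin n ⊕ Fin n) → Bool) → ℝ :=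
      fun a => Sum.rec (fun i => W1 (Sum.inl i)) (fun j => W2 (Sum.inr j)) a with hT
    set G' : Matrix (Fin n ⊕ Fin n) (Fin n ⊕ Fin n) ℝ :=
      Matrix.of (fun a b => Ex (fun σ => T a σ * T b σ)) with hG'
    have hpsd' : G'.PosSemidef := by
      have hEq : G' = Matrix.of (fun a b => ∑ σ : (Fin n ⊕ Fin n) → Bool,
          ((2:ℝ) ^ (Fintype.card (Fin n ⊕ Fin n)))⁻¹ * (T a σ * T b σ)) := by
        ext a b
        simp only [hG', Matrix.of_apply, Ex, div_eq_mul_inv, Finset.sum_mul]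
        apply Finset.sum_congr rfl
        intro σ _
        ring
      rw [hEq]
      exact gram_posSemidef _ _ (fun _ => by positivity)
    have hdiag' : ∀ a, G' a a ≤ 1 := by
      intro a
      cases a with
      | inl i =>
        have := h1 (Sum.inl i)
        simpa [hG', pow_two] using this
      | inr j =>
        have := h2 (Sum.inr j)
        simpa [hG', pow_two] using this
    have hmem : G' ∈ GG n := ⟨hpsd', hdiag'⟩
    have := hmax hmem
    rw [hVdef]
    simpa [FF, hG'] using this
  -- decomposition of V
  have hW : 0 ≤ normInfOne B := normInfOne_nonneg B
  have hterm1 : ∑ i, ∑ j, B i j *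
      Ex (fun σ => Zb (Sum.inl i) σ * Zb (Sum.inr j) σ) ≤ 27 * normInfOne B := by
    have hswap : ∑ i, ∑ j, B i j * Ex (fun σ => Zb (Sum.inl i) σ * Zb (Sum.inr j) σ)
        = Ex (fun σ => ∑ i, ∑ j, B i j * (Zb (Sum.inl i) σ * Zb (Sum.inr j) σ)) := by
      rw [Ex_sum]
      apply Finset.sum_congr rfl
      intro i _
      rw [Ex_sum]
      apply Finset.sum_congr rfl
      intro j _
      rw [← Ex_mul_left]
    rw [hswap]
    have hpt : ∀ σ, ∑ i, ∑ j, B i j * (Zb (Sum.inl i) σ * Zb (Sum.inr j) σ)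
        ≤ 27 * normInfOne B := by
      intro σ
      have hcube := cube_le_normInfOne B
        (fun i => Zb (Sum.inl i) σ / R) (fun j => Zb (Sum.inr j) σ / R)
        (fun i => by
          rw [abs_div, abs_of_pos hRpos, div_le_one hRpos]
          exact abs_cl_le hRpos.le _)
        (fun j => by
          rw [abs_div, abs_of_pos hRpos, div_le_one hRpos]
          exact abs_cl_le hRpos.le _)
      have hfac : ∑ i, ∑ j, B i j * (Zb (Sum.inl i) σ * Zb (Sum.inr j) σ)
          = 27 * ∑ i, ∑ j, (Zb (Sum.inl i) σ / R) * B i j * (Zb (Sum.inr j) σ / R) := by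
        rw [Finset.mul_sum]
        apply Finset.sum_congr rfl
        intro i _
        rw [Finset.mul_sum]
        apply Finset.sum_congr rfl
        intro j _
        have hq' : Zb (Sum.inl i) σ / R * B i j * (Zb (Sum.inr j) σ / R)
            = (B i j * (Zb (Sum.inl i) σ * Zb (Sum.inr j) σ)) / R^2 := by
          field_simp
        rw [hq', hR2]
        ring
      rw [hfac]
      nlinarith [hcube, hW]
    calc Ex (fun σ => ∑ i, ∑ j, B i j * (Zb (Sum.inl i) σ * Zb (Sum.inr j) σ))
        ≤ Ex (fun _ => 27 * normInfOne B) := Ex_le_Ex hpt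
      _ = 27 * normInfOne B := Ex_const _
  have hterm2 : ∑ i, ∑ j, B i j *
      Ex (fun σ => Zb (Sum.inl i) σ * Zh (Sum.inr j) σ) ≤ V / 3 := by
    have h3 : ∀ a, Ex (fun σ => (3 * Zh a σ)^2) ≤ 1 := by
      intro a
      have : (fun σ => (3 * Zh a σ)^2) = fun σ => 9 * (Zh a σ)^2 := by
        funext σ; ring
      rw [this, Ex_mul_left]
      have := hZh_sq a
      linarith
    have := key Zb (fun a σ => 3 * Zh a σ) hZb_sq h3
    have hre : ∑ i, ∑ j, B i j * Ex (fun σ => Zb (Sum.inl i) σ * (3 * Zh (Sum.inr j) σ))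
        = 3 * ∑ i, ∑ j, B i j * Ex (fun σ => Zb (Sum.inl i) σ * Zh (Sum.inr j) σ) := by
      rw [Finset.mul_sum]
      apply Finset.sum_congr rfl
      intro i _
      rw [Finset.mul_sum]
      apply Finset.sum_congr rfl
      intro j _
      have : (fun σ => Zb (Sum.inl i) σ * (3 * Zh (Sum.inr j) σ))
          = fun σ => 3 * (Zb (Sum.inl i) σ * Zh (Sum.inr j) σ) := by
        funext σ; ring
      rw [this, Ex_mul_left]
      ring
    rw [hre] at this
    linarith
  have hterm3 : ∑ i, ∑ j, B i j *
      Ex (fun σ => Zh (Sum.inl i) σ * Zb (Sum.inr j) σ) ≤ V / 3 := by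
    have h3 : ∀ a, Ex (fun σ => (3 * Zh a σ)^2) ≤ 1 := by
      intro a
      have : (fun σ => (3 * Zh a σ)^2) = fun σ => 9 * (Zh a σ)^2 := by
        funext σ; ring
      rw [this, Ex_mul_left]
      have := hZh_sq a
      linarith
    have := key (fun a σ => 3 * Zh a σ) Zb h3 hZb_sq
    have hre : ∑ i, ∑ j, B i j * Ex (fun σ => (3 * Zh (Sum.inl i) σ) * Zb (Sum.inr j) σ)
        = 3 * ∑ i, ∑ j, B i j * Ex (fun σ => Zh (Sum.inl i) σ * Zb (Sum.inr j) σ) := by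
      rw [Finset.mul_sum]
      apply Finset.sum_congr rfl
      intro i _
      rw [Finset.mul_sum]
      apply Finset.sum_congr rfl
      intro j _
      have : (fun σ => (3 * Zh (Sum.inl i) σ) * Zb (Sum.inr j) σ)
          = fun σ => 3 * (Zh (Sum.inl i) σ * Zb (Sum.inr j) σ) := by
        funext σ; ring
      rw [this, Ex_mul_left]
      ring
    rw [hre] at this
    linarith
  have hterm4 : ∑ i, ∑ j, B i j *
      Ex (fun σ => Zh (Sum.inl i) σ * Zh (Sum.inr j) σ) ≤ V / 9 := by
    have h3 : ∀ a, Ex (fun σ => (3 * Zh a σ)^2) ≤ 1 := by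
      intro a
      have : (fun σ => (3 * Zh a σ)^2) = fun σ => 9 * (Zh a σ)^2 := by
        funext σ; ring
      rw [this, Ex_mul_left]
      have := hZh_sq a
      linarith
    have := key (fun a σ => 3 * Zh a σ) (fun a σ => 3 * Zh a σ) h3 h3
    have hre : ∑ i, ∑ j, B i j * Ex (fun σ => (3 * Zh (Sum.inl i) σ) * (3 * Zh (Sum.inr j) σ))
        = 9 * ∑ i, ∑ j, B i j * Ex (fun σ => Zh (Sum.inl i) σ * Zh (Sum.inr j) σ) := by
      rw [Finset.mul_sum]
      apply Finset.sum_congr rfl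
      intro i _
      rw [Finset.mul_sum]
      apply Finset.sum_congr rfl
      intro j _
      have : (fun σ => (3 * Zh (Sum.inl i) σ) * (3 * Zh (Sum.inr j) σ))
          = fun σ => 9 * (Zh (Sum.inl i) σ * Zh (Sum.inr j) σ) := by
        funext σ; ring
      rw [this, Ex_mul_left]
      ring
    rw [hre] at this
    linarith
  have hVsplit : V = (∑ i, ∑ j, B i j * Ex (fun σ => Zb (Sum.inl i) σ * Zb (Sum.inr j) σ))
      + (∑ i, ∑ j, B i j * Ex (fun σ => Zb (Sum.inl i) σ * Zh (Sum.inr j) σ))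
      + (∑ i, ∑ j, B i j * Ex (fun σ => Zh (Sum.inl i) σ * Zb (Sum.inr j) σ))
      + (∑ i, ∑ j, B i j * Ex (fun σ => Zh (Sum.inl i) σ * Zh (Sum.inr j) σ)) := by
    have hzz : ∀ a b, G₀ a b =
        Ex (fun σ => Zb a σ * Zb b σ) + Ex (fun σ => Zb a σ * Zh b σ)
        + Ex (fun σ => Zh a σ * Zb b σ) + Ex (fun σ => Zh a σ * Zh b σ) := by
      intro a b
      rw [← hZZ a b, ← Ex_add, ← Ex_add, ← Ex_add]
      apply congrArg; funext σ
      have : Z a σ = Zb a σ + Zh a σ := by rw [hZh]; ring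
      rw [this]
      have hb : Z b σ = Zb b σ + Zh b σ := by rw [hZh]; ring
      nth_rewrite 1 [hb]
      ring
    rw [hVdef]
    unfold FF
    rw [← Finset.sum_add_distrib, ← Finset.sum_add_distrib, ← Finset.sum_add_distrib]
    apply Finset.sum_congr rfl
    intro i _
    rw [← Finset.sum_add_distrib, ← Finset.sum_add_distrib, ← Finset.sum_add_distrib]
    apply Finset.sum_congr rfl
    intro j _
    rw [hzz (Sum.inl i) (Sum.inr j)]
    ring
  have hVbound : V ≤ 122 * normInfOne B := by
    have : V ≤ 27 * normInfOne B + V/3 + V/3 + V/9 := by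
      rw [hVsplit]
      linarith [hterm1, hterm2, hterm3, hterm4]
    nlinarith [hW, this]
  -- conclude with the Gram matrix of (p, q)
  set v : (Fin n ⊕ Fin n) → κ → ℝ := Sum.elim p q with hv
  set G'' : Matrix (Fin n ⊕ Fin n) (Fin n ⊕ Fin n) ℝ :=
    Matrix.of (fun a b => ∑ l, v a l * v b l) with hG''
  have hpsd'' : G''.PosSemidef := by
    have hEq : G'' = Matrix.of (fun a b => ∑ l, (1:ℝ) * (v a l * v b l)) := by
      ext a b; simp [hG'']
    rw [hEq]
    exact gram_posSemidef _ _ (fun _ => zero_le_one)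
  have hdiag'' : ∀ a, G'' a a ≤ 1 := by
    intro a
    cases a with
    | inl i =>
      have := hp i
      simpa [hG'', hv, pow_two] using this
    | inr j =>
      have := hq j
      simpa [hG'', hv, pow_two] using this
  have hFG : FF B G'' = ∑ i, ∑ j, B i j * (∑ l, p i l * q j l) := by
    unfold FF
    apply Finset.sum_congr rfl
    intro i _
    apply Finset.sum_congr rfl
    intro j _
    simp [hG'', hv]
  calc ∑ i, ∑ j, B i j * (∑ l, p i l * q j l) = FF B G'' := hFG.symm
    _ ≤ FF B G₀ := hmax (⟨hpsd'', hdiag''⟩ : G'' ∈ GG n)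
    _ = V := hVdef.symm
    _ ≤ 122 * normInfOne B := hVbound

end GTCore


section Greedy

variable {n : ℕ}

noncomputable def cw (x y : ℕ → Fin n → ℝ) (t : ℕ) (j : Fin n) : ℝ :=
  ∑ s ∈ Finset.range t, ((x s j)^2 + (y s j)^2)

def Adm (B : Matrix (Fin n) (Fin n) ℝ) (M : ℝ) (t : ℕ)
    (x y : ℕ → Fin n → ℝ) : Prop :=
  ∀ s < t, (∑ i, (x s i)^2 ≤ 1) ∧ (∑ i, (y s i)^2 ≤ 1) ∧
    (∀ j, (1:ℝ) ≤ cw x y s j → x s j = 0 ∧ y s j = 0) ∧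
    M < ∑ i, ∑ j, x s i * B i j * y s j

lemma cw_nonneg (x y : ℕ → Fin n → ℝ) (t : ℕ) (j : Fin n) : 0 ≤ cw x y t j :=
  Finset.sum_nonneg fun s _ => by positivity

lemma cw_lt_three {B : Matrix (Fin n) (Fin n) ℝ} {M : ℝ} {t : ℕ}
    {x y : ℕ → Fin n → ℝ} (h : Adm B M t x y) :
    ∀ s ≤ t, ∀ j, cw x y s j < 3 := by
  intro s
  induction s with
  | zero =>
    intro _ j
    norm_num [cw]
  | succ s ih =>
    intro hst j
    have hs_le : s ≤ t := le_trans (Nat.le_succ s) hst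
    have hs_lt : s < t := lt_of_lt_of_le (Nat.lt_succ_self s) hst
    have hstep : cw x y (s+1) j = cw x y s j + ((x s j)^2 + (y s j)^2) := by
      unfold cw
      rw [Finset.sum_range_succ]
    rcases lt_or_ge (cw x y s j) 1 with hlt | hge
    · have hx1 : (x s j)^2 ≤ 1 := by
        have := (h s hs_lt).1
        have hsingle : (x s j)^2 ≤ ∑ i, (x s i)^2 :=
          Finset.single_le_sum (fun i _ => sq_nonneg (x s i)) (Finset.mem_univ j)
        linarith
      have hy1 : (y s j)^2 ≤ 1 := by
        have := (h s hs_lt).2.1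
        have hsingle : (y s j)^2 ≤ ∑ i, (y s i)^2 :=
          Finset.single_le_sum (fun i _ => sq_nonneg (y s i)) (Finset.mem_univ j)
        linarith
      rw [hstep]; linarith
    · have hzero := (h s hs_lt).2.2.1 j hge
      rw [hstep, hzero.1, hzero.2]
      have := ih hs_le j
      norm_num
      linarith

lemma adm_len {B : Matrix (Fin n) (Fin n) ℝ} {M : ℝ} {t : ℕ}
    {x y : ℕ → Fin n → ℝ} (h : Adm B M t x y) :
    (t:ℝ) * M ≤ 366 * normInfOne B := by
  -- lower bound on the sum
  have hlb : (t:ℝ) * M ≤ ∑ s ∈ Finset.range t, (∑ i, ∑ j, x s i * B i j * y s j) := by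
    have := Finset.card_nsmul_le_sum (Finset.range t)
      (fun s => ∑ i, ∑ j, x s i * B i j * y s j) M
      (fun s hs => (h s (Finset.mem_range.1 hs)).2.2.2.le)
    rw [Finset.card_range] at this
    simpa [nsmul_eq_mul, mul_comm] using this
  refine le_trans hlb ?_
  -- upper bound via Grothendieck
  set r3 : ℝ := Real.sqrt 3 with hr3def
  have hr3pos : 0 < r3 := Real.sqrt_pos.2 (by norm_num)
  have hr3sq : r3 * r3 = 3 := Real.mul_self_sqrt (by norm_num)
  have hp : ∀ i, ∑ s : Fin t, (x s i / r3)^2 ≤ 1 := by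
    intro i
    have h1 : ∑ s : Fin t, (x (s:ℕ) i)^2 ≤ cw x y t i := by
      rw [Fin.sum_univ_eq_sum_range (fun s => (x s i)^2) t]
      unfold cw
      apply Finset.sum_le_sum
      intro s _
      nlinarith [sq_nonneg (y s i)]
    have h2 := cw_lt_three h t le_rfl i
    have h3 : ∑ s : Fin t, (x (s:ℕ) i / r3)^2 = (∑ s : Fin t, (x (s:ℕ) i)^2) / 3 := by
      rw [Finset.sum_div]
      apply Finset.sum_congr rfl
      intro s _
      rw [div_pow]
      congr 1
      nlinarith [hr3sq]
    rw [h3]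
    linarith
  have hq : ∀ j, ∑ s : Fin t, (y s j / r3)^2 ≤ 1 := by
    intro j
    have h1 : ∑ s : Fin t, (y (s:ℕ) j)^2 ≤ cw x y t j := by
      rw [Fin.sum_univ_eq_sum_range (fun s => (y s j)^2) t]
      unfold cw
      apply Finset.sum_le_sum
      intro s _
      nlinarith [sq_nonneg (x s j)]
    have h2 := cw_lt_three h t le_rfl j
    have h3 : ∑ s : Fin t, (y (s:ℕ) j / r3)^2 = (∑ s : Fin t, (y (s:ℕ) j)^2) / 3 := by
      rw [Finset.sum_div]
      apply Finset.sum_congr rfl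
      intro s _
      rw [div_pow]
      congr 1
      nlinarith [hr3sq]
    rw [h3]
    linarith
  have hGT := grothendieck_inner B (fun i => fun s : Fin t => x s i / r3)
    (fun j => fun s : Fin t => y s j / r3) hp hq
  have hre : ∑ s ∈ Finset.range t, (∑ i, ∑ j, x s i * B i j * y s j)
      = 3 * ∑ i, ∑ j, B i j * (∑ s : Fin t, (x (s:ℕ) i / r3) * (y (s:ℕ) j / r3)) := by
    have e1 : ∀ i j, (3:ℝ) * (B i j * (∑ s : Fin t, (x (s:ℕ) i / r3) * (y (s:ℕ) j / r3)))
        = ∑ s : Fin t, x (s:ℕ) i * B i j * y (s:ℕ) j := by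
      intro i j
      rw [Finset.mul_sum, Finset.mul_sum]
      apply Finset.sum_congr rfl
      intro s _
      have : x (s:ℕ) i / r3 * (y (s:ℕ) j / r3) = (x (s:ℕ) i * y (s:ℕ) j) / 3 := by
        rw [div_mul_div_comm, hr3sq]
      rw [this]
      field_simp
    calc ∑ s ∈ Finset.range t, (∑ i, ∑ j, x s i * B i j * y s j)
        = ∑ s : Fin t, (∑ i, ∑ j, x (s:ℕ) i * B i j * y (s:ℕ) j) :=
          (Fin.sum_univ_eq_sum_range _ t).symm
      _ = ∑ i, ∑ s : Fin t, (∑ j, x (s:ℕ) i * B i j * y (s:ℕ) j) := Finset.sum_comm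
      _ = ∑ i, ∑ j, ∑ s : Fin t, x (s:ℕ) i * B i j * y (s:ℕ) j := by
          apply Finset.sum_congr rfl
          intro i _
          exact Finset.sum_comm
      _ = ∑ i, ∑ j, 3 * (B i j * (∑ s : Fin t, (x (s:ℕ) i / r3) * (y (s:ℕ) j / r3))) := by
          apply Finset.sum_congr rfl
          intro i _
          apply Finset.sum_congr rfl
          intro j _
          rw [e1]
      _ = 3 * ∑ i, ∑ j, B i j * (∑ s : Fin t, (x (s:ℕ) i / r3) * (y (s:ℕ) j / r3)) := by
          rw [Finset.mul_sum]
          apply Finset.sum_congr rfl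
          intro i _
          rw [Finset.mul_sum]
  rw [hre]
  linarith [hGT]

end Greedy


section OpNormPlumbing

variable {n : ℕ}

lemma sum_sq_eq_zero_forall {u : Fin n → ℝ} (h : ∑ i, (u i)^2 = 0) : ∀ i, u i = 0 := by
  intro i
  have := (Finset.sum_eq_zero_iff_of_nonneg (fun i _ => sq_nonneg (u i))).1 h i
    (Finset.mem_univ i)
  exact pow_eq_zero_iff (n := 2) (by norm_num) |>.1 this

lemma bilinear_homogeneous (B : Matrix (Fin n) (Fin n) ℝ) (J : Finset (Fin n)) (M : ℝ)
    (hM : 0 ≤ M)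
    (h : ∀ u v : Fin n → ℝ, (∀ j, j ∉ J → u j = 0) → (∀ j, j ∉ J → v j = 0) →
      (∑ i, (u i)^2 ≤ 1) → (∑ i, (v i)^2 ≤ 1) →
      ∑ i, ∑ j, u i * B i j * v j ≤ M)
    (u v : Fin n → ℝ) (hu : ∀ j, j ∉ J → u j = 0) (hv : ∀ j, j ∉ J → v j = 0) :
    ∑ i, ∑ j, u i * B i j * v j ≤
      M * Real.sqrt (∑ i, (u i)^2) * Real.sqrt (∑ i, (v i)^2) := by
  rcases eq_or_ne (∑ i, (u i)^2) 0 with hu0 | hu0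
  · have : ∀ i, u i = 0 := sum_sq_eq_zero_forall hu0
    have hz : ∑ i, ∑ j, u i * B i j * v j = 0 := by
      apply Finset.sum_eq_zero
      intro i _
      apply Finset.sum_eq_zero
      intro j _
      rw [this i]; ring
    rw [hz]
    positivity
  rcases eq_or_ne (∑ i, (v i)^2) 0 with hv0 | hv0
  · have : ∀ i, v i = 0 := sum_sq_eq_zero_forall hv0
    have hz : ∑ i, ∑ j, u i * B i j * v j = 0 := by
      apply Finset.sum_eq_zero
      intro i _
      apply Finset.sum_eq_zero
      intro j _
      rw [this j]; ring
    rw [hz]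
    positivity
  have hupos : 0 < ∑ i, (u i)^2 :=
    lt_of_le_of_ne (Finset.sum_nonneg fun i _ => sq_nonneg _) (Ne.symm hu0)
  have hvpos : 0 < ∑ i, (v i)^2 :=
    lt_of_le_of_ne (Finset.sum_nonneg fun i _ => sq_nonneg _) (Ne.symm hv0)
  set a := Real.sqrt (∑ i, (u i)^2) with ha
  set b := Real.sqrt (∑ i, (v i)^2) with hb
  have hapos : 0 < a := Real.sqrt_pos.2 hupos
  have hbpos : 0 < b := Real.sqrt_pos.2 hvpos
  have ha2 : a^2 = ∑ i, (u i)^2 := Real.sq_sqrt hupos.le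
  have hb2 : b^2 = ∑ i, (v i)^2 := Real.sq_sqrt hvpos.le
  have happ := h (fun i => u i / a) (fun i => v i / b)
    (fun j hj => by beta_reduce; rw [hu j hj]; simp)
    (fun j hj => by beta_reduce; rw [hv j hj]; simp)
    (by
      have : ∑ i, (u i / a)^2 = (∑ i, (u i)^2) / a^2 := by
        rw [Finset.sum_div]
        exact Finset.sum_congr rfl fun i _ => by rw [div_pow]
      rw [this, ha2]
      exact le_of_eq (div_self hupos.ne'))
    (by
      have : ∑ i, (v i / b)^2 = (∑ i, (v i)^2) / b^2 := by
        rw [Finset.sum_div]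
        exact Finset.sum_congr rfl fun i _ => by rw [div_pow]
      rw [this, hb2]
      exact le_of_eq (div_self hvpos.ne'))
  have hscale : ∑ i, ∑ j, (u i / a) * B i j * (v j / b)
      = (∑ i, ∑ j, u i * B i j * v j) / (a * b) := by
    rw [Finset.sum_div]
    apply Finset.sum_congr rfl
    intro i _
    rw [Finset.sum_div]
    apply Finset.sum_congr rfl
    intro j _
    field_simp
  rw [hscale] at happ
  have habpos : 0 < a * b := mul_pos hapos hbpos
  calc ∑ i, ∑ j, u i * B i j * v j
      = ((∑ i, ∑ j, u i * B i j * v j) / (a * b)) * (a * b) := by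
        field_simp
    _ ≤ M * (a * b) := mul_le_mul_of_nonneg_right happ habpos.le
    _ = M * a * b := by ring

lemma opNorm_le_of_bilinear (B : Matrix (Fin n) (Fin n) ℝ) (J : Finset (Fin n)) (M : ℝ)
    (hM : 0 ≤ M)
    (h : ∀ u v : Fin n → ℝ, (∀ j, j ∉ J → u j = 0) → (∀ j, j ∉ J → v j = 0) →
      (∑ i, (u i)^2 ≤ 1) → (∑ i, (v i)^2 ≤ 1) →
      ∑ i, ∑ j, u i * B i j * v j ≤ M) :
    opNorm (submatrixSet B J J) ≤ M := by
  classical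
  unfold opNorm
  apply ContinuousLinearMap.opNorm_le_bound _ hM
  intro v
  rw [LinearMap.coe_toContinuousLinearMap']
  set w : EuclideanSpace ℝ J := Matrix.toEuclideanLin (submatrixSet B J J) v with hwdef
  have hw : ∀ i : J, w i = ∑ j : J, B i.1 j.1 * v j := by
    intro i
    rfl
  -- extensions by zero
  set ut : Fin n → ℝ := fun i => if hi : i ∈ J then w ⟨i, hi⟩ else 0 with hut
  set vt : Fin n → ℝ := fun i => if hi : i ∈ J then v ⟨i, hi⟩ else 0 with hvt
  have husupp : ∀ j, j ∉ J → ut j = 0 := fun j hj => by simp [hut, hj]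
  have hvsupp : ∀ j, j ∉ J → vt j = 0 := fun j hj => by simp [hvt, hj]
  have hsum_u : ∑ i, (ut i)^2 = ∑ i : J, (w i)^2 := by
    rw [← Finset.sum_subset J.subset_univ (fun i _ hi => by rw [husupp i hi]; ring)]
    rw [← Finset.sum_coe_sort J (fun i => (ut i)^2)]
    apply Finset.sum_congr rfl
    intro i _
    simp [hut, i.2]
  have hsum_v : ∑ i, (vt i)^2 = ∑ i : J, (v i)^2 := by
    rw [← Finset.sum_subset J.subset_univ (fun i _ hi => by rw [hvsupp i hi]; ring)]
    rw [← Finset.sum_coe_sort J (fun i => (vt i)^2)]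
    apply Finset.sum_congr rfl
    intro i _
    simp [hvt, i.2]
  have hbil : ∑ i, ∑ j, ut i * B i j * vt j = ∑ i : J, (w i)^2 := by
    have step1 : ∑ i, ∑ j, ut i * B i j * vt j
        = ∑ i ∈ J, ∑ j ∈ J, ut i * B i j * vt j := by
      rw [← Finset.sum_subset J.subset_univ (fun i _ hi => by
        apply Finset.sum_eq_zero
        intro j _
        rw [husupp i hi]; ring)]
      apply Finset.sum_congr rfl
      intro i _
      rw [← Finset.sum_subset J.subset_univ (fun j _ hj => by rw [hvsupp j hj]; ring)]
    rw [step1]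
    rw [← Finset.sum_coe_sort J (fun i => ∑ j ∈ J, ut i * B i j * vt j)]
    apply Finset.sum_congr rfl
    intro i _
    rw [← Finset.sum_coe_sort J (fun j => ut i.1 * B i.1 j * vt j)]
    have : ∑ j : J, ut i.1 * B i.1 j.1 * vt j.1 = ∑ j : J, w i * (B i.1 j.1 * v j) := by
      apply Finset.sum_congr rfl
      intro j _
      simp only [hut, hvt, i.2, j.2, dif_pos]
      ring
    rw [this, ← Finset.mul_sum, ← hw i]
    ring
  -- norms
  have hnormw : ‖w‖ = Real.sqrt (∑ i : J, (w i)^2) := by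
    rw [EuclideanSpace.norm_eq]
    congr 1
    apply Finset.sum_congr rfl
    intro i _
    rw [Real.norm_eq_abs, sq_abs]
  have hnormv : ‖v‖ = Real.sqrt (∑ i : J, (v i)^2) := by
    rw [EuclideanSpace.norm_eq]
    congr 1
    apply Finset.sum_congr rfl
    intro i _
    rw [Real.norm_eq_abs, sq_abs]
  have hkey := bilinear_homogeneous B J M hM h ut vt husupp hvsupp
  rw [hbil, hsum_u, hsum_v] at hkey
  -- conclude
  set S := ∑ i : J, (w i)^2 with hS
  have hS0 : 0 ≤ S := Finset.sum_nonneg fun i _ => sq_nonneg _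
  rcases eq_or_lt_of_le hS0 with hSz | hSpos
  · rw [hnormw, ← hSz]
    simp
    positivity
  · have hsqrtS : 0 < Real.sqrt S := Real.sqrt_pos.2 hSpos
    have : Real.sqrt S ≤ M * Real.sqrt (∑ i : J, (v i)^2) := by
      have h2 : Real.sqrt S * Real.sqrt S ≤
          (M * Real.sqrt (∑ i : J, (v i)^2)) * Real.sqrt S := by
        calc Real.sqrt S * Real.sqrt S = S := Real.mul_self_sqrt hS0
          _ ≤ M * Real.sqrt S * Real.sqrt (∑ i : J, (v i)^2) := hkey
          _ = (M * Real.sqrt (∑ i : J, (v i)^2)) * Real.sqrt S := by ring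
      exact le_of_mul_le_mul_right h2 hsqrtS
    rw [hnormw, hnormv]
    exact this

end OpNormPlumbing


end GT41

/-- First core block (Proposition 4.1). -/
theorem stmt4 :
    ∃ C : ℝ, 0 < C ∧
    ∀ (n : ℕ) (A Abar : Matrix (Fin n) (Fin n) ℝ) (d r : ℝ),
      1 ≤ r → Real.exp 1 ≤ d →
      normInfOne (A - Abar) ≤ 5 * r * n * Real.sqrt d →
      ∃ J₁ : Finset (Fin n),
        (n : ℝ) - 0.1 * n ≤ (J₁.card : ℝ) ∧
        opNorm (submatrixSet (A - Abar) J₁ J₁) ≤ C * r * Real.sqrt d := by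
  classical
  refine ⟨36600, by norm_num, ?_⟩
  intro n A Abar d r hr hd hB
  set B : Matrix (Fin n) (Fin n) ℝ := A - Abar with hBdef
  have hd0 : (0:ℝ) < d := lt_of_lt_of_le (Real.exp_pos 1) hd
  have hsd : 0 < Real.sqrt d := Real.sqrt_pos.2 hd0
  have hr0 : (0:ℝ) < r := lt_of_lt_of_le one_pos hr
  set M : ℝ := 36600 * r * Real.sqrt d with hMdef
  have hM0 : 0 < M := by positivity
  -- the set of admissible lengths
  set S : Set ℕ := {t | ∃ x y : ℕ → Fin n → ℝ, GT41.Adm B M t x y} with hSdef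
  have h0S : 0 ∈ S := ⟨fun _ _ => 0, fun _ _ => 0,
    fun s hs => absurd hs (Nat.not_lt_zero s)⟩
  -- any admissible length is at most n / 20
  have hlen : ∀ t ∈ S, (t:ℝ) ≤ (n:ℝ) / 20 := by
    rintro t ⟨x, y, hxy⟩
    have h1 : (t:ℝ) * M ≤ 366 * normInfOne B := GT41.adm_len hxy
    have h2 : (366:ℝ) * normInfOne B ≤ 366 * (5 * r * n * Real.sqrt d) := by
      have := hB
      linarith
    have h3 : (t:ℝ) * M ≤ ((n:ℝ)/20) * M := by
      have he : ((n:ℝ)/20) * M = 366 * (5 * r * n * Real.sqrt d) := by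
        rw [hMdef]; ring
      rw [he]
      linarith
    exact le_of_mul_le_mul_right h3 hM0
  have hbdd : BddAbove S := by
    refine ⟨n, fun t ht => ?_⟩
    have := hlen t ht
    have h2 : (t:ℝ) ≤ (n:ℝ) := le_trans this (by
      have : (0:ℝ) ≤ n := Nat.cast_nonneg n
      linarith)
    exact_mod_cast h2
  set T : ℕ := sSup S with hTdef
  have hTS : T ∈ S := Nat.sSup_mem ⟨0, h0S⟩ hbdd
  obtain ⟨x, y, hxy⟩ := hTS
  have hT20 : (T:ℝ) ≤ (n:ℝ)/20 := hlen T ⟨x, y, hxy⟩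
  -- the subset J₁
  set J₁ : Finset (Fin n) := Finset.univ.filter (fun j => GT41.cw x y T j < 1) with hJdef
  refine ⟨J₁, ?_, ?_⟩
  · -- cardinality bound
    set Bad : Finset (Fin n) := Finset.univ.filter (fun j => ¬ (GT41.cw x y T j < 1))
      with hBadDef
    have hcard : J₁.card + Bad.card = n := by
      rw [hJdef, hBadDef]
      rw [Finset.card_filter_add_card_filter_not]
      exact Finset.card_fin n
    have hBadBound : (Bad.card : ℝ) ≤ 2 * T := by
      have h1 : (Bad.card : ℝ) * 1 ≤ ∑ j ∈ Bad, GT41.cw x y T j := by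
        have := Finset.card_nsmul_le_sum Bad (fun j => GT41.cw x y T j) 1
          (fun j hj => by
            have := Finset.mem_filter.1 hj
            linarith [not_lt.1 this.2])
        simpa [nsmul_eq_mul] using this
      have h2 : ∑ j ∈ Bad, GT41.cw x y T j ≤ ∑ j, GT41.cw x y T j :=
        Finset.sum_le_sum_of_subset_of_nonneg (Finset.filter_subset _ _)
          (fun j _ _ => GT41.cw_nonneg x y T j)
      have h3 : ∑ j, GT41.cw x y T j ≤ 2 * T := by
        unfold GT41.cw
        rw [Finset.sum_comm]
        have hper : ∀ s ∈ Finset.range T,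
            ∑ j, ((x s j)^2 + (y s j)^2) ≤ 2 := by
          intro s hs
          have h := hxy s (Finset.mem_range.1 hs)
          rw [Finset.sum_add_distrib]
          linarith [h.1, h.2.1]
        calc ∑ s ∈ Finset.range T, ∑ j, ((x s j)^2 + (y s j)^2)
            ≤ ∑ s ∈ Finset.range T, (2:ℝ) := Finset.sum_le_sum hper
          _ = 2 * T := by
              rw [Finset.sum_const, Finset.card_range]
              simp [mul_comm]
      linarith
    have : (J₁.card : ℝ) = (n:ℝ) - Bad.card := by
      have := hcard
      have h2 : (J₁.card : ℝ) + Bad.card = n := by exact_mod_cast this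
      linarith
    rw [this]
    have : (0.1:ℝ) * n = (n:ℝ)/10 := by ring
    rw [this]
    linarith
  · -- operator norm bound
    apply GT41.opNorm_le_of_bilinear B J₁ M hM0.le
    intro u v hu hv hun hvn
    by_contra hlt
    push_neg at hlt
    -- extend the admissible sequence
    set x' : ℕ → Fin n → ℝ := fun s => if s = T then u else x s with hx'
    set y' : ℕ → Fin n → ℝ := fun s => if s = T then v else y s with hy'
    have hcw_eq : ∀ s, s ≤ T → ∀ j, GT41.cw x' y' s j = GT41.cw x y s j := by
      intro s hs j
      unfold GT41.cw
      apply Finset.sum_congr rfl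
      intro s' hs'
      have hlt' : s' < s := Finset.mem_range.1 hs'
      have hne : s' ≠ T := by omega
      rw [hx', hy']
      simp [hne]
    have hAdm' : GT41.Adm B M (T+1) x' y' := by
      intro s hs
      rcases Nat.lt_succ_iff_lt_or_eq.1 hs with hsT | hsT
      · have h := hxy s hsT
        have hxe : x' s = x s := by rw [hx']; simp [Nat.ne_of_lt hsT]
        have hye : y' s = y s := by rw [hy']; simp [Nat.ne_of_lt hsT]
        refine ⟨by rw [hxe]; exact h.1, by rw [hye]; exact h.2.1, ?_, ?_⟩
        · intro j hj
          rw [hcw_eq s hsT.le] at hj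
          rw [hxe, hye]
          exact h.2.2.1 j hj
        · rw [hxe, hye]
          exact h.2.2.2
      · have hxe : x' s = u := by rw [hx']; simp [hsT]
        have hye : y' s = v := by rw [hy']; simp [hsT]
        refine ⟨by rw [hxe]; exact hun, by rw [hye]; exact hvn, ?_, ?_⟩
        · intro j hj
          rw [hcw_eq s (le_of_eq hsT), hsT] at hj
          have hjn : j ∉ J₁ := by
            rw [hJdef]
            simp only [Finset.mem_filter, Finset.mem_univ, true_and]
            exact not_lt.2 hj
          rw [hxe, hye]
          exact ⟨hu j hjn, hv j hjn⟩
        · rw [hxe, hye]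
          exact hlt
    have : T + 1 ∈ S := ⟨x', y', hAdm'⟩
    have := le_csSup hbdd this
    omega
end

section
/- Let A be an n×n random matrix with jointly independent entries taking values in {0,1}, with E A = (p_ij), and let d ≥ e satisfy max_{i,j} n·p_ij ≤ d. Then for any r ≥ 1, with probability at least 1 − 2·n^{−2r}, the following holds simultaneously for all index sets: every subset I×J of [n]×[n] with |I| = m, |J| = k and min(m,k) ≤ n/d can be partitioned into two disjoint subsets ℛ and 𝒞 of [n]×[n] such that (i) for every i ∈ [n], |{j : (i,j) ∈ ℛ}| ≤ min(m,k), and for every j ∈ [n], |{i : (i,j) ∈ 𝒞}| ≤ min(m,k); and (ii) every row of the matrix A_ℛ has at most 10·r·log(d) entries equal to 1, and every column of the matrix A_𝒞 has at most 10·r·log(d) entries equal to 1. -/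
open MeasureTheory ProbabilityTheory

open Real Finset


lemma pow_le_exp_mul_factorial (m : ℕ) : (m:ℝ)^m ≤ Real.exp m * m.factorial := by
  have h1 : ((m:ℝ))^m / m.factorial ≤ Real.exp m := by
    have h2 : ∀ i ∈ Finset.range (m+1), (0:ℝ) ≤ (m:ℝ)^i / i.factorial := by
      intro i _
      positivity
    have h3 := Finset.single_le_sum h2 (Finset.self_mem_range_succ m)
    exact h3.trans (Real.sum_le_exp_of_nonneg (by positivity) (m+1))
  have hf : (0:ℝ) < m.factorial := by exact_mod_cast m.factorial_pos
  calc ((m:ℝ))^m = (m:ℝ)^m / m.factorial * m.factorial := by field_simp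
    _ ≤ Real.exp m * m.factorial := by
        apply mul_le_mul_of_nonneg_right h1 hf.le

lemma choose_le_exp (n m : ℕ) (hm : 1 ≤ m) (hn : 1 ≤ n) :
    (n.choose m : ℝ) ≤ Real.exp (m * (Real.log n + 1 - Real.log m)) := by
  have h1 : (n.choose m : ℝ) ≤ (n:ℝ)^m / m.factorial := Nat.choose_le_pow_div m n
  have h2 : (n:ℝ)^m / m.factorial ≤ (n:ℝ)^m * Real.exp m / (m:ℝ)^m := by
    rw [div_le_div_iff₀ (by positivity) (by positivity)]
    have := pow_le_exp_mul_factorial m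
    have hnm : (0:ℝ) ≤ (n:ℝ)^m := by positivity
    nlinarith [this, hnm]
  refine h1.trans (h2.trans (le_of_eq ?_))
  have hn0 : (0:ℝ) < n := by exact_mod_cast hn
  have hm0 : (0:ℝ) < m := by exact_mod_cast hm
  rw [← Real.exp_log (x := (n:ℝ)^m * Real.exp m / (m:ℝ)^m) (by positivity)]
  congr 1
  rw [Real.log_div (by positivity) (by positivity), Real.log_mul (by positivity)
    (Real.exp_pos _).ne', Real.log_pow, Real.log_pow, Real.log_exp]
  ring

lemma core_pure (r u v m k w : ℝ) (hr : 1 ≤ r) (hu : 1 ≤ u) (hv : 0 ≤ v)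
    (hm11 : 11 ≤ m) (hmB : 10*r*u ≤ m) (hmk : m ≤ k)
    (hw0 : 0 ≤ w) (hw : w ≤ m/11 + 1.78) :
    2*k*(u+v+1) + (2*r+2)*(w+u+v) ≤ 12.5*(r*u*k) + 10*(r*u*(v*k)) := by
  have hk11 : (11:ℝ) ≤ k := le_trans hm11 hmk
  have hk0 : (0:ℝ) ≤ k := by linarith
  have hu0 : (0:ℝ) ≤ u := by linarith
  have hr0 : (0:ℝ) ≤ r := by linarith
  have hr1 : (0:ℝ) ≤ r - 1 := by linarith
  have hu1 : (0:ℝ) ≤ u - 1 := by linarith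
  have huk : (11:ℝ) ≤ u*k := by nlinarith
  have A1 : 2*k*u ≤ 2*(r*u*k) := by nlinarith [mul_nonneg (mul_nonneg hk0 hu0) hr1]
  have A2 : 2*k*v ≤ 2*(r*u*(v*k)) := by nlinarith [mul_nonneg (mul_nonneg hk0 hv) hr1, mul_nonneg (mul_nonneg (mul_nonneg hk0 hv) hr0) hu1]
  have A3 : 2*k ≤ 2*(r*u*k) := by nlinarith [mul_nonneg hk0 hr1, mul_nonneg (mul_nonneg hk0 hr0) hu1]
  have A4 : (2*r+2)*w ≤ 4*r*(k/11+1.78) := by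
    have h2 : (2*r+2) ≤ 4*r := by linarith
    have hwk : w ≤ k/11 + 1.78 := by linarith
    have h3 : (2*r+2)*w ≤ 4*r*w := by nlinarith
    have h4 : 4*r*w ≤ 4*r*(k/11+1.78) := by nlinarith
    linarith
  have A4b : 4*r*(k/11+1.78) ≤ (4/11)*(r*u*k) + (7.12/11)*(r*u*k) := by
    have h5 : 4*r*(k/11) ≤ (4/11)*(r*u*k) := by nlinarith [mul_nonneg (mul_nonneg hr0 hk0) hu1]
    have h6 : 4*r*1.78 ≤ (7.12/11)*(r*u*k) := by nlinarith [mul_nonneg hr0 (by linarith : (0:ℝ) ≤ u*k - 11)]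
    linarith
  have A5 : (2*r+2)*u ≤ (4/11)*(r*u*k) := by
    nlinarith [mul_nonneg (mul_nonneg hr0 hu0) (by linarith : (0:ℝ) ≤ k - 11), mul_nonneg hu0 hr1]
  have A6 : (2*r+2)*v ≤ (4/11)*(r*u*(v*k)) := by
    nlinarith [mul_nonneg (mul_nonneg hr0 hv) (by linarith : (0:ℝ) ≤ u*k - 11), mul_nonneg hv hr1]
  have hX : (0:ℝ) ≤ r*u*k := mul_nonneg (mul_nonneg hr0 hu0) hk0
  have hY : (0:ℝ) ≤ r*u*(v*k) := mul_nonneg (mul_nonneg hr0 hu0) (mul_nonneg hv hk0)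
  linarith

lemma log_ten_ge : (2.25:ℝ) ≤ Real.log 10 := by
  have h8 : Real.log 10 = Real.log 8 + Real.log (5/4) := by
    rw [← Real.log_mul (by norm_num) (by norm_num)]
    norm_num
  have h2 : Real.log 8 = 3 * Real.log 2 := by
    rw [show (8:ℝ) = 2^3 by norm_num, Real.log_pow]
    push_cast; ring
  have h3 : Real.log (4/5) ≤ 4/5 - 1 := Real.log_le_sub_one_of_pos (by norm_num)
  have h4 : Real.log (5/4) = - Real.log (4/5) := by
    rw [← Real.log_inv]; norm_num
  have h5 : (0.6931471803:ℝ) < Real.log 2 := Real.log_two_gt_d9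
  rw [h8, h2, h4]
  linarith

lemma log_le_linear (m : ℝ) (hm : 11 ≤ m) : Real.log m ≤ m/11 + 1.78 := by
  have h1 : Real.log m = Real.log 11 + Real.log (m/11) := by
    rw [← Real.log_mul (by norm_num) (by positivity : (0:ℝ) < m/11).ne']
    congr 1; field_simp
  have h2 : Real.log (m/11) ≤ m/11 - 1 := Real.log_le_sub_one_of_pos (by linarith)
  have h3 : Real.log 11 ≤ 4 * Real.log 2 := by
    calc Real.log 11 ≤ Real.log 16 := Real.log_le_log (by norm_num) (by norm_num)
      _ = 4 * Real.log 2 := by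
          rw [show (16:ℝ) = 2^4 by norm_num, Real.log_pow]; push_cast; ring
  have h5 : Real.log 2 < 0.6931471808 := Real.log_two_lt_d9
  linarith

lemma perpair_exp (r d m k n : ℝ) (hr : 1 ≤ r) (hu : 1 ≤ Real.log d)
    (hm11 : 11 ≤ m) (hmB : 10*r*Real.log d ≤ m) (hmk : m ≤ k) (hkn : k ≤ n)
    (hmd : m*d ≤ n) (hd1 : 1 ≤ d) :
    m*(Real.log n + 1 - Real.log m) + k*(Real.log n + 1 - Real.log k)
      + (10*r*Real.log d)*k*(1 + Real.log m + Real.log d - Real.log (10*r*Real.log d) - Real.log n)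
      ≤ -((2*r+2)*Real.log n) := by
  set u := Real.log d with hu_def
  set w := Real.log m with hw_def
  have hm0 : (0:ℝ) < m := by linarith
  have hk0 : (0:ℝ) < k := by linarith
  have hd0 : (0:ℝ) < d := by linarith
  have hn0 : (0:ℝ) < n := by nlinarith
  have hw0 : (0:ℝ) ≤ w := Real.log_nonneg (by linarith)
  have hwle : w ≤ m/11 + 1.78 := log_le_linear m hm11
  have hv0 : w + u ≤ Real.log n := by
    rw [hw_def, hu_def, ← Real.log_mul hm0.ne' hd0.ne']
    exact Real.log_le_log (by positivity) hmd
  set L := Real.log n with hL_def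
  set v := L - w - u with hv_def
  have hv : 0 ≤ v := by rw [hv_def]; linarith
  have hwk : w ≤ Real.log k := Real.log_le_log hm0 hmk
  have hLn : Real.log k ≤ L := Real.log_le_log hk0 hkn
  have hB10 : (10:ℝ) ≤ 10*r*u := by nlinarith
  have hlogB : (2.25:ℝ) ≤ Real.log (10*r*u) := by
    calc (2.25:ℝ) ≤ Real.log 10 := log_ten_ge
      _ ≤ Real.log (10*r*u) := Real.log_le_log (by norm_num) hB10
  -- the three terms
  have hterm1 : m*(L + 1 - w) ≤ k*(v+u+1) := by
    have : L + 1 - w = v + u + 1 := by rw [hv_def]; ring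
    rw [this]
    apply mul_le_mul_of_nonneg_right hmk (by linarith)
  have hterm2 : k*(L + 1 - Real.log k) ≤ k*(v+u+1) := by
    apply mul_le_mul_of_nonneg_left _ hk0.le
    have : v + u + 1 = L + 1 - w := by rw [hv_def]; ring
    rw [this]
    linarith
  have hterm3 : (10*r*u)*k*(1 + w + u - Real.log (10*r*u) - L)
      ≤ (10*r*u)*k*(-(1.25) - v) := by
    apply mul_le_mul_of_nonneg_left _ (by positivity : (0:ℝ) ≤ (10*r*u)*k)
    have : 1 + w + u - Real.log (10*r*u) - L = 1 - Real.log (10*r*u) - v := by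
      rw [hv_def]; ring
    rw [this]
    linarith
  have hcore := core_pure r u v m k w hr hu hv hm11 hmB hmk hw0 hwle
  have hLsum : L = w + u + v := by rw [hv_def]; ring
  nlinarith [hterm1, hterm2, hterm3, hcore]

section chern
variable {n : ℕ} {Ω : Type*} [MeasureSpace Ω] [IsProbabilityMeasure (ℙ : Measure Ω)]
  (A : Ω → Matrix (Fin n) (Fin n) ℝ) (p : Matrix (Fin n) (Fin n) ℝ)

lemma entry_integrable (hmeas : ∀ i j, Measurable fun ω => A ω i j)
    (h01 : ∀ ω i j, A ω i j = 0 ∨ A ω i j = 1) (i j : Fin n) :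
    Integrable (fun ω => A ω i j) ℙ := by
  refine Integrable.mono' (integrable_const 1) (hmeas i j).aestronglyMeasurable
    (ae_of_all _ fun ω => ?_)
  rcases h01 ω i j with h | h <;> rw [h] <;> norm_num

lemma entry_mean_nonneg (hmeas : ∀ i j, Measurable fun ω => A ω i j)
    (h01 : ∀ ω i j, A ω i j = 0 ∨ A ω i j = 1)
    (hmean : ∀ i j, (∫ ω, A ω i j) = p i j) (i j : Fin n) : 0 ≤ p i j := by
  rw [← hmean i j]
  refine integral_nonneg fun ω => ?_
  rcases h01 ω i j with h | h <;> rw [h] <;> norm_num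

lemma chernoff_pair (hmeas : ∀ i j, Measurable fun ω => A ω i j)
    (h01 : ∀ ω i j, A ω i j = 0 ∨ A ω i j = 1)
    (hindep : iIndepFun
      (fun (q : Fin n × Fin n) ω => A ω q.1 q.2) ℙ)
    (hmean : ∀ i j, (∫ ω, A ω i j) = p i j)
    (s : Finset (Fin n × Fin n)) (T t : ℝ) (ht : 0 ≤ t) :
    ℙ {ω | T ≤ ∑ q ∈ s, A ω q.1 q.2}
      ≤ ENNReal.ofReal (Real.exp (-t*T + (Real.exp t - 1) * ∑ q ∈ s, p q.1 q.2)) := by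
  classical
  set X : (Fin n × Fin n) → Ω → ℝ := fun q ω => A ω q.1 q.2 with hX
  have hXmeas : ∀ q, Measurable (X q) := fun q => hmeas q.1 q.2
  have hsum_meas : Measurable (∑ q ∈ s, X q) := by
    rw [show (∑ q ∈ s, X q) = fun a => ∑ q ∈ s, X q a from funext fun a => Finset.sum_apply _ _ _]
    exact Finset.measurable_sum s fun q _ => hXmeas q
  have hbound : ∀ ω, (∑ q ∈ s, X q) ω ≤ s.card := by
    intro ω
    rw [Finset.sum_apply]
    calc ∑ q ∈ s, X q ω ≤ ∑ q ∈ s, (1:ℝ) := by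
          refine Finset.sum_le_sum fun q _ => ?_
          rcases h01 ω q.1 q.2 with h | h <;> rw [hX] <;> simp [h]
      _ = s.card := by simp
  have hnn : ∀ ω, 0 ≤ (∑ q ∈ s, X q) ω := by
    intro ω
    rw [Finset.sum_apply]
    refine Finset.sum_nonneg fun q _ => ?_
    rcases h01 ω q.1 q.2 with h | h <;> rw [hX] <;> simp [h]
  have hint : Integrable (fun ω => Real.exp (t * (∑ q ∈ s, X q) ω)) ℙ := by
    refine Integrable.mono' (integrable_const (Real.exp (t * s.card)))
      ((hsum_meas.const_mul t).exp.aestronglyMeasurable) (ae_of_all _ fun ω => ?_)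
    rw [Real.norm_eq_abs, abs_of_pos (Real.exp_pos _), Real.exp_le_exp]
    exact mul_le_mul_of_nonneg_left (hbound ω) ht
  have hch := measure_ge_le_exp_mul_mgf (μ := ℙ) (X := ∑ q ∈ s, X q) T ht hint
  have hmgf : mgf (∑ q ∈ s, X q) ℙ t ≤ Real.exp ((Real.exp t - 1) * ∑ q ∈ s, p q.1 q.2) := by
    rw [iIndepFun.mgf_sum hindep hXmeas s]
    have hterm : ∀ q ∈ s, mgf (X q) ℙ t = 1 + (Real.exp t - 1) * p q.1 q.2 := by
      intro q _
      have hptw : (fun ω => Real.exp (t * X q ω))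
          = fun ω => 1 + (Real.exp t - 1) * X q ω := by
        funext ω
        rcases h01 ω q.1 q.2 with h | h <;> rw [hX] <;> simp [h]
      rw [mgf, hptw]
      rw [integral_add (integrable_const 1)
        ((entry_integrable A hmeas h01 q.1 q.2).const_mul _)]
      rw [MeasureTheory.integral_const_mul, hmean q.1 q.2]
      simp
    calc ∏ q ∈ s, mgf (X q) ℙ t = ∏ q ∈ s, (1 + (Real.exp t - 1) * p q.1 q.2) :=
          Finset.prod_congr rfl hterm
      _ ≤ ∏ q ∈ s, Real.exp ((Real.exp t - 1) * p q.1 q.2) := by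
          refine Finset.prod_le_prod (fun q _ => ?_) (fun q _ => ?_)
          · have h1 : 0 ≤ (Real.exp t - 1) := by
              have := Real.one_le_exp ht
              linarith
            have h2 := entry_mean_nonneg A p hmeas h01 hmean q.1 q.2
            nlinarith
          · exact Real.add_one_le_exp _ |>.trans_eq' (by ring_nf)
      _ = Real.exp ((Real.exp t - 1) * ∑ q ∈ s, p q.1 q.2) := by
          rw [← Real.exp_sum, Finset.mul_sum]
  have hfin : ℙ {ω | T ≤ (∑ q ∈ s, X q) ω} ≠ ⊤ := measure_ne_top _ _
  have hset : {ω | T ≤ ∑ q ∈ s, A ω q.1 q.2} = {ω | T ≤ (∑ q ∈ s, X q) ω} := by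
    ext ω
    simp [hX, Finset.sum_apply]
  rw [hset, ← ENNReal.ofReal_toReal hfin]
  apply ENNReal.ofReal_le_ofReal
  calc (ℙ {ω | T ≤ (∑ q ∈ s, X q) ω}).toReal
      ≤ Real.exp (-t*T) * mgf (∑ q ∈ s, X q) ℙ t := hch
    _ ≤ Real.exp (-t*T) * Real.exp ((Real.exp t - 1) * ∑ q ∈ s, p q.1 q.2) := by
        exact mul_le_mul_of_nonneg_left hmgf (Real.exp_pos _).le
    _ = Real.exp (-t*T + (Real.exp t - 1) * ∑ q ∈ s, p q.1 q.2) := (Real.exp_add _ _).symm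

end chern

lemma sum01_eq_card {α : Type*} [DecidableEq α] (s : Finset α) (f : α → ℝ)
    (h : ∀ x ∈ s, f x = 0 ∨ f x = 1) :
    ∑ x ∈ s, f x = ((s.filter (fun x => f x = 1)).card : ℝ) := by
  classical
  rw [← Finset.sum_filter_add_sum_filter_not s (fun x => f x = 1)]
  have h1 : ∑ x ∈ s.filter (fun x => f x = 1), f x
      = ∑ _x ∈ s.filter (fun x => f x = 1), (1:ℝ) :=
    Finset.sum_congr rfl (fun x hx => (Finset.mem_filter.1 hx).2)
  have h2 : ∑ x ∈ s.filter (fun x => ¬ f x = 1), f x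
      = ∑ _x ∈ s.filter (fun x => ¬ f x = 1), (0:ℝ) := by
    refine Finset.sum_congr rfl (fun x hx => ?_)
    rcases h x (Finset.mem_filter.1 hx).1 with h0 | h1
    · exact h0
    · exact absurd h1 (Finset.mem_filter.1 hx).2
  rw [h1, h2]
  simp

lemma peel {n : ℕ} (a : Matrix (Fin n) (Fin n) ℝ) (B : ℝ) (hB : 0 ≤ B)
    (h01 : ∀ i j, a i j = 0 ∨ a i j = 1) :
    ∀ N : ℕ, ∀ I J : Finset (Fin n), I.card + J.card ≤ N →
    ∀ cap : ℕ, min I.card J.card ≤ cap →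
    (∀ I' ⊆ I, ∀ J' ⊆ J, (∑ i ∈ I', ∑ j ∈ J', a i j) ≤ B * ((max I'.card J'.card : ℕ) : ℝ)) →
    ∃ R C : Finset (Fin n × Fin n), Disjoint R C ∧ R ∪ C = I ×ˢ J ∧
      (∀ i, (R.filter fun q => q.1 = i).card ≤ cap) ∧
      (∀ j, (C.filter fun q => q.2 = j).card ≤ cap) ∧
      (∀ i, ((R.filter fun q => q.1 = i ∧ a q.1 q.2 = 1).card : ℝ) ≤ B) ∧
      (∀ j, ((C.filter fun q => q.2 = j ∧ a q.1 q.2 = 1).card : ℝ) ≤ B) := by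
  classical
  intro N
  induction N with
  | zero =>
    intro I J hN cap hcap He
    have hI : I = ∅ := Finset.card_eq_zero.1 (by omega)
    exact ⟨∅, ∅, by simp, by simp [hI], by simp, by simp,
      fun _ => by simpa using hB, fun _ => by simpa using hB⟩
  | succ N ih =>
    intro I J hN cap hcap He
    rcases Finset.eq_empty_or_nonempty I with hI | hI
    · exact ⟨∅, ∅, by simp, by simp [hI], by simp, by simp,
        fun _ => by simpa using hB, fun _ => by simpa using hB⟩
    rcases Finset.eq_empty_or_nonempty J with hJ | hJ
    · exact ⟨∅, ∅, by simp, by simp [hJ], by simp, by simp,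
        fun _ => by simpa using hB, fun _ => by simpa using hB⟩
    rcases le_or_gt J.card I.card with hJI | hIJ
    · -- remove a row i₀ with small row sum
      have hex : ∃ i₀ ∈ I, ∑ j ∈ J, a i₀ j ≤ B := by
        by_contra hcon
        push_neg at hcon
        have hlt : B * (I.card : ℝ) < ∑ i ∈ I, ∑ j ∈ J, a i j := by
          have := Finset.sum_lt_sum_of_nonempty hI (fun i hi => hcon i hi)
          simpa [Finset.sum_const, nsmul_eq_mul, mul_comm] using this
        have hle : ∑ i ∈ I, ∑ j ∈ J, a i j ≤ B * (I.card : ℝ) := by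
          have h := He I (subset_refl I) J (subset_refl J)
          rwa [max_eq_left hJI] at h
        linarith
      obtain ⟨i₀, hi₀I, hrowsum⟩ := hex
      have hcard : (I.erase i₀).card + J.card ≤ N := by
        have h1 := Finset.card_erase_of_mem hi₀I
        have hpos : 0 < I.card := Finset.card_pos.2 hI
        omega
      have hcap' : min (I.erase i₀).card J.card ≤ cap :=
        le_trans (min_le_min (Finset.card_le_card (Finset.erase_subset i₀ I)) le_rfl) hcap
      obtain ⟨R', C', hdis, hun, hrow, hcol, hr1, hc1⟩ :=
        ih (I.erase i₀) J hcard cap hcap'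
          (fun I' hI' J' hJ' => He I' (hI'.trans (Finset.erase_subset i₀ I)) J' hJ')
      have hR'sub : R' ⊆ (I.erase i₀) ×ˢ J := hun ▸ Finset.subset_union_left
      have hC'sub : C' ⊆ (I.erase i₀) ×ˢ J := hun ▸ Finset.subset_union_right
      have hR'ne : ∀ q ∈ R', q.1 ≠ i₀ := fun q hq =>
        Finset.ne_of_mem_erase (Finset.mem_product.1 (hR'sub hq)).1
      have hC'ne : ∀ q ∈ C', q.1 ≠ i₀ := fun q hq =>
        Finset.ne_of_mem_erase (Finset.mem_product.1 (hC'sub hq)).1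
      refine ⟨R' ∪ ({i₀} ×ˢ J), C', ?_, ?_, ?_, fun j => hcol j, ?_, fun j => hc1 j⟩
      · refine Finset.disjoint_union_left.2 ⟨hdis, Finset.disjoint_left.2 fun q hq hq' => ?_⟩
        have hq1 : q.1 = i₀ := Finset.mem_singleton.1 (Finset.mem_product.1 hq).1
        exact hC'ne q hq' hq1
      · rw [Finset.union_right_comm, hun, ← Finset.union_product]
        congr 1
        rw [Finset.union_comm, ← Finset.insert_eq, Finset.insert_erase hi₀I]
      · intro i
        rw [Finset.filter_union]
        refine le_trans (Finset.card_union_le _ _) ?_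
        by_cases hi : i = i₀
        · have h0 : (R'.filter fun q => q.1 = i) = ∅ := by
            refine Finset.filter_eq_empty_iff.2 fun q hq => ?_
            rw [hi]; exact hR'ne q hq
          rw [h0]
          simp only [Finset.card_empty, zero_add]
          refine le_trans (Finset.card_filter_le _ _) ?_
          rw [Finset.card_product, Finset.card_singleton, one_mul]
          exact le_trans (le_of_eq (min_eq_right hJI).symm) hcap
        · have h0 : (({i₀} ×ˢ J).filter fun q => q.1 = i) = ∅ := by
            refine Finset.filter_eq_empty_iff.2 fun q hq => ?_
            have hq1 : q.1 = i₀ := Finset.mem_singleton.1 (Finset.mem_product.1 hq).1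
            rw [hq1]; exact fun h => hi h.symm
          rw [h0]
          simpa using hrow i
      · intro i
        rw [Finset.filter_union]
        by_cases hi : i = i₀
        · have h0 : (R'.filter fun q => q.1 = i ∧ a q.1 q.2 = 1) = ∅ := by
            refine Finset.filter_eq_empty_iff.2 fun q hq => ?_
            rw [hi]; exact fun h => hR'ne q hq h.1
          rw [h0, Finset.empty_union]
          have hsum : ∑ j ∈ J, a i₀ j = ((J.filter (fun j => a i₀ j = 1)).card : ℝ) :=
            sum01_eq_card J (fun j => a i₀ j) (fun j _ => h01 i₀ j)
          have hinj : (({i₀} ×ˢ J).filter fun q => q.1 = i ∧ a q.1 q.2 = 1).card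
              ≤ (J.filter (fun j => a i₀ j = 1)).card := by
            refine Finset.card_le_card_of_injOn (f := Prod.snd) ?_ ?_
            · intro q hq
              obtain ⟨hqm, hq1, hq2⟩ : q ∈ {i₀} ×ˢ J ∧ q.1 = i ∧ a q.1 q.2 = 1 := by
                have h := Finset.mem_filter.1 hq
                exact ⟨h.1, h.2.1, h.2.2⟩
              refine Finset.mem_filter.2 ⟨(Finset.mem_product.1 hqm).2, ?_⟩
              have hqi₀ : q.1 = i₀ := Finset.mem_singleton.1 (Finset.mem_product.1 hqm).1
              rwa [hqi₀] at hq2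
            · intro q hq q' hq' hsnd
              have h1 : q.1 = i₀ := Finset.mem_singleton.1
                (Finset.mem_product.1 (Finset.mem_filter.1 hq).1).1
              have h2 : q'.1 = i₀ := Finset.mem_singleton.1
                (Finset.mem_product.1 (Finset.mem_filter.1 hq').1).1
              exact Prod.ext (h1.trans h2.symm) hsnd
          calc ((({i₀} ×ˢ J).filter fun q => q.1 = i ∧ a q.1 q.2 = 1).card : ℝ)
              ≤ ((J.filter (fun j => a i₀ j = 1)).card : ℝ) := Nat.cast_le.2 hinj
            _ = ∑ j ∈ J, a i₀ j := hsum.symm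
            _ ≤ B := hrowsum
        · have h0 : (({i₀} ×ˢ J).filter fun q => q.1 = i ∧ a q.1 q.2 = 1) = ∅ := by
            refine Finset.filter_eq_empty_iff.2 fun q hq => ?_
            have hq1 : q.1 = i₀ := Finset.mem_singleton.1 (Finset.mem_product.1 hq).1
            exact fun h => (hi (hq1 ▸ h.1.symm ▸ rfl)).elim
          rw [h0, Finset.union_empty]
          exact hr1 i
    · -- remove a column j₀ with small column sum
      have hex : ∃ j₀ ∈ J, ∑ i ∈ I, a i j₀ ≤ B := by
        by_contra hcon
        push_neg at hcon
        have hlt : B * (J.card : ℝ) < ∑ j ∈ J, ∑ i ∈ I, a i j := by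
          have := Finset.sum_lt_sum_of_nonempty hJ (fun j hj => hcon j hj)
          simpa [Finset.sum_const, nsmul_eq_mul, mul_comm] using this
        have hle : ∑ j ∈ J, ∑ i ∈ I, a i j ≤ B * (J.card : ℝ) := by
          have h := He I (subset_refl I) J (subset_refl J)
          rw [max_eq_right (le_of_lt hIJ)] at h
          rwa [Finset.sum_comm]
        linarith
      obtain ⟨j₀, hj₀J, hcolsum⟩ := hex
      have hcard : I.card + (J.erase j₀).card ≤ N := by
        have h1 := Finset.card_erase_of_mem hj₀J
        have hpos : 0 < J.card := Finset.card_pos.2 hJ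
        omega
      have hcap' : min I.card (J.erase j₀).card ≤ cap :=
        le_trans (min_le_min le_rfl (Finset.card_le_card (Finset.erase_subset j₀ J))) hcap
      obtain ⟨R', C', hdis, hun, hrow, hcol, hr1, hc1⟩ :=
        ih I (J.erase j₀) hcard cap hcap'
          (fun I' hI' J' hJ' => He I' hI' J' (hJ'.trans (Finset.erase_subset j₀ J)))
      have hR'sub : R' ⊆ I ×ˢ (J.erase j₀) := hun ▸ Finset.subset_union_left
      have hC'sub : C' ⊆ I ×ˢ (J.erase j₀) := hun ▸ Finset.subset_union_right
      have hR'ne : ∀ q ∈ R', q.2 ≠ j₀ := fun q hq =>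
        Finset.ne_of_mem_erase (Finset.mem_product.1 (hR'sub hq)).2
      have hC'ne : ∀ q ∈ C', q.2 ≠ j₀ := fun q hq =>
        Finset.ne_of_mem_erase (Finset.mem_product.1 (hC'sub hq)).2
      refine ⟨R', C' ∪ (I ×ˢ {j₀}), ?_, ?_, fun i => hrow i, ?_, fun i => hr1 i, ?_⟩
      · refine Finset.disjoint_union_right.2 ⟨hdis, Finset.disjoint_left.2 fun q hq hq' => ?_⟩
        have hq2 : q.2 = j₀ := Finset.mem_singleton.1 (Finset.mem_product.1 hq').2
        exact hR'ne q hq hq2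
      · rw [← Finset.union_assoc, hun, ← Finset.product_union]
        congr 1
        rw [Finset.union_comm, ← Finset.insert_eq, Finset.insert_erase hj₀J]
      · intro j
        rw [Finset.filter_union]
        refine le_trans (Finset.card_union_le _ _) ?_
        by_cases hj : j = j₀
        · have h0 : (C'.filter fun q => q.2 = j) = ∅ := by
            refine Finset.filter_eq_empty_iff.2 fun q hq => ?_
            rw [hj]; exact hC'ne q hq
          rw [h0]
          simp only [Finset.card_empty, zero_add]
          refine le_trans (Finset.card_filter_le _ _) ?_
          rw [Finset.card_product, Finset.card_singleton, mul_one]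
          exact le_trans (le_of_eq (min_eq_left (le_of_lt hIJ)).symm) hcap
        · have h0 : ((I ×ˢ {j₀}).filter fun q => q.2 = j) = ∅ := by
            refine Finset.filter_eq_empty_iff.2 fun q hq => ?_
            have hq2 : q.2 = j₀ := Finset.mem_singleton.1 (Finset.mem_product.1 hq).2
            rw [hq2]; exact fun h => hj h.symm
          rw [h0]
          simpa using hcol j
      · intro j
        rw [Finset.filter_union]
        by_cases hj : j = j₀
        · have h0 : (C'.filter fun q => q.2 = j ∧ a q.1 q.2 = 1) = ∅ := by
            refine Finset.filter_eq_empty_iff.2 fun q hq => ?_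
            rw [hj]; exact fun h => hC'ne q hq h.1
          rw [h0, Finset.empty_union]
          have hsum : ∑ i ∈ I, a i j₀ = ((I.filter (fun i => a i j₀ = 1)).card : ℝ) :=
            sum01_eq_card I (fun i => a i j₀) (fun i _ => h01 i j₀)
          have hinj : ((I ×ˢ {j₀}).filter fun q => q.2 = j ∧ a q.1 q.2 = 1).card
              ≤ (I.filter (fun i => a i j₀ = 1)).card := by
            refine Finset.card_le_card_of_injOn (f := Prod.fst) ?_ ?_
            · intro q hq
              obtain ⟨hqm, hq1, hq2⟩ : q ∈ I ×ˢ {j₀} ∧ q.2 = j ∧ a q.1 q.2 = 1 := by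
                have h := Finset.mem_filter.1 hq
                exact ⟨h.1, h.2.1, h.2.2⟩
              refine Finset.mem_filter.2 ⟨(Finset.mem_product.1 hqm).1, ?_⟩
              have hqj₀ : q.2 = j₀ := Finset.mem_singleton.1 (Finset.mem_product.1 hqm).2
              rwa [hqj₀] at hq2
            · intro q hq q' hq' hfst
              have h1 : q.2 = j₀ := Finset.mem_singleton.1
                (Finset.mem_product.1 (Finset.mem_filter.1 hq).1).2
              have h2 : q'.2 = j₀ := Finset.mem_singleton.1
                (Finset.mem_product.1 (Finset.mem_filter.1 hq').1).2
              exact Prod.ext hfst (h1.trans h2.symm)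
          calc (((I ×ˢ {j₀}).filter fun q => q.2 = j ∧ a q.1 q.2 = 1).card : ℝ)
              ≤ ((I.filter (fun i => a i j₀ = 1)).card : ℝ) := Nat.cast_le.2 hinj
            _ = ∑ i ∈ I, a i j₀ := hsum.symm
            _ ≤ B := hcolsum
        · have h0 : ((I ×ˢ {j₀}).filter fun q => q.2 = j ∧ a q.1 q.2 = 1) = ∅ := by
            refine Finset.filter_eq_empty_iff.2 fun q hq => ?_
            have hq2 : q.2 = j₀ := Finset.mem_singleton.1 (Finset.mem_product.1 hq).2
            exact fun h => (hj (hq2 ▸ h.1.symm ▸ rfl)).elim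
          rw [h0, Finset.union_empty]
          exact hc1 j
lemma sq_helper (x : ℝ) (hx : 11 ≤ x) : (x+1)^2 ≤ 2*x^2 := by nlinarith

section main
variable {n : ℕ} {Ω : Type*} [MeasureSpace Ω] [IsProbabilityMeasure (ℙ : Measure Ω)]
  (A : Ω → Matrix (Fin n) (Fin n) ℝ) (p : Matrix (Fin n) (Fin n) ℝ) (d r : ℝ)

lemma pair_bound (hmeas : ∀ i j, Measurable fun ω => A ω i j)
    (h01 : ∀ ω i j, A ω i j = 0 ∨ A ω i j = 1)
    (hindep : iIndepFun
      (fun (q : Fin n × Fin n) ω => A ω q.1 q.2) ℙ)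
    (hmean : ∀ i j, (∫ ω, A ω i j) = p i j)
    (hd : Real.exp 1 ≤ d)
    (hmax : ∀ i j, (n : ℝ) * p i j ≤ d)
    (hr : 1 ≤ r) (I J : Finset (Fin n)) :
    ℙ {ω | min (I.card : ℝ) (J.card : ℝ) ≤ n / d ∧
        (10*r*Real.log d) * ((max I.card J.card : ℕ) : ℝ) < ∑ i ∈ I, ∑ j ∈ J, A ω i j}
      ≤ ENNReal.ofReal ((2 * (n:ℝ) ^ (-(2*r)) / ((n:ℝ)+1)^2)
          / ((n.choose I.card : ℝ) * (n.choose J.card : ℝ))) := by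
  classical
  set B : ℝ := 10*r*Real.log d with hB_def
  have hd1 : (1:ℝ) ≤ d := le_trans (by nlinarith [Real.add_one_le_exp (1:ℝ)]) hd
  have hd0 : (0:ℝ) < d := by linarith
  have hu : 1 ≤ Real.log d := by
    calc (1:ℝ) = Real.log (Real.exp 1) := (Real.log_exp 1).symm
      _ ≤ Real.log d := Real.log_le_log (Real.exp_pos 1) hd
  have hB10 : (10:ℝ) ≤ B := by rw [hB_def]; nlinarith
  set m : ℕ := min I.card J.card with hm_def
  set k : ℕ := max I.card J.card with hk_def
  -- trivial cases
  by_cases hcase : ((m:ℝ) ≤ n/d ∧ B < m)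
  swap
  · -- bad set is empty
    have hempty : {ω | min (I.card : ℝ) (J.card : ℝ) ≤ n / d ∧
        B * ((k : ℕ) : ℝ) < ∑ i ∈ I, ∑ j ∈ J, A ω i j} = ∅ := by
      ext ω
      simp only [Set.mem_setOf_eq, Set.mem_empty_iff_false, iff_false, not_and]
      intro hmin
      have hminm : min (I.card : ℝ) (J.card : ℝ) = (m:ℝ) := by
        rw [hm_def]; push_cast [Nat.cast_min]; rfl
      rw [hminm] at hmin
      have hBm : ¬ (B < (m:ℝ)) := by tauto
      push_neg at hBm
      -- S ≤ m * k ≤ B * k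
      have hS : ∑ i ∈ I, ∑ j ∈ J, A ω i j ≤ (I.card : ℝ) * (J.card : ℝ) := by
        calc ∑ i ∈ I, ∑ j ∈ J, A ω i j ≤ ∑ i ∈ I, ∑ j ∈ J, (1:ℝ) := by
              refine Finset.sum_le_sum fun i _ => Finset.sum_le_sum fun j _ => ?_
              rcases h01 ω i j with h | h <;> simp [h]
          _ = (I.card : ℝ) * (J.card : ℝ) := by simp [mul_comm]
        -- done
      have hmk : (I.card : ℝ) * (J.card : ℝ) = (m:ℝ) * (k:ℝ) := by
        rw [hm_def, hk_def]
        rcases le_total I.card J.card with h | h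
        · rw [min_eq_left h, max_eq_right h]
        · rw [min_eq_right h, max_eq_left h]; ring
      have hk0 : (0:ℝ) ≤ (k:ℝ) := Nat.cast_nonneg k
      intro hlt
      nlinarith
    rw [hempty]
    simp
  obtain ⟨hmnd, hBm⟩ := hcase
  -- main case
  have hm11 : (11:ℕ) ≤ m := by
    have : (10:ℝ) < (m:ℝ) := lt_of_le_of_lt hB10 hBm
    exact_mod_cast Nat.lt_of_lt_of_le (by exact_mod_cast this) le_rfl
  have hmk : m ≤ k := min_le_max
  have hkn : k ≤ n := by
    rw [hk_def]
    have huniv : (Finset.univ : Finset (Fin n)).card = n := by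
      rw [Finset.card_univ, Fintype.card_fin]
    rcases le_total I.card J.card with h | h
    · rw [max_eq_right h]; exact le_trans (Finset.card_le_univ J) huniv.le
    · rw [max_eq_left h]; exact le_trans (Finset.card_le_univ I) huniv.le
  have hn1 : 1 ≤ n := le_trans (by omega) hkn
  have hn0 : (0:ℝ) < n := by exact_mod_cast hn1
  have hmd : (m:ℝ) * d ≤ n := (le_div_iff₀ hd0).1 hmnd
  have hm0 : (0:ℝ) < m := by exact_mod_cast (by omega : 0 < m)
  have hk0 : (0:ℝ) < k := by exact_mod_cast (by omega : 0 < k)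
  set t : ℝ := Real.log (B * n / ((m:ℝ) * d)) with ht_def
  have hfrac1 : (1:ℝ) ≤ B * n / ((m:ℝ) * d) := by
    rw [le_div_iff₀ (by positivity)]
    nlinarith
  have ht0 : 0 ≤ t := Real.log_nonneg hfrac1
  have hsub : {ω | min (I.card : ℝ) (J.card : ℝ) ≤ n / d ∧
        B * ((k:ℕ) : ℝ) < ∑ i ∈ I, ∑ j ∈ J, A ω i j}
      ⊆ {ω | B * (k:ℝ) ≤ ∑ q ∈ I ×ˢ J, A ω q.1 q.2} := by
    intro ω hω
    rw [Set.mem_setOf_eq, Finset.sum_product]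
    exact le_of_lt hω.2
  refine le_trans (le_trans (measure_mono hsub)
    (chernoff_pair A p hmeas h01 hindep hmean (I ×ˢ J) (B*(k:ℝ)) t ht0)) ?_
  apply ENNReal.ofReal_le_ofReal
  -- bound the exponent
  have hM : ∑ q ∈ I ×ˢ J, p q.1 q.2 ≤ (m:ℝ) * k * d / n := by
    have h1 : ∑ q ∈ I ×ˢ J, p q.1 q.2 ≤ ∑ _q ∈ I ×ˢ J, d/(n:ℝ) := by
      refine Finset.sum_le_sum fun q _ => ?_
      rw [le_div_iff₀ hn0, mul_comm]
      exact hmax q.1 q.2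
    have h2 : ∑ _q ∈ I ×ˢ J, d/(n:ℝ) = (I.card : ℝ) * J.card * (d/n) := by
      rw [Finset.sum_const, Finset.card_product, nsmul_eq_mul]
      push_cast; ring
    have hmk2 : (I.card : ℝ) * (J.card : ℝ) = (m:ℝ) * (k:ℝ) := by
      rw [hm_def, hk_def]
      rcases le_total I.card J.card with h | h
      · rw [min_eq_left h, max_eq_right h]
      · rw [min_eq_right h, max_eq_left h]; ring
    refine (h1.trans_eq h2).trans (le_of_eq ?_)
    rw [hmk2]; ring
  have hM0 : 0 ≤ ∑ q ∈ I ×ˢ J, p q.1 q.2 :=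
    Finset.sum_nonneg fun q _ => entry_mean_nonneg A p hmeas h01 hmean q.1 q.2
  have hBpos : (0:ℝ) < B := by linarith
  have hexpt : Real.exp t = B * n / ((m:ℝ) * d) := Real.exp_log (by positivity)
  have hexpo : -t*(B*(k:ℝ)) + (Real.exp t - 1) * ∑ q ∈ I ×ˢ J, p q.1 q.2
      ≤ B*(k:ℝ)*(1 + Real.log m + Real.log d - Real.log B - Real.log n) := by
    have h3 : (Real.exp t - 1) * ∑ q ∈ I ×ˢ J, p q.1 q.2 ≤ Real.exp t * ((m:ℝ)*k*d/n) := by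
      have h4 : (Real.exp t - 1) * ∑ q ∈ I ×ˢ J, p q.1 q.2
          ≤ (Real.exp t - 1) * ((m:ℝ)*k*d/n) := by
        apply mul_le_mul_of_nonneg_left hM
        rw [hexpt]; linarith
      have h5 : (Real.exp t - 1) * ((m:ℝ)*k*d/n) ≤ Real.exp t * ((m:ℝ)*k*d/n) := by
        apply mul_le_mul_of_nonneg_right (by linarith) (by positivity)
      linarith
    have h6 : Real.exp t * ((m:ℝ)*k*d/n) = B * k := by
      rw [hexpt]; field_simp
    have h7 : t = Real.log B + Real.log n - Real.log m - Real.log d := by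
      rw [ht_def, Real.log_div (mul_pos hBpos hn0).ne' (mul_pos hm0 hd0).ne',
        Real.log_mul hBpos.ne' hn0.ne', Real.log_mul hm0.ne' hd0.ne']
      ring
    have h8 : (Real.exp t - 1) * ∑ q ∈ I ×ˢ J, p q.1 q.2 ≤ B * k := h3.trans (le_of_eq h6)
    calc -t*(B*(k:ℝ)) + (Real.exp t - 1) * ∑ q ∈ I ×ˢ J, p q.1 q.2
        ≤ -t*(B*(k:ℝ)) + B*(k:ℝ) := by linarith [h8]
      _ = B*(k:ℝ)*(1 + Real.log m + Real.log d - Real.log B - Real.log n) := by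
          rw [h7]; ring
  refine le_trans (Real.exp_le_exp.2 hexpo) ?_
  -- apply the per-pair exponent inequality
  have hcore := perpair_exp r d (m:ℝ) (k:ℝ) (n:ℝ) hr hu
    (by exact_mod_cast hm11) (le_of_lt hBm) (by exact_mod_cast hmk) (by exact_mod_cast hkn)
    hmd hd1
  have hchm : (n.choose m : ℝ) ≤ Real.exp ((m:ℝ) * (Real.log n + 1 - Real.log m)) :=
    choose_le_exp n m (by omega) hn1
  have hchk : (n.choose k : ℝ) ≤ Real.exp ((k:ℝ) * (Real.log n + 1 - Real.log k)) :=
    choose_le_exp n k (by omega) hn1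
  have hCC : (n.choose I.card : ℝ) * (n.choose J.card : ℝ) = (n.choose m : ℝ) * n.choose k := by
    rw [hm_def, hk_def]
    rcases le_total I.card J.card with h | h
    · rw [min_eq_left h, max_eq_right h]
    · rw [min_eq_right h, max_eq_left h]; ring
  have hch_pos : (0:ℝ) < (n.choose m : ℝ) * n.choose k := by
    have h1 : 0 < n.choose m := Nat.choose_pos (by omega)
    have h2 : 0 < n.choose k := Nat.choose_pos hkn
    positivity
  rw [hCC, le_div_iff₀ hch_pos]
  -- goal: exp(Bk(...)) * (C C) ≤ 2 n^{-2r}/(n+1)^2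
  have hstep : Real.exp (B*(k:ℝ)*(1 + Real.log m + Real.log d - Real.log B - Real.log n))
      * ((n.choose m : ℝ) * n.choose k)
      ≤ Real.exp (-((2*r+2)*Real.log n)) := by
    calc Real.exp (B*(k:ℝ)*(1 + Real.log m + Real.log d - Real.log B - Real.log n))
        * ((n.choose m : ℝ) * n.choose k)
        ≤ Real.exp (B*(k:ℝ)*(1 + Real.log m + Real.log d - Real.log B - Real.log n))
          * (Real.exp ((m:ℝ) * (Real.log n + 1 - Real.log m))
            * Real.exp ((k:ℝ) * (Real.log n + 1 - Real.log k))) := by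
          apply mul_le_mul_of_nonneg_left _ (Real.exp_pos _).le
          apply mul_le_mul hchm hchk (Nat.cast_nonneg _) (Real.exp_pos _).le
      _ = Real.exp ((m:ℝ) * (Real.log n + 1 - Real.log m)
            + (k:ℝ) * (Real.log n + 1 - Real.log k)
            + B*(k:ℝ)*(1 + Real.log m + Real.log d - Real.log B - Real.log n)) := by
          rw [← Real.exp_add, ← Real.exp_add]; ring_nf
      _ ≤ Real.exp (-((2*r+2)*Real.log n)) := Real.exp_le_exp.2 hcore
  refine le_trans hstep ?_
  -- exp(-(2r+2) log n) ≤ 2 n^{-2r} / (n+1)^2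
  have hn11 : (11:ℝ) ≤ (n:ℝ) := by
    have h11n : (11:ℕ) ≤ n := le_trans hm11 (le_trans hmk hkn)
    exact_mod_cast h11n
  have hsq : ((n:ℝ)+1)^2 ≤ 2 * (n:ℝ)^2 := sq_helper _ hn11
  have e2 : ((n:ℝ))^2 = Real.exp (2 * Real.log n) := by
    rw [two_mul, Real.exp_add, Real.exp_log hn0]; ring
  have e3 : (n:ℝ) ^ (-(2*r)) = Real.exp (-(2*r) * Real.log n) := by
    rw [Real.rpow_def_of_pos hn0]; ring_nf
  rw [le_div_iff₀ (by positivity : (0:ℝ) < ((n:ℝ)+1)^2)]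
  calc Real.exp (-((2*r+2)*Real.log n)) * ((n:ℝ)+1)^2
      ≤ Real.exp (-((2*r+2)*Real.log n)) * (2*(n:ℝ)^2) :=
        mul_le_mul_of_nonneg_left hsq (Real.exp_pos _).le
    _ = 2 * Real.exp (-((2*r+2)*Real.log n) + 2 * Real.log n) := by
        rw [e2, Real.exp_add]; ring
    _ = 2 * (n:ℝ) ^ (-(2*r)) := by
        rw [e3]; congr 1; ring

end main

lemma sum_finset_card (n : ℕ) (f : ℕ → ENNReal) :
    ∑ I : Finset (Fin n), f I.card
      = ∑ k ∈ Finset.range (n+1), (n.choose k : ENNReal) * f k := by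
  classical
  rw [← Finset.sum_fiberwise_of_maps_to' (g := Finset.card) (t := Finset.range (n+1))
    (fun I _ => Finset.mem_range.2 (Nat.lt_succ_of_le
      (le_trans (Finset.card_le_univ I) (Fintype.card_fin n).le))) f]
  refine Finset.sum_congr rfl fun k _ => ?_
  rw [Finset.sum_const, nsmul_eq_mul]
  congr 1
  have h1 : (Finset.univ.filter fun I : Finset (Fin n) => I.card = k)
      = Finset.powersetCard k (Finset.univ : Finset (Fin n)) := by
    rw [Finset.powersetCard_eq_filter, Finset.powerset_univ]
  rw [h1, Finset.card_powersetCard, Finset.card_univ, Fintype.card_fin]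

lemma sum_inv_choose (n : ℕ) (c : ℝ) :
    ∑ I : Finset (Fin n), ENNReal.ofReal (c / (n.choose I.card))
      = (n+1) * ENNReal.ofReal c := by
  rw [sum_finset_card n (fun k => ENNReal.ofReal (c / (n.choose k)))]
  have hterm : ∀ k ∈ Finset.range (n+1),
      (n.choose k : ENNReal) * ENNReal.ofReal (c / (n.choose k)) = ENNReal.ofReal c := by
    intro k hk
    have hkn : k ≤ n := Nat.lt_succ_iff.1 (Finset.mem_range.1 hk)
    have hpos : (0:ℝ) < (n.choose k : ℝ) := by exact_mod_cast Nat.choose_pos hkn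
    rw [← ENNReal.ofReal_natCast (n.choose k), ← ENNReal.ofReal_mul (Nat.cast_nonneg _)]
    congr 1
    rw [mul_comm, div_mul_cancel₀ _ hpos.ne']
  rw [Finset.sum_congr rfl hterm, Finset.sum_const, Finset.card_range, nsmul_eq_mul]
  push_cast
  ring

/-- Decomposition of the residual, directed graphs (Theorem 6.1). -/
theorem stmt13 (n : ℕ) (Ω : Type*) [MeasureSpace Ω] [IsProbabilityMeasure (ℙ : Measure Ω)]
    (A : Ω → Matrix (Fin n) (Fin n) ℝ) (p : Matrix (Fin n) (Fin n) ℝ) (d r : ℝ)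
    (hmeas : ∀ i j, Measurable fun ω => A ω i j)
    (h01 : ∀ ω i j, A ω i j = 0 ∨ A ω i j = 1)
    (hindep : iIndepFun
      (fun (q : Fin n × Fin n) ω => A ω q.1 q.2) ℙ)
    (hmean : ∀ i j, (∫ ω, A ω i j) = p i j)
    (hd : Real.exp 1 ≤ d)
    (hmax : ∀ i j, (n : ℝ) * p i j ≤ d)
    (hr : 1 ≤ r) :
    ENNReal.ofReal (1 - 2 * (n : ℝ) ^ (-(2 * r))) ≤
      ℙ {ω | ∀ I J : Finset (Fin n),
        min (I.card : ℝ) (J.card : ℝ) ≤ n / d →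
        ∃ R C : Finset (Fin n × Fin n), Disjoint R C ∧ R ∪ C = I ×ˢ J ∧
          (∀ i, (R.filter fun q => q.1 = i).card ≤ min I.card J.card) ∧
          (∀ j, (C.filter fun q => q.2 = j).card ≤ min I.card J.card) ∧
          (∀ i, ((R.filter fun q => q.1 = i ∧ A ω q.1 q.2 = 1).card : ℝ) ≤
            10 * r * Real.log d) ∧
          (∀ j, ((C.filter fun q => q.2 = j ∧ A ω q.1 q.2 = 1).card : ℝ) ≤
            10 * r * Real.log d)} := by
  classical
  set B : ℝ := 10 * r * Real.log d with hB_def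
  have hu : 1 ≤ Real.log d := by
    calc (1:ℝ) = Real.log (Real.exp 1) := (Real.log_exp 1).symm
      _ ≤ Real.log d := Real.log_le_log (Real.exp_pos 1) hd
  have hB0 : (0:ℝ) ≤ B := by rw [hB_def]; nlinarith
  -- the good event
  set E : Set Ω := {ω | ∀ I J : Finset (Fin n),
      min (I.card:ℝ) (J.card:ℝ) ≤ n/d →
      ∑ i ∈ I, ∑ j ∈ J, A ω i j ≤ B * ((max I.card J.card : ℕ):ℝ)} with hE_def
  have hEmeas : MeasurableSet E := by
    have hEeq : E = ⋂ (I : Finset (Fin n)), ⋂ (J : Finset (Fin n)),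
        {ω | min (I.card:ℝ) (J.card:ℝ) ≤ n/d →
          ∑ i ∈ I, ∑ j ∈ J, A ω i j ≤ B * ((max I.card J.card : ℕ):ℝ)} := by
      ext ω
      simp only [hE_def, Set.mem_setOf_eq, Set.mem_iInter]
    rw [hEeq]
    refine MeasurableSet.iInter fun I => MeasurableSet.iInter fun J => ?_
    by_cases h : min (I.card:ℝ) (J.card:ℝ) ≤ n/d
    · have : {ω : Ω | min (I.card:ℝ) (J.card:ℝ) ≤ n/d →
          ∑ i ∈ I, ∑ j ∈ J, A ω i j ≤ B * ((max I.card J.card : ℕ):ℝ)}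
          = {ω : Ω | ∑ i ∈ I, ∑ j ∈ J, A ω i j ≤ B * ((max I.card J.card : ℕ):ℝ)} := by
        ext ω; simp [h]
      rw [this]
      have hm : Measurable fun ω => ∑ i ∈ I, ∑ j ∈ J, A ω i j := by
        apply Finset.measurable_sum
        intro i _
        apply Finset.measurable_sum
        intro j _
        exact hmeas i j
      exact measurableSet_le hm measurable_const
    · have : {ω : Ω | min (I.card:ℝ) (J.card:ℝ) ≤ n/d →
          ∑ i ∈ I, ∑ j ∈ J, A ω i j ≤ B * ((max I.card J.card : ℕ):ℝ)} = Set.univ := by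
        ext ω; simp [h]
      rw [this]
      exact MeasurableSet.univ
  -- E is contained in the target event
  have hEsub : E ⊆ {ω | ∀ I J : Finset (Fin n),
        min (I.card : ℝ) (J.card : ℝ) ≤ n / d →
        ∃ R C : Finset (Fin n × Fin n), Disjoint R C ∧ R ∪ C = I ×ˢ J ∧
          (∀ i, (R.filter fun q => q.1 = i).card ≤ min I.card J.card) ∧
          (∀ j, (C.filter fun q => q.2 = j).card ≤ min I.card J.card) ∧
          (∀ i, ((R.filter fun q => q.1 = i ∧ A ω q.1 q.2 = 1).card : ℝ) ≤
            10 * r * Real.log d) ∧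
          (∀ j, ((C.filter fun q => q.2 = j ∧ A ω q.1 q.2 = 1).card : ℝ) ≤
            10 * r * Real.log d)} := by
    intro ω hω
    intro I J hIJ
    have He : ∀ I' ⊆ I, ∀ J' ⊆ J, (∑ i ∈ I', ∑ j ∈ J', A ω i j)
        ≤ B * ((max I'.card J'.card : ℕ) : ℝ) := by
      intro I' hI' J' hJ'
      refine hω I' J' ?_
      refine le_trans ?_ hIJ
      have h1 : (I'.card:ℝ) ≤ I.card := by exact_mod_cast Finset.card_le_card hI'
      have h2 : (J'.card:ℝ) ≤ J.card := by exact_mod_cast Finset.card_le_card hJ'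
      exact min_le_min h1 h2
    obtain ⟨R, C, h1, h2, h3, h4, h5, h6⟩ :=
      peel (A ω) B hB0 (h01 ω) (I.card + J.card) I J le_rfl
        (min I.card J.card) le_rfl He
    exact ⟨R, C, h1, h2, h3, h4, h5, h6⟩
  -- complement is covered by bad sets
  set bad : Finset (Fin n) → Finset (Fin n) → Set Ω := fun I J =>
    {ω | min (I.card : ℝ) (J.card : ℝ) ≤ n / d ∧
      B * ((max I.card J.card : ℕ) : ℝ) < ∑ i ∈ I, ∑ j ∈ J, A ω i j} with hbad_def
  have hcompl : Eᶜ ⊆ ⋃ P ∈ (Finset.univ : Finset (Finset (Fin n) × Finset (Fin n))),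
      bad P.1 P.2 := by
    intro ω hω
    simp only [hE_def, Set.mem_compl_iff, Set.mem_setOf_eq] at hω
    push_neg at hω
    obtain ⟨I, J, hmin, hgt⟩ := hω
    refine Set.mem_biUnion (Finset.mem_univ ((I, J) : Finset (Fin n) × Finset (Fin n))) ?_
    exact ⟨hmin, hgt⟩
  -- probability of the complement
  set β : ℝ := 2 * (n:ℝ) ^ (-(2*r)) / ((n:ℝ)+1)^2 with hβ_def
  have hβ0 : 0 ≤ β := by
    rw [hβ_def]
    have := Real.rpow_nonneg (Nat.cast_nonneg n) (-(2*r))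
    positivity
  have hEc : ℙ Eᶜ ≤ ENNReal.ofReal (2 * (n:ℝ) ^ (-(2*r))) := by
    refine le_trans (measure_mono hcompl) ?_
    refine le_trans (measure_biUnion_finset_le _ _) ?_
    have hstep : ∀ P ∈ (Finset.univ : Finset (Finset (Fin n) × Finset (Fin n))),
        ℙ (bad P.1 P.2) ≤ ENNReal.ofReal (β
          / ((n.choose P.1.card : ℝ) * (n.choose P.2.card : ℝ))) := by
      intro P _
      exact pair_bound A p d r hmeas h01 hindep hmean hd hmax hr P.1 P.2
    refine le_trans (Finset.sum_le_sum hstep) ?_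
    rw [Fintype.sum_prod_type]
    have hinner : ∀ I : Finset (Fin n),
        ∑ J : Finset (Fin n), ENNReal.ofReal (β
          / ((n.choose I.card : ℝ) * (n.choose J.card : ℝ)))
          = ((n:ENNReal)+1) * ENNReal.ofReal (β / (n.choose I.card : ℝ)) := by
      intro I
      have heq : ∀ J : Finset (Fin n), β / ((n.choose I.card : ℝ) * (n.choose J.card : ℝ))
          = (β / (n.choose I.card : ℝ)) / (n.choose J.card : ℝ) := fun J =>
        (div_div β (n.choose I.card : ℝ) (n.choose J.card : ℝ)).symm
      calc ∑ J : Finset (Fin n), ENNReal.ofReal (β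
            / ((n.choose I.card : ℝ) * (n.choose J.card : ℝ)))
          = ∑ J : Finset (Fin n), ENNReal.ofReal ((β / (n.choose I.card : ℝ))
            / (n.choose J.card : ℝ)) := by
            refine Finset.sum_congr rfl fun J _ => ?_
            rw [heq J]
        _ = ((n:ENNReal)+1) * ENNReal.ofReal (β / (n.choose I.card : ℝ)) := by
            rw [sum_inv_choose n (β / (n.choose I.card : ℝ))]
    calc ∑ I : Finset (Fin n), ∑ J : Finset (Fin n), ENNReal.ofReal (β
          / ((n.choose I.card : ℝ) * (n.choose J.card : ℝ)))
        = ∑ I : Finset (Fin n), ((n:ENNReal)+1) * ENNReal.ofReal (β / (n.choose I.card : ℝ)) := by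
          exact Finset.sum_congr rfl fun I _ => hinner I
      _ = ((n:ENNReal)+1) * (((n:ENNReal)+1) * ENNReal.ofReal β) := by
          rw [← Finset.mul_sum, sum_inv_choose n β]
      _ ≤ ENNReal.ofReal (2 * (n:ℝ) ^ (-(2*r))) := by
          have hcast : ((n:ENNReal)+1) = ENNReal.ofReal ((n:ℝ)+1) := by
            rw [ENNReal.ofReal_add (Nat.cast_nonneg n) zero_le_one]
            rw [ENNReal.ofReal_natCast, ENNReal.ofReal_one]
          rw [hcast, ← ENNReal.ofReal_mul (by positivity), ← ENNReal.ofReal_mul (by positivity)]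
          apply ENNReal.ofReal_le_ofReal
          refine le_of_eq ?_
          rw [hβ_def]
          have hne : ((n:ℝ)+1)^2 ≠ 0 := by positivity
          field_simp
  -- conclude
  have hE1 : ℙ E = 1 - ℙ Eᶜ := by
    have h := prob_compl_eq_one_sub (μ := ℙ) hEmeas.compl
    rwa [compl_compl] at h
  calc ENNReal.ofReal (1 - 2 * (n : ℝ) ^ (-(2 * r)))
      = 1 - ENNReal.ofReal (2 * (n:ℝ) ^ (-(2*r))) := by
        rw [ENNReal.ofReal_sub _ (mul_nonneg (by norm_num)
          (Real.rpow_nonneg (Nat.cast_nonneg n) _)), ENNReal.ofReal_one]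
    _ ≤ 1 - ℙ Eᶜ := tsub_le_tsub_left hEc 1
    _ = ℙ E := hE1.symm
    _ ≤ ℙ _ := measure_mono hEsub
end

section
/- Let A be an n×n symmetric random matrix whose entries take values in {0,1} and are jointly independent on and above the diagonal, with E A = (p_ij), and let d ≥ e satisfy max_{i,j} n·p_ij ≤ d. Then for any r ≥ 1, with probability at least 1 − 2·n^{−2r}, the following holds simultaneously for all index sets: every subset I×J of [n]×[n] with |I| = m, |J| = k and min(m,k) ≤ n/d can be partitioned into two disjoint subsets ℛ and 𝒞 of [n]×[n] such that (i) for every i ∈ [n], |{j : (i,j) ∈ ℛ}| ≤ 2·min(m,k), and for every j ∈ [n], |{i : (i,j) ∈ 𝒞}| ≤ 2·min(m,k); and (ii) every row of the matrix A_ℛ has at most 20·r·log(d) entries equal to 1, and every column of the matrix A_𝒞 has at most 20·r·log(d) entries equal to 1. -/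
open MeasureTheory ProbabilityTheory

open scoped ENNReal

namespace Stmt14Aux


open Finset


lemma pow_self_le (u : ℕ) : (u:ℝ)^u ≤ Real.exp 1 ^ u * u.factorial := by
  induction u with
  | zero => simp
  | succ u ih =>
    rcases Nat.eq_zero_or_pos u with hu | hu
    · subst hu; simpa using Real.one_le_exp (by norm_num)
    have hu0 : (0:ℝ) < u := by exact_mod_cast hu
    have h1 : ((u+1:ℕ):ℝ)^u ≤ Real.exp 1 * (u:ℝ)^u := by
      have h2 : ((u+1:ℕ):ℝ) ≤ (u:ℝ) * Real.exp (1/u) := by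
        have := Real.add_one_le_exp (1/(u:ℝ))
        push_cast
        calc (u:ℝ) + 1 = (u:ℝ) * (1/u + 1) := by field_simp; ring
        _ ≤ (u:ℝ) * Real.exp (1/u) := by
            apply mul_le_mul_of_nonneg_left _ hu0.le
            linarith [Real.add_one_le_exp (1/(u:ℝ))]
      calc ((u+1:ℕ):ℝ)^u ≤ ((u:ℝ) * Real.exp (1/u))^u := by
            apply pow_le_pow_left₀ (by positivity) h2
      _ = (u:ℝ)^u * Real.exp (1/u) ^ u := mul_pow _ _ _
      _ = (u:ℝ)^u * Real.exp 1 := by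
            rw [← Real.exp_nat_mul]
            field_simp
      _ = Real.exp 1 * (u:ℝ)^u := mul_comm _ _
    have key : ((u+1:ℕ):ℝ)^(u+1) ≤ Real.exp 1 ^ (u+1) * (u+1).factorial := by
      have e1 : ((u+1:ℕ):ℝ)^(u+1) = ((u+1:ℕ):ℝ) * ((u+1:ℕ):ℝ)^u := by ring
      rw [e1]
      calc ((u+1:ℕ):ℝ) * ((u+1:ℕ):ℝ)^u ≤ ((u+1:ℕ):ℝ) * (Real.exp 1 * (u:ℝ)^u) := by
            apply mul_le_mul_of_nonneg_left h1 (by positivity)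
      _ ≤ ((u+1:ℕ):ℝ) * (Real.exp 1 * (Real.exp 1 ^ u * u.factorial)) := by
            apply mul_le_mul_of_nonneg_left _ (by positivity)
            exact mul_le_mul_of_nonneg_left ih (Real.exp_pos 1).le
      _ = Real.exp 1 ^ (u+1) * (((u+1:ℕ):ℝ) * u.factorial) := by ring
      _ = Real.exp 1 ^ (u+1) * (u+1).factorial := by
            rw [Nat.factorial_succ]; push_cast; ring
    exact_mod_cast key

lemma choose_le_epow (N u : ℕ) {x : ℝ} (hN : (N:ℝ) ≤ x) (hx : 0 ≤ x) :
    (N.choose u : ℝ) ≤ (Real.exp 1 * x / u)^u := by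
  rcases Nat.eq_zero_or_pos u with hu | hu
  · subst hu; simp
  have hu0 : (0:ℝ) < u := by exact_mod_cast hu
  have h1 : (N.choose u : ℝ) ≤ (N:ℝ)^u / u.factorial := Nat.choose_le_pow_div u N
  have h2 : (N:ℝ)^u ≤ x^u := pow_le_pow_left₀ (by positivity) hN u
  have h3 : (0:ℝ) < u.factorial := by exact_mod_cast u.factorial_pos
  have h4 : (u:ℝ)^u ≤ Real.exp 1 ^ u * u.factorial := pow_self_le u
  have h5 : (Real.exp 1 * x / u)^u = Real.exp 1 ^ u * x^u / (u:ℝ)^u := by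
    rw [div_pow, mul_pow]
  rw [h5, le_div_iff₀ (by positivity)]
  have h6 : (N.choose u : ℝ) * (u:ℝ)^u ≤ ((N:ℝ)^u / u.factorial) * (Real.exp 1 ^ u * u.factorial) := by
    apply mul_le_mul (by linarith) h4 (by positivity) (by positivity)
  calc (N.choose u : ℝ) * (u:ℝ)^u ≤ ((N:ℝ)^u / u.factorial) * (Real.exp 1 ^ u * u.factorial) := h6
  _ = Real.exp 1 ^ u * (N:ℝ)^u := by field_simp
  _ ≤ Real.exp 1 ^ u * x^u := by
      apply mul_le_mul_of_nonneg_left h2 (by positivity)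

lemma log_two_le : Real.log 2 ≤ 0.7 := by
  rw [← Real.log_exp 0.7]
  apply Real.log_le_log (by norm_num)
  have h : Real.exp 0.7 = Real.exp 0.175 ^ (4:ℕ) := by
    rw [← Real.exp_nat_mul]; norm_num
  have h2 := Real.quadratic_le_exp_of_nonneg (by norm_num : (0:ℝ) ≤ 0.175)
  rw [h]
  have h3 : ((1.1903:ℝ))^(4:ℕ) ≤ Real.exp 0.175 ^ (4:ℕ) :=
    pow_le_pow_left₀ (by norm_num) (by nlinarith) 4
  nlinarith [h3]

lemma log_four_le : Real.log 4 ≤ 1.4 := by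
  have : (4:ℝ) = 2 * 2 := by norm_num
  rw [this, Real.log_mul (by norm_num) (by norm_num)]
  linarith [log_two_le]

lemma log21_ge : (3:ℝ) ≤ Real.log 21 := by
  rw [← Real.log_exp 3]
  apply Real.log_le_log (Real.exp_pos 3)
  have h : Real.exp 3 = Real.exp 1 ^ (3:ℕ) := by
    rw [← Real.exp_nat_mul]; norm_num
  rw [h]
  have h3 : Real.exp 1 ^ (3:ℕ) ≤ ((2.7182818286:ℝ))^(3:ℕ) :=
    pow_le_pow_left₀ (Real.exp_pos 1).le Real.exp_one_lt_d9.le 3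
  nlinarith [h3]

lemma log4223_ge : (0.5:ℝ) ≤ Real.log (42/23) := by
  rw [← Real.log_exp 0.5]
  apply Real.log_le_log (Real.exp_pos _)
  have h : Real.exp 0.5 * Real.exp 0.5 = Real.exp 1 := by
    rw [← Real.exp_add]; norm_num
  nlinarith [Real.exp_one_lt_d9, Real.exp_pos (0.5:ℝ)]

lemma log_le_half {x : ℝ} (hx : 0 < x) : Real.log x ≤ x / 2 := by
  have hs : (0:ℝ) < Real.sqrt x := Real.sqrt_pos.2 hx
  have h1 : Real.log (Real.sqrt x) = Real.log x / 2 := Real.log_sqrt hx.le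
  have h2 : Real.log (Real.sqrt x) ≤ Real.sqrt x - 1 := Real.log_le_sub_one_of_pos hs
  have h3 : Real.sqrt x ^ 2 = x := Real.sq_sqrt hx.le
  nlinarith [sq_nonneg (Real.sqrt x - 2)]





set_option maxHeartbeats 800000 in
lemma key_ineq {n a h t : ℕ} {d r : ℝ}
    (hd : Real.exp 1 ≤ d) (hr : 1 ≤ r)
    (ht21 : 21 ≤ t) (htT : 20*r*Real.log d < t)
    (hta : t ≤ a) (had : (a:ℝ)*d ≤ n)
    (hah : a ≤ 2*h) (hha : h ≤ a) (h11 : 11 ≤ h) (h4223 : 42*h ≤ 23*a) :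
    (a:ℝ) * Real.log (Real.exp 1 * n / a) + (h:ℝ) * Real.log (Real.exp 1 * n / h)
      + (2*r+1) * Real.log n
      ≤ ((t:ℝ)*h/2) * Real.log ((t:ℝ)*n/(2*Real.exp 1*a*d)) := by
  have hE0 : (0:ℝ) < Real.exp 1 := Real.exp_pos 1
  have hE1 : (1:ℝ) ≤ Real.exp 1 := Real.one_le_exp (by norm_num)
  have hd0 : (0:ℝ) < d := lt_of_lt_of_le hE0 hd
  have hd1 : (1:ℝ) ≤ d := le_trans hE1 hd
  have hlogd : (1:ℝ) ≤ Real.log d := by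
    rw [← Real.log_exp 1]; exact Real.log_le_log (Real.exp_pos 1) hd
  have ha0 : (0:ℝ) < a := by
    have : 0 < a := by omega
    exact_mod_cast this
  have hh0 : (0:ℝ) < h := by
    have : 0 < h := by omega
    exact_mod_cast this
  have ht0 : (0:ℝ) < t := by
    have : 0 < t := by omega
    exact_mod_cast this
  have ht21' : (21:ℝ) ≤ t := by exact_mod_cast ht21
  have ha21 : (21:ℝ) ≤ a := by
    have : 21 ≤ a := le_trans ht21 hta
    exact_mod_cast this
  have hh11 : (11:ℝ) ≤ h := by exact_mod_cast h11
  have hta' : (t:ℝ) ≤ a := by exact_mod_cast hta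
  have hah' : (a:ℝ) ≤ 2*h := by exact_mod_cast hah
  have hha' : (h:ℝ) ≤ a := by exact_mod_cast hha
  have h4223' : 42*(h:ℝ) ≤ 23*a := by exact_mod_cast h4223
  have hr0 : (0:ℝ) < r := lt_of_lt_of_le one_pos hr
  have hnad : (21:ℝ) * Real.exp 1 ≤ n := by
    calc (21:ℝ) * Real.exp 1 ≤ (a:ℝ) * d := by
          apply mul_le_mul ha21 hd (le_of_lt hE0) ha0.le
    _ ≤ n := had
  have hn0 : (0:ℝ) < n := lt_of_lt_of_le (by positivity) hnad
  have han : (a:ℝ) ≤ n := by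
    calc (a:ℝ) = a * 1 := by ring
    _ ≤ a * d := by exact mul_le_mul_of_nonneg_left hd1 ha0.le
    _ ≤ n := had
  -- log n ≥ 4
  have hlogn4 : (4:ℝ) ≤ Real.log n := by
    have h1 : Real.log ((21:ℝ) * Real.exp 1) ≤ Real.log n := Real.log_le_log (by positivity) hnad
    rw [Real.log_mul (by norm_num) (ne_of_gt hE0), Real.log_exp] at h1
    linarith [log21_ge]
  have hlogn0 : (0:ℝ) < Real.log n := by linarith
  -- notation
  set G := Real.log (Real.exp 1 * n / h) with hG
  set L1 := Real.log (Real.exp 1 * n / a) with hL1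
  set L := Real.log ((t:ℝ)*n/(2*Real.exp 1*a*d)) with hL
  -- G equation
  have hGeq : G = 1 + Real.log n - Real.log h := by
    rw [hG, Real.log_div (by positivity) (ne_of_gt hh0), Real.log_mul (ne_of_gt hE0) (ne_of_gt hn0),
      Real.log_exp]
  have hL1eq : L1 = 1 + Real.log n - Real.log a := by
    rw [hL1, Real.log_div (by positivity) (ne_of_gt ha0), Real.log_mul (ne_of_gt hE0) (ne_of_gt hn0),
      Real.log_exp]
  -- L1 ≤ G, L1 ≥ 0
  have hL1G : L1 ≤ G := by
    rw [hGeq, hL1eq]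
    have := Real.log_le_log hh0 hha'
    linarith
  have hL10 : 0 ≤ L1 := by
    rw [hL1]
    apply Real.log_nonneg
    rw [le_div_iff₀ ha0]
    calc (1:ℝ) * a = a := by ring
    _ ≤ n := han
    _ ≤ Real.exp 1 * n := by nlinarith [mul_le_mul_of_nonneg_right hE1 hn0.le]
  have hG0 : 0 ≤ G := le_trans hL10 hL1G
  -- G ≥ 1.5 + log d
  have hG15 : 1.5 + Real.log d ≤ G := by
    have key : (42/23:ℝ) * (Real.exp 1 * d) ≤ Real.exp 1 * n / h := by
      rw [le_div_iff₀ hh0]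
      have h1 : (42/23:ℝ) * (Real.exp 1 * d) * h = Real.exp 1 * d * ((42/23) * h) := by ring
      have h2 : (42/23:ℝ) * h ≤ a := by linarith
      calc (42/23:ℝ) * (Real.exp 1 * d) * h = Real.exp 1 * d * ((42/23) * h) := by ring
      _ ≤ Real.exp 1 * d * a := by
          apply mul_le_mul_of_nonneg_left h2 (by positivity)
      _ = Real.exp 1 * (a * d) := by ring
      _ ≤ Real.exp 1 * n := mul_le_mul_of_nonneg_left had hE0.le
    have h3 : Real.log ((42/23:ℝ) * (Real.exp 1 * d)) ≤ G := by
      rw [hG]; exact Real.log_le_log (by positivity) key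
    rw [Real.log_mul (by norm_num) (by positivity), Real.log_mul (ne_of_gt hE0) (ne_of_gt hd0),
      Real.log_exp] at h3
    linarith [log4223_ge]
  -- L lower bound: L ≥ G + log t - log d - 3.4
  have hlogt3 : (3:ℝ) ≤ Real.log t := by
    calc (3:ℝ) ≤ Real.log 21 := log21_ge
    _ ≤ Real.log t := Real.log_le_log (by norm_num) ht21'
  have hLlow : G + Real.log t - Real.log d - 3.4 ≤ L := by
    have key : (t:ℝ)*n/(4*Real.exp 1*h*d) ≤ (t:ℝ)*n/(2*Real.exp 1*a*d) := by
      have e0 : (a:ℝ)*d ≤ (2*h)*d := mul_le_mul_of_nonneg_right hah' hd0.le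
      have e1 : 2*Real.exp 1*(a*d) ≤ 2*Real.exp 1*((2*h)*d) :=
        mul_le_mul_of_nonneg_left e0 (by positivity)
      apply div_le_div_of_nonneg_left (by positivity) (by positivity)
      linarith [e1]
    have h1 : Real.log ((t:ℝ)*n/(4*Real.exp 1*h*d)) ≤ L := by
      rw [hL]; exact Real.log_le_log (by positivity) key
    have h2 : Real.log ((t:ℝ)*n/(4*Real.exp 1*h*d))
        = Real.log t + Real.log n - (Real.log 4 + 1 + Real.log h + Real.log d) := by
      rw [Real.log_div (by positivity) (by positivity), Real.log_mul (ne_of_gt ht0) (ne_of_gt hn0),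
        Real.log_mul (by positivity) (ne_of_gt hd0), Real.log_mul (by positivity) (ne_of_gt hh0),
        Real.log_mul (by norm_num) (ne_of_gt hE0), Real.log_exp]
    have h4 : Real.log 4 ≤ 1.4 := log_four_le
    rw [h2] at h1
    rw [hGeq]
    linarith
  set u' := G - Real.log d - 1.5 with hu'
  have hu'0 : 0 ≤ u' := by rw [hu']; linarith
  have hLu : u' + 1.1 ≤ L := by rw [hu']; linarith
  -- h > 10 r log d
  have hrh : 10*r*Real.log d < h := by linarith
  -- reduction 1: bound LHS by 3hG + 3 r log n
  have hred : (a:ℝ)*L1 + h*G + (2*r+1)*Real.log n ≤ 3*h*G + 3*r*Real.log n := by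
    have h1 : (a:ℝ)*L1 ≤ 2*(h:ℝ)*L1 := mul_le_mul_of_nonneg_right hah' hL10
    have h2 : 2*(h:ℝ)*L1 ≤ 2*(h:ℝ)*G := mul_le_mul_of_nonneg_left hL1G (by positivity)
    have h3 : 0 ≤ (r - 1) * Real.log n := mul_nonneg (by linarith) hlogn0.le
    linarith [h1, h2, h3]
  -- main: 3hG + 3r log n ≤ (th/2)(u'+1.1)
  have h20ld : 20*Real.log d ≤ (t:ℝ) := by
    have m1 : 0 ≤ 20*((r - 1) * Real.log d) := by
      apply mul_nonneg (by norm_num)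
      exact mul_nonneg (by linarith) (by linarith)
    linarith
  have e1 : 20*(r*Real.log d)*h ≤ (t:ℝ)*h := by
    have := mul_le_mul_of_nonneg_right htT.le hh0.le
    linarith [this]
  have hmain : 3*(h:ℝ)*G + 3*r*Real.log n ≤ ((t:ℝ)*h/2) * (u' + 1.1) := by
    have hGu : G = u' + Real.log d + 1.5 := by rw [hu']; ring
    have hld015 : 3*(h:ℝ)*Real.log d ≤ 0.15*((t:ℝ)*h) := by
      have := mul_le_mul_of_nonneg_right h20ld hh0.le
      linarith [this]
    have h45 : 4.5*(h:ℝ) ≤ 0.25*((t:ℝ)*h) := by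
      have := mul_le_mul_of_nonneg_right ht21' hh0.le
      linarith [this]
    have h3u : 3*(h:ℝ)*u' ≤ ((t:ℝ)/2)*h*u' := by
      have h0 : (0:ℝ) ≤ ((t:ℝ)/2 - 3) * (h * u') :=
        mul_nonneg (by linarith) (mul_nonneg hh0.le hu'0)
      linarith [h0]
    have h75 : 10.5*(h:ℝ)*u' ≤ ((t:ℝ)/2)*h*u' := by
      have h0 : (0:ℝ) ≤ ((t:ℝ)/2 - 10.5) * (h * u') :=
        mul_nonneg (by linarith) (mul_nonneg hh0.le hu'0)
      linarith [h0]
    have hsplit : ((t:ℝ)*h/2) * (u' + 1.1) = ((t:ℝ)/2)*h*u' + 0.55*((t:ℝ)*h) := by ring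
    rw [hsplit, hGu]
    rcases le_or_gt (Real.log n) (h:ℝ) with hcase | hcase
    · -- case A
      have a1 : r*Real.log n ≤ r*h := mul_le_mul_of_nonneg_left hcase hr0.le
      have a2 : 20*r*h ≤ (t:ℝ)*h := by
        have m2 : 0 ≤ 20*(r*(Real.log d - 1)) := by
          apply mul_nonneg (by norm_num)
          exact mul_nonneg (by linarith) (by linarith)
        have e2 : 20*r ≤ (t:ℝ) := by linarith
        linarith [mul_le_mul_of_nonneg_right e2 hh0.le]
      linarith [h3u, hld015, h45, a1, a2]
    · -- case B
      have hloghn : Real.log h ≤ Real.log n / 2 := by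
        calc Real.log h ≤ Real.log (Real.log n) := Real.log_le_log hh0 hcase.le
        _ ≤ Real.log n / 2 := log_le_half hlogn0
      have hGB : 1 + 0.5*Real.log n ≤ G := by rw [hGeq]; linarith
      rcases le_or_gt (0.375 * Real.log n) (Real.log d) with hcase2 | hcase2
      · -- B-i
        have b1 : 3*(r*h)*(0.375*Real.log n) ≤ 3*(r*h)*Real.log d :=
          mul_le_mul_of_nonneg_left hcase2 (by positivity)
        have b2 : 3*r*Real.log n*1 ≤ 3*r*Real.log n*(0.375*h) := by
          apply mul_le_mul_of_nonneg_left (by linarith) (by positivity)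
        linarith [h3u, hld015, h45, b1, b2, e1]
      · -- B-ii
        have hu'B : 0.5*Real.log n - Real.log d - 0.5 ≤ u' := by rw [hu']; linarith
        have f1 : 7.5*(h:ℝ)*(0.5*Real.log n - Real.log d - 0.5) ≤ 7.5*(h:ℝ)*u' :=
          mul_le_mul_of_nonneg_left hu'B (by positivity)
        have f3 : 1*((h:ℝ)*Real.log d) ≤ r*((h:ℝ)*Real.log d) :=
          mul_le_mul_of_nonneg_right hr (mul_nonneg hh0.le (by linarith))
        have f4 : 3*r*Real.log n ≤ 0.3*(h:ℝ)*Real.log n := by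
          have m3 : 0 ≤ 10*(r*(Real.log d - 1)) := by
            apply mul_nonneg (by norm_num)
            exact mul_nonneg (by linarith) (by linarith)
          have g4 : 10*r ≤ (h:ℝ) := by linarith
          linarith [mul_le_mul_of_nonneg_right g4 hlogn0.le]
        have f5 : 4*(h:ℝ) ≤ (h:ℝ)*Real.log n := by
          linarith [mul_le_mul_of_nonneg_left hlogn4 hh0.le]
        have f6 : (h:ℝ) ≤ (h:ℝ)*Real.log d := by
          linarith [mul_le_mul_of_nonneg_left hlogd hh0.le]
        linarith [h3u, h75, f1, f3, f4, f5, f6, e1]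
  calc (a:ℝ)*L1 + h*G + (2*r+1)*Real.log n ≤ 3*h*G + 3*r*Real.log n := hred
  _ ≤ ((t:ℝ)*h/2) * (u' + 1.1) := hmain
  _ ≤ ((t:ℝ)*h/2) * L := by
      apply mul_le_mul_of_nonneg_left hLu (by positivity)

set_option maxHeartbeats 1000000 in
lemma main_numeric {n : ℕ} {d r : ℝ} (hd : Real.exp 1 ≤ d) (hr : 1 ≤ r)
    {t a h u : ℕ} (ht21 : 21 ≤ t) (htT : 20*r*Real.log d < t)
    (hh : h = a/2 + 1) (hu : u = (t*h+1)/2)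
    (hta : t ≤ a) (had : (a:ℝ) * d ≤ n) :
    (n.choose a : ℝ) * (n.choose h) * ((a*h).choose u) * (d/n)^u
      ≤ ((n:ℝ) ^ ((2:ℝ)*r+1))⁻¹ := by
  have hE0 : (0:ℝ) < Real.exp 1 := Real.exp_pos 1
  have hE1 : (1:ℝ) ≤ Real.exp 1 := Real.one_le_exp (by norm_num)
  have hE27 : Real.exp 1 ≤ 2.7182818286 := Real.exp_one_lt_d9.le
  have hd0 : (0:ℝ) < d := lt_of_lt_of_le hE0 hd
  have hd1 : (1:ℝ) ≤ d := le_trans hE1 hd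
  -- nat facts
  have hah : a ≤ 2*h := by omega
  have hha : h ≤ a := by omega
  have h11 : 11 ≤ h := by omega
  have h4223 : 42*h ≤ 23*a := by omega
  have hth1 : 1 ≤ t*h := Nat.mul_pos (by omega) (by omega)
  have hthu : t*h ≤ 2*u := by omega
  have hu1 : 1 ≤ u := by omega
  -- real casts
  have ha0 : (0:ℝ) < a := by exact_mod_cast (by omega : 0 < a)
  have hh0 : (0:ℝ) < h := by exact_mod_cast (by omega : 0 < h)
  have ht0 : (0:ℝ) < t := by exact_mod_cast (by omega : 0 < t)
  have hu0 : (0:ℝ) < u := by exact_mod_cast (by omega : 0 < u)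
  have ht21' : (21:ℝ) ≤ t := by exact_mod_cast ht21
  have hn0 : (0:ℝ) < n := by
    have : (0:ℝ) < (a:ℝ) * d := by positivity
    linarith
  have hthu' : (t:ℝ)*h ≤ 2*u := by exact_mod_cast hthu
  have hah' : (a:ℝ) ≤ 2*h := by exact_mod_cast hah
  -- step 1 : choose bounds
  have S1 : (n.choose a : ℝ) ≤ (Real.exp 1 * n / a)^a :=
    choose_le_epow n a (le_refl _) hn0.le
  have S2 : (n.choose h : ℝ) ≤ (Real.exp 1 * n / h)^h :=
    choose_le_epow n h (le_refl _) hn0.le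
  have S3 : ((a*h).choose u : ℝ) ≤ (Real.exp 1 * ((a:ℝ)*h) / u)^u :=
    choose_le_epow (a*h) u (by push_cast; exact le_rfl) (by positivity)
  have S3' : (Real.exp 1 * ((a:ℝ)*h) / u)^u ≤ (2*Real.exp 1*a/t)^u := by
    apply pow_le_pow_left₀ (by positivity)
    rw [div_le_div_iff₀ hu0 ht0]
    have e0 : Real.exp 1 * (a:ℝ) * (t * h) ≤ Real.exp 1 * (a:ℝ) * (2*u) :=
      mul_le_mul_of_nonneg_left hthu' (by positivity)
    nlinarith [e0]
  set ρ := 2*Real.exp 1*(a:ℝ)*d/((t:ℝ)*(n:ℝ)) with hρ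
  have hρ0 : 0 < ρ := by positivity
  have hρ1 : ρ ≤ 1 := by
    rw [hρ, div_le_one (by positivity)]
    have e0 : 2*Real.exp 1*(a:ℝ)*d ≤ 2*Real.exp 1*(n:ℝ) := by
      have := mul_le_mul_of_nonneg_left had (by positivity : (0:ℝ) ≤ 2*Real.exp 1)
      linarith [this]
    have e1 : 2*Real.exp 1*(n:ℝ) ≤ (t:ℝ)*n := by
      apply mul_le_mul_of_nonneg_right _ hn0.le
      linarith
    linarith
  have S4 : (2*Real.exp 1*(a:ℝ)/t)^u * (d/n)^u = ρ^u := by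
    rw [← mul_pow, hρ]
    congr 1
    field_simp
  have S6 : ρ^u ≤ ρ^(((t:ℝ)*h)/2 : ℝ) := by
    have e0 : ρ^u = ρ^((u:ℕ):ℝ) := (Real.rpow_natCast ρ u).symm
    rw [e0]
    apply Real.rpow_le_rpow_of_exponent_ge hρ0 hρ1
    linarith
  -- exp forms
  have E1 : (Real.exp 1 * n / (a:ℝ))^a = Real.exp ((a:ℝ) * Real.log (Real.exp 1 * n / a)) := by
    rw [← Real.exp_log (show (0:ℝ) < Real.exp 1 * n / a by positivity), ← Real.exp_nat_mul,
      Real.log_exp]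
  have E2 : (Real.exp 1 * n / (h:ℝ))^h = Real.exp ((h:ℝ) * Real.log (Real.exp 1 * n / h)) := by
    rw [← Real.exp_log (show (0:ℝ) < Real.exp 1 * n / h by positivity), ← Real.exp_nat_mul,
      Real.log_exp]
  have E3 : ρ^((((t:ℝ)*h)/2 : ℝ)) = Real.exp ((((t:ℝ)*h)/2) * Real.log ρ) := by
    rw [Real.rpow_def_of_pos hρ0, mul_comm]
  have E4 : ((n:ℝ) ^ ((2:ℝ)*r+1))⁻¹ = Real.exp (-(((2:ℝ)*r+1) * Real.log n)) := by
    rw [Real.rpow_def_of_pos hn0, Real.exp_neg]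
    ring_nf
  -- log ρ = - L
  have hLρ : Real.log ρ = - Real.log ((t:ℝ)*n/(2*Real.exp 1*a*d)) := by
    have e0 : ρ * ((t:ℝ)*n/(2*Real.exp 1*a*d)) = 1 := by
      rw [hρ]; field_simp
    have e1 := Real.log_mul (ne_of_gt hρ0)
      (ne_of_gt (show (0:ℝ) < (t:ℝ)*n/(2*Real.exp 1*a*d) by positivity))
    rw [e0, Real.log_one] at e1
    linarith
  -- the key inequality
  have KEY := key_ineq hd hr ht21 htT hta had hah hha h11 h4223
  -- assemble
  calc (n.choose a : ℝ) * (n.choose h) * ((a*h).choose u) * (d/n)^u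
      ≤ (Real.exp 1 * n / a)^a * (Real.exp 1 * n / h)^h * (2*Real.exp 1*(a:ℝ)/t)^u * (d/n)^u := by
        have c1 : ((a*h).choose u : ℝ) ≤ (2*Real.exp 1*(a:ℝ)/t)^u := le_trans S3 S3'
        apply mul_le_mul_of_nonneg_right _ (show (0:ℝ) ≤ (d/n)^u by positivity)
        apply mul_le_mul _ c1 (by positivity) (by positivity)
        exact mul_le_mul S1 S2 (by positivity) (by positivity)
  _ = (Real.exp 1 * n / a)^a * (Real.exp 1 * n / h)^h * ρ^u := by
        rw [mul_assoc, S4]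
  _ ≤ (Real.exp 1 * n / a)^a * (Real.exp 1 * n / h)^h * ρ^(((t:ℝ)*h)/2 : ℝ) := by
        apply mul_le_mul_of_nonneg_left S6 (by positivity)
  _ = Real.exp ((a:ℝ) * Real.log (Real.exp 1 * n / a) + (h:ℝ) * Real.log (Real.exp 1 * n / h)
        + (((t:ℝ)*h)/2) * Real.log ρ) := by
        rw [E1, E2, E3, ← Real.exp_add, ← Real.exp_add]
  _ ≤ Real.exp (-(((2:ℝ)*r+1) * Real.log n)) := by
        apply Real.exp_le_exp.2
        rw [hLρ]
        linarith [KEY]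
  _ = ((n:ℝ) ^ ((2:ℝ)*r+1))⁻¹ := E4.symm




variable {n : ℕ}

lemma filt_fst (s y : Finset (Fin n)) (i : Fin n) :
    ((s ×ˢ y).filter fun q => q.1 = i) = if i ∈ s then ({i} ×ˢ y) else ∅ := by
  ext q
  by_cases hi : i ∈ s <;> simp [Finset.mem_filter, Finset.mem_product, hi] <;> aesop

lemma filt_fst_card (s y : Finset (Fin n)) (i : Fin n) :
    (((s ×ˢ y)).filter fun q => q.1 = i).card = if i ∈ s then y.card else 0 := by
  rw [filt_fst]
  split_ifs <;> simp

lemma filt_snd (s y : Finset (Fin n)) (j : Fin n) :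
    ((s ×ˢ y).filter fun q => q.2 = j) = if j ∈ y then (s ×ˢ {j}) else ∅ := by
  ext q
  by_cases hj : j ∈ y <;> simp [Finset.mem_filter, Finset.mem_product, hj] <;> aesop

lemma filt_snd_card (s y : Finset (Fin n)) (j : Fin n) :
    (((s ×ˢ y)).filter fun q => q.2 = j).card = if j ∈ y then s.card else 0 := by
  rw [filt_snd]
  split_ifs <;> simp

lemma filt_fst_ones (B : Matrix (Fin n) (Fin n) ℝ) (s y : Finset (Fin n)) (i : Fin n) :
    ((s ×ˢ y).filter fun q => q.1 = i ∧ B q.1 q.2 = 1)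
      = if i ∈ s then ({i} ×ˢ (y.filter fun j => B i j = 1)) else ∅ := by
  ext q
  by_cases hi : i ∈ s <;> simp [Finset.mem_filter, Finset.mem_product, hi] <;> aesop

lemma filt_fst_ones_card (B : Matrix (Fin n) (Fin n) ℝ) (s y : Finset (Fin n)) (i : Fin n) :
    (((s ×ˢ y)).filter fun q => q.1 = i ∧ B q.1 q.2 = 1).card
      = if i ∈ s then (y.filter fun j => B i j = 1).card else 0 := by
  rw [filt_fst_ones]
  split_ifs <;> simp

lemma filt_snd_ones (B : Matrix (Fin n) (Fin n) ℝ) (s y : Finset (Fin n)) (j : Fin n) :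
    ((s ×ˢ y).filter fun q => q.2 = j ∧ B q.1 q.2 = 1)
      = if j ∈ y then ((s.filter fun i => B i j = 1) ×ˢ {j}) else ∅ := by
  ext q
  by_cases hj : j ∈ y <;> simp [Finset.mem_filter, Finset.mem_product, hj] <;> aesop

lemma filt_snd_ones_card (B : Matrix (Fin n) (Fin n) ℝ) (s y : Finset (Fin n)) (j : Fin n) :
    (((s ×ˢ y)).filter fun q => q.2 = j ∧ B q.1 q.2 = 1).card
      = if j ∈ y then (s.filter fun i => B i j = 1).card else 0 := by
  rw [filt_snd_ones]
  split_ifs <;> simp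

lemma filter_empty_of_subset_prod {R : Finset (Fin n × Fin n)} {X Y : Finset (Fin n)}
    (hR : R ⊆ X ×ˢ Y) (P : Fin n × Fin n → Prop) [DecidablePred P]
    (hP : ∀ q, P q → q.1 ∈ X → q.2 ∈ Y → False) :
    R.filter P = ∅ := by
  rw [Finset.filter_eq_empty_iff]
  intro q hq hPq
  have := hR hq
  rw [Finset.mem_product] at this
  exact hP q hPq this.1 this.2

set_option maxHeartbeats 1000000 in
lemma detAux (d : ℝ) (hd0 : 0 ≤ d) (B : Matrix (Fin n) (Fin n) ℝ)
    (hsymB : ∀ i j, B i j = B j i) (t : ℕ) (ht0 : 0 < t)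
    (hH : ∀ X : Finset (Fin n), (X.card:ℝ) * d ≤ n →
      2 * (Finset.univ.filter fun j => t ≤ (X.filter fun i => B i j = 1).card).card ≤ X.card) :
    ∀ (N : ℕ) (X Y : Finset (Fin n)), X.card + Y.card ≤ N → (X.card:ℝ) * d ≤ n →
    ∃ R C : Finset (Fin n × Fin n),
      R ∪ C = X ×ˢ Y ∧ Disjoint R C ∧
      (∀ i, (R.filter fun q => q.1 = i).card ≤ X.card) ∧
      (∀ j, (C.filter fun q => q.2 = j).card ≤ X.card) ∧
      (∀ i, (R.filter fun q => q.1 = i ∧ B q.1 q.2 = 1).card < t) ∧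
      (∀ j, (C.filter fun q => q.2 = j ∧ B q.1 q.2 = 1).card < t) := by
  intro N
  induction N with
  | zero =>
    intro X Y hc _
    refine ⟨∅, ∅, ?_, ?_, ?_, ?_, ?_, ?_⟩ <;>
      simp_all [Finset.card_eq_zero]
  | succ N ih =>
    intro X Y hc hXd
    rcases Finset.eq_empty_or_nonempty Y with hY | hY
    · subst hY
      exact ⟨∅, ∅, by simp, by simp, by simp, by simp,
        by simp [Finset.filter_empty]; omega, by simp [Finset.filter_empty]; omega⟩
    rcases Finset.eq_empty_or_nonempty X with hX | hX
    · subst hX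
      exact ⟨∅, ∅, by simp, by simp, by simp, by simp,
        by simp [Finset.filter_empty]; omega, by simp [Finset.filter_empty]; omega⟩
    -- heavy columns and rows
    set Y' := Y.filter (fun j => t ≤ (X.filter fun i => B i j = 1).card) with hY'def
    set X' := X.filter (fun i => t ≤ (Y'.filter fun j => B i j = 1).card) with hX'def
    have hY'sub : Y' ⊆ Y := Finset.filter_subset _ _
    have hX'sub : X' ⊆ X := Finset.filter_subset _ _
    have hY'X : 2 * Y'.card ≤ X.card := by
      have h1 : Y' ⊆ Finset.univ.filter fun j => t ≤ (X.filter fun i => B i j = 1).card := by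
        intro j hj
        rw [hY'def, Finset.mem_filter] at hj
        exact Finset.mem_filter.2 ⟨Finset.mem_univ _, hj.2⟩
      have h2 := Finset.card_le_card h1
      have h3 := hH X hXd
      omega
    have hY'd : (Y'.card:ℝ) * d ≤ n := by
      have h1 : Y'.card ≤ X.card := by omega
      have h1' : (Y'.card:ℝ) ≤ X.card := by exact_mod_cast h1
      calc (Y'.card:ℝ) * d ≤ (X.card:ℝ) * d := mul_le_mul_of_nonneg_right h1' hd0
      _ ≤ n := hXd
    have hX'Y' : 2 * X'.card ≤ Y'.card := by
      have h1 : X' ⊆ Finset.univ.filter fun i => t ≤ (Y'.filter fun i' => B i' i = 1).card := by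
        intro i hi
        rw [hX'def, Finset.mem_filter] at hi
        refine Finset.mem_filter.2 ⟨Finset.mem_univ _, ?_⟩
        have heq : (Y'.filter fun j => B i j = 1) = (Y'.filter fun i' => B i' i = 1) := by
          apply Finset.filter_congr
          intro j _
          rw [hsymB i j]
        rw [← heq]
        exact hi.2
      have h2 := Finset.card_le_card h1
      have h3 := hH Y' hY'd
      omega
    have hX'd : (X'.card:ℝ) * d ≤ n := by
      have h1 : X'.card ≤ X.card := Finset.card_le_card hX'sub
      have h1' : (X'.card:ℝ) ≤ X.card := by exact_mod_cast h1
      calc (X'.card:ℝ) * d ≤ (X.card:ℝ) * d := mul_le_mul_of_nonneg_right h1' hd0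
      _ ≤ n := hXd
    -- recursion
    have hsz : X'.card + Y'.card ≤ N := by
      have h1 : 1 ≤ Y.card := Finset.card_pos.2 hY
      have h2 : 1 ≤ X.card := Finset.card_pos.2 hX
      omega
    obtain ⟨R', C', hRC', hdisj', hrow', hcol', hrones', hcones'⟩ := ih X' Y' hsz hX'd
    have hR'sub : R' ⊆ X' ×ˢ Y' := by rw [← hRC']; exact Finset.subset_union_left
    have hC'sub : C' ⊆ X' ×ˢ Y' := by rw [← hRC']; exact Finset.subset_union_right
    refine ⟨((X \ X') ×ˢ Y') ∪ R', (X ×ˢ (Y \ Y')) ∪ C', ?_, ?_, ?_, ?_, ?_, ?_⟩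
    · -- union
      have hm : ∀ q : Fin n × Fin n, (q ∈ R' ∨ q ∈ C') ↔ (q.1 ∈ X' ∧ q.2 ∈ Y') := by
        intro q
        rw [← Finset.mem_union, hRC', Finset.mem_product]
      ext q
      have := hm q
      have hxs : q.1 ∈ X' → q.1 ∈ X := fun h => hX'sub h
      have hys : q.2 ∈ Y' → q.2 ∈ Y := fun h => hY'sub h
      simp only [Finset.mem_union, Finset.mem_product, Finset.mem_sdiff] at *
      by_cases h1 : q.1 ∈ X' <;> by_cases h2 : q.2 ∈ Y' <;> tauto
    · -- disjoint
      rw [Finset.disjoint_left]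
      intro q hq hq2
      simp only [Finset.mem_union] at hq hq2
      rcases hq with hq | hq <;> rcases hq2 with hq2 | hq2
      · rw [Finset.mem_product, Finset.mem_sdiff] at hq hq2
        exact hq2.2.2 hq.2
      · have := hC'sub hq2
        rw [Finset.mem_product] at this
        rw [Finset.mem_product, Finset.mem_sdiff] at hq
        exact hq.1.2 this.1
      · have := hR'sub hq
        rw [Finset.mem_product] at this
        rw [Finset.mem_product, Finset.mem_sdiff] at hq2
        exact hq2.2.2 this.2
      · exact (Finset.disjoint_left.1 hdisj') hq hq2
    · -- row counts
      intro i
      rw [Finset.filter_union]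
      refine le_trans (Finset.card_union_le _ _) ?_
      rw [filt_fst_card]
      by_cases hi : i ∈ X \ X'
      · have hz : (R'.filter fun q => q.1 = i).card = 0 := by
          rw [filter_empty_of_subset_prod hR'sub _ ?_, Finset.card_empty]
          intro q hq hqX' _
          rw [hq] at hqX'
          exact (Finset.mem_sdiff.1 hi).2 hqX'
        rw [hz, if_pos hi]
        omega
      · rw [if_neg hi]
        have := hrow' i
        have h2 : X'.card ≤ X.card := Finset.card_le_card hX'sub
        omega
    · -- col counts
      intro j
      rw [Finset.filter_union]
      refine le_trans (Finset.card_union_le _ _) ?_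
      rw [filt_snd_card]
      by_cases hj : j ∈ Y \ Y'
      · have hz : (C'.filter fun q => q.2 = j).card = 0 := by
          rw [filter_empty_of_subset_prod hC'sub _ ?_, Finset.card_empty]
          intro q hq _ hqY'
          rw [hq] at hqY'
          exact (Finset.mem_sdiff.1 hj).2 hqY'
        rw [hz, if_pos hj]
        omega
      · rw [if_neg hj]
        have := hcol' j
        have h2 : X'.card ≤ X.card := Finset.card_le_card hX'sub
        omega
    · -- row ones
      intro i
      rw [Finset.filter_union]
      refine lt_of_le_of_lt (Finset.card_union_le _ _) ?_
      rw [filt_fst_ones_card]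
      by_cases hi : i ∈ X \ X'
      · have hz : (R'.filter fun q => q.1 = i ∧ B q.1 q.2 = 1).card = 0 := by
          rw [filter_empty_of_subset_prod hR'sub _ ?_, Finset.card_empty]
          intro q hq hqX' _
          rw [hq.1] at hqX'
          exact (Finset.mem_sdiff.1 hi).2 hqX'
        have hlight : (Y'.filter fun j => B i j = 1).card < t := by
          have hiX' : i ∉ X' := (Finset.mem_sdiff.1 hi).2
          rw [hX'def, Finset.mem_filter] at hiX'
          push_neg at hiX'
          exact hiX' (Finset.mem_sdiff.1 hi).1
        rw [hz, if_pos hi]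
        omega
      · rw [if_neg hi]
        have := hrones' i
        omega
    · -- col ones
      intro j
      rw [Finset.filter_union]
      refine lt_of_le_of_lt (Finset.card_union_le _ _) ?_
      rw [filt_snd_ones_card]
      by_cases hj : j ∈ Y \ Y'
      · have hz : (C'.filter fun q => q.2 = j ∧ B q.1 q.2 = 1).card = 0 := by
          rw [filter_empty_of_subset_prod hC'sub _ ?_, Finset.card_empty]
          intro q hq _ hqY'
          rw [hq.1] at hqY'
          exact (Finset.mem_sdiff.1 hj).2 hqY'
        have hlight : (X.filter fun i => B i j = 1).card < t := by
          have hjY' : j ∉ Y' := (Finset.mem_sdiff.1 hj).2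
          rw [hY'def, Finset.mem_filter] at hjY'
          push_neg at hjY'
          exact hjY' (Finset.mem_sdiff.1 hj).1
        rw [hz, if_pos hj]
        omega
      · rw [if_neg hj]
        have := hcones' j
        omega

lemma mem_image_swap (s : Finset (Fin n × Fin n)) (q : Fin n × Fin n) :
    q ∈ s.image Prod.swap ↔ q.swap ∈ s := by
  simp only [Finset.mem_image]
  constructor
  · rintro ⟨b, hb, rfl⟩
    simpa using hb
  · intro h
    exact ⟨q.swap, h, by simp⟩

lemma filter_image_swap (s : Finset (Fin n × Fin n)) (P : Fin n × Fin n → Prop)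
    [DecidablePred P] :
    (s.image Prod.swap).filter P = (s.filter fun q => P q.swap).image Prod.swap := by
  ext q
  rw [Finset.mem_filter, mem_image_swap, mem_image_swap, Finset.mem_filter]
  simp

lemma filter_image_swap_card (s : Finset (Fin n × Fin n)) (P : Fin n × Fin n → Prop)
    [DecidablePred P] :
    ((s.image Prod.swap).filter P).card = (s.filter fun q => P q.swap).card := by
  rw [filter_image_swap]
  exact Finset.card_image_of_injective _ Prod.swap_injective

set_option maxHeartbeats 1000000 in
lemma detMain (d : ℝ) (hd0 : 0 < d) (B : Matrix (Fin n) (Fin n) ℝ)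
    (hsymB : ∀ i j, B i j = B j i) (t : ℕ) (ht0 : 0 < t)
    (hH : ∀ X : Finset (Fin n), (X.card:ℝ) * d ≤ n →
      2 * (Finset.univ.filter fun j => t ≤ (X.filter fun i => B i j = 1).card).card ≤ X.card)
    (I J : Finset (Fin n)) (hmin : min (I.card : ℝ) (J.card : ℝ) * d ≤ n) :
    ∃ R C : Finset (Fin n × Fin n), Disjoint R C ∧ R ∪ C = I ×ˢ J ∧
      (∀ i, (R.filter fun q => q.1 = i).card ≤ 2 * min I.card J.card) ∧
      (∀ j, (C.filter fun q => q.2 = j).card ≤ 2 * min I.card J.card) ∧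
      (∀ i, (R.filter fun q => q.1 = i ∧ B q.1 q.2 = 1).card < t) ∧
      (∀ j, (C.filter fun q => q.2 = j ∧ B q.1 q.2 = 1).card < t) := by
  rcases le_or_gt I.card J.card with hIJ | hIJ
  · have hmineq : min (I.card : ℝ) (J.card : ℝ) = I.card := by
      apply min_eq_left
      exact_mod_cast hIJ
    have hId : (I.card:ℝ)*d ≤ n := by rwa [hmineq] at hmin
    obtain ⟨R, C, hu, hdisj, hrow, hcol, hro, hco⟩ :=
      detAux d hd0.le B hsymB t ht0 hH (I.card + J.card) I J le_rfl hId
    have hminN : min I.card J.card = I.card := min_eq_left hIJ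
    refine ⟨R, C, hdisj, hu, ?_, ?_, hro, hco⟩
    · intro i; have := hrow i; omega
    · intro j; have := hcol j; omega
  · have hmineq : min (I.card : ℝ) (J.card : ℝ) = J.card := by
      apply min_eq_right
      exact_mod_cast hIJ.le
    have hJd : (J.card:ℝ)*d ≤ n := by rwa [hmineq] at hmin
    obtain ⟨R₀, C₀, hu, hdisj, hrow, hcol, hro, hco⟩ :=
      detAux d hd0.le B hsymB t ht0 hH (J.card + I.card) J I le_rfl hJd
    have hminN : min I.card J.card = J.card := min_eq_right hIJ.le
    refine ⟨C₀.image Prod.swap, R₀.image Prod.swap, ?_, ?_, ?_, ?_, ?_, ?_⟩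
    · rw [Finset.disjoint_image Prod.swap_injective]
      exact hdisj.symm
    · rw [← Finset.image_union]
      rw [Finset.union_comm, hu]
      ext q
      rw [mem_image_swap, Finset.mem_product, Finset.mem_product]
      simp [and_comm]
    · intro i
      rw [filter_image_swap_card]
      have heq : (C₀.filter fun q => (q.swap.1 = i)) = (C₀.filter fun q => q.2 = i) := by
        apply Finset.filter_congr
        intro q _
        simp
      rw [heq]
      have := hcol i
      omega
    · intro j
      rw [filter_image_swap_card]
      have heq : (R₀.filter fun q => (q.swap.2 = j)) = (R₀.filter fun q => q.1 = j) := by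
        apply Finset.filter_congr
        intro q _
        simp
      rw [heq]
      have := hrow j
      omega
    · intro i
      rw [filter_image_swap_card]
      have heq : (C₀.filter fun q => (q.swap.1 = i ∧ B q.swap.1 q.swap.2 = 1))
          = (C₀.filter fun q => q.2 = i ∧ B q.1 q.2 = 1) := by
        apply Finset.filter_congr
        intro q _
        rw [Prod.fst_swap, Prod.snd_swap, hsymB q.2 q.1]
      rw [heq]
      exact hco i
    · intro j
      rw [filter_image_swap_card]
      have heq : (R₀.filter fun q => (q.swap.2 = j ∧ B q.swap.1 q.swap.2 = 1))
          = (R₀.filter fun q => q.1 = j ∧ B q.1 q.2 = 1) := by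
        apply Finset.filter_congr
        intro q _
        rw [Prod.fst_swap, Prod.snd_swap, hsymB q.2 q.1]
      rw [heq]
      exact hro j

def swapFn (q : Fin n × Fin n) : Fin n × Fin n := if q.1 ≤ q.2 then q else q.swap

lemma swapFn_le (q : Fin n × Fin n) : (swapFn q).1 ≤ (swapFn q).2 := by
  rw [swapFn]
  split_ifs with h
  · exact h
  · simp only [Prod.fst_swap, Prod.snd_swap]
    exact le_of_not_ge h

set_option maxHeartbeats 800000 in
lemma extract (M : Matrix (Fin n) (Fin n) ℝ) (hsymM : ∀ i j, M i j = M j i)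
    (t : ℕ) (X Y : Finset (Fin n))
    (hheavy : ∀ j ∈ Y, t ≤ (X.filter fun i => M i j = 1).card) :
    ∃ Q : Finset (Fin n × Fin n), Q ⊆ (X ×ˢ Y).image swapFn ∧
      Q.card = (t*Y.card+1)/2 ∧ ∀ q ∈ Q, M q.1 q.2 = 1 := by
  classical
  set SS := (X ×ˢ Y).filter (fun q => M q.1 q.2 = 1) with hSSdef
  have hSSmem : ∀ q ∈ SS, M q.1 q.2 = 1 := by
    intro q hq
    exact (Finset.mem_filter.1 hq).2
  have hSScard : t * Y.card ≤ SS.card := by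
    have hmapsto : ∀ q ∈ SS, q.2 ∈ Y := by
      intro q hq
      have := (Finset.mem_filter.1 hq).1
      exact (Finset.mem_product.1 this).2
    rw [Finset.card_eq_sum_card_fiberwise hmapsto]
    have hfib : ∀ j ∈ Y, t ≤ (SS.filter fun q => q.2 = j).card := by
      intro j hj
      have heq : (SS.filter fun q => q.2 = j)
          = (X ×ˢ Y).filter (fun q => q.2 = j ∧ M q.1 q.2 = 1) := by
        rw [hSSdef, Finset.filter_filter]
        apply Finset.filter_congr
        intro q _
        constructor
        · rintro ⟨h1, h2⟩; exact ⟨h2, h1⟩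
        · rintro ⟨h1, h2⟩; exact ⟨h2, h1⟩
      rw [heq, filt_snd_ones_card, if_pos hj]
      exact hheavy j hj
    calc t * Y.card = ∑ _j ∈ Y, t := by rw [Finset.sum_const, smul_eq_mul, mul_comm]
    _ ≤ ∑ j ∈ Y, (SS.filter fun q => q.2 = j).card := Finset.sum_le_sum hfib
  set S' := SS.image swapFn with hS'def
  have hSS2 : SS.card ≤ 2 * S'.card := by
    apply Finset.card_le_mul_card_image
    intro b _
    have hsub : (SS.filter fun q => swapFn q = b) ⊆ {b, b.swap} := by
      intro q hq
      have hq2 := (Finset.mem_filter.1 hq).2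
      rw [swapFn] at hq2
      split_ifs at hq2 with h
      · subst hq2; simp
      · rw [Finset.mem_insert, Finset.mem_singleton]
        right
        rw [← hq2]
        simp
    calc (SS.filter fun q => swapFn q = b).card ≤ ({b, b.swap} : Finset _).card :=
          Finset.card_le_card hsub
    _ ≤ 2 := Finset.card_insert_le _ _ |>.trans (by simp)
  have hu : (t*Y.card+1)/2 ≤ S'.card := by omega
  obtain ⟨Q, hQsub, hQcard⟩ := Finset.exists_subset_card_eq hu
  refine ⟨Q, ?_, hQcard, ?_⟩
  · calc Q ⊆ S' := hQsub
    _ ⊆ (X ×ˢ Y).image swapFn := Finset.image_subset_image (Finset.filter_subset _ _)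
  · intro q hq
    have hqS' := hQsub hq
    rw [hS'def, Finset.mem_image] at hqS'
    obtain ⟨q₀, hq₀, hswap⟩ := hqS'
    have h1 : M q₀.1 q₀.2 = 1 := hSSmem q₀ hq₀
    rw [swapFn] at hswap
    split_ifs at hswap with h
    · rw [← hswap]; exact h1
    · rw [← hswap]
      simp only [Prod.fst_swap, Prod.snd_swap]
      rw [hsymM q₀.2 q₀.1]
      exact h1




variable {n : ℕ} {Ω : Type*} [MeasureSpace Ω] [IsProbabilityMeasure (ℙ : Measure Ω)]

-- P1 : measure of the "entry equals one" event
lemma meas_entry_one (A : Ω → Matrix (Fin n) (Fin n) ℝ) (p : Matrix (Fin n) (Fin n) ℝ)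
    (hmeas : ∀ i j, Measurable fun ω => A ω i j)
    (h01 : ∀ ω i j, A ω i j = 0 ∨ A ω i j = 1)
    (hmean : ∀ i j, (∫ ω, A ω i j) = p i j) (i j : Fin n) :
    ℙ {ω | A ω i j = 1} = ENNReal.ofReal (p i j) := by
  have hms : MeasurableSet {ω | A ω i j = 1} := by
    have := hmeas i j (measurableSet_singleton (1:ℝ))
    simpa [Set.preimage, Set.mem_singleton_iff] using this
  have hind : ∀ ω, A ω i j = Set.indicator {ω | A ω i j = 1} (fun _ => (1:ℝ)) ω := by
    intro ω
    by_cases hω : A ω i j = 1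
    · rw [Set.indicator_of_mem (by exact hω) (fun _ => (1:ℝ))]
      exact hω
    · rw [Set.indicator_of_notMem (by exact hω) (fun _ => (1:ℝ))]
      rcases h01 ω i j with h | h
      · exact h
      · exact absurd h hω
  have hint : (∫ ω, A ω i j) = (ℙ {ω | A ω i j = 1}).toReal := by
    rw [show (fun ω => A ω i j) = fun ω => Set.indicator {ω | A ω i j = 1} (fun _ => (1:ℝ)) ω from
      funext hind]
    rw [integral_indicator_const (1:ℝ) hms]
    simp [measureReal_def]
  have h2 : (ℙ {ω | A ω i j = 1}).toReal = p i j := by rw [← hint, hmean]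
  rw [← h2, ENNReal.ofReal_toReal (measure_ne_top _ _)]

-- P2 : product bound over a set of independent entries
lemma meas_all_ones (A : Ω → Matrix (Fin n) (Fin n) ℝ) (p : Matrix (Fin n) (Fin n) ℝ)
    (d : ℝ)
    (hmeas : ∀ i j, Measurable fun ω => A ω i j)
    (h01 : ∀ ω i j, A ω i j = 0 ∨ A ω i j = 1)
    (hindep : iIndepFun
      (fun (q : {q : Fin n × Fin n // q.1 ≤ q.2}) ω => A ω q.1.1 q.1.2) ℙ)
    (hmean : ∀ i j, (∫ ω, A ω i j) = p i j)
    (hmax : ∀ i j, (n : ℝ) * p i j ≤ d)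
    (Q : Finset (Fin n × Fin n)) (hQ : ∀ q ∈ Q, q.1 ≤ q.2) :
    ℙ {ω | ∀ q ∈ Q, A ω q.1 q.2 = 1} ≤ (ENNReal.ofReal (d / n))^Q.card := by
  classical
  set ι := {q : Fin n × Fin n // q.1 ≤ q.2}
  set S : Finset ι := Q.attach.map
    ⟨fun x => (⟨x.1, hQ x.1 x.2⟩ : ι), by
      intro x y hxy
      exact Subtype.ext (by simpa using congrArg Subtype.val hxy)⟩ with hS
  have hSmem : ∀ i : ι, i ∈ S ↔ i.1 ∈ Q := by
    intro i
    rw [hS]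
    simp only [Finset.mem_map, Finset.mem_attach, Function.Embedding.coeFn_mk, true_and]
    constructor
    · rintro ⟨x, rfl⟩
      exact x.2
    · intro hi
      exact ⟨⟨i.1, hi⟩, rfl⟩
  have hprod := hindep.measure_inter_preimage_eq_mul S
    (sets := fun _ => ({1} : Set ℝ)) (fun _ _ => measurableSet_singleton 1)
  have hset : (⋂ i ∈ S, (fun ω => A ω i.1.1 i.1.2) ⁻¹' ({1} : Set ℝ))
      = {ω | ∀ q ∈ Q, A ω q.1 q.2 = 1} := by
    ext ω
    simp only [Set.mem_iInter, Set.mem_preimage, Set.mem_singleton_iff, Set.mem_setOf_eq]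
    constructor
    · intro hω q hq
      exact hω ⟨q, hQ q hq⟩ ((hSmem _).2 hq)
    · intro hω i hi
      exact hω i.1 ((hSmem i).1 hi)
  rw [hset] at hprod
  rw [hprod]
  have hfac : ∀ i : ι, i ∈ S →
      ℙ ((fun ω => A ω i.1.1 i.1.2) ⁻¹' ({1} : Set ℝ)) ≤ ENNReal.ofReal (d / n) := by
    intro i _
    have hn0 : (0:ℝ) < n := by
      have := i.1.1.pos
      exact_mod_cast this
    have hple : p i.1.1 i.1.2 ≤ d / n := by
      rw [le_div_iff₀ hn0]
      have := hmax i.1.1 i.1.2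
      linarith [this]
    have : (fun ω => A ω i.1.1 i.1.2) ⁻¹' ({1} : Set ℝ) = {ω | A ω i.1.1 i.1.2 = 1} := by
      ext ω; simp [Set.mem_preimage]
    rw [this, meas_entry_one A p hmeas h01 hmean]
    exact ENNReal.ofReal_le_ofReal hple
  calc ∏ i ∈ S, ℙ ((fun ω => A ω i.1.1 i.1.2) ⁻¹' ({1} : Set ℝ))
      ≤ ∏ _i ∈ S, ENNReal.ofReal (d / n) := Finset.prod_le_prod' hfac
  _ = (ENNReal.ofReal (d / n))^S.card := by rw [Finset.prod_const]
  _ = (ENNReal.ofReal (d / n))^Q.card := by rw [hS, Finset.card_map, Finset.card_attach]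













lemma final_real (n : ℕ) {r : ℝ} (hr : 1 ≤ r) :
    ((n:ℝ)+1) * ((n:ℝ) ^ ((2:ℝ)*r+1))⁻¹ ≤ 2*(n:ℝ)^(-(2*r)) := by
  rcases Nat.eq_zero_or_pos n with hn | hn
  · subst hn
    rw [Nat.cast_zero, Real.zero_rpow (by nlinarith), Real.zero_rpow (by nlinarith)]
    norm_num
  · have hn0 : (0:ℝ) < n := by exact_mod_cast hn
    have hkey : (n:ℝ)^(-(2*r)) * (n:ℝ)^((2:ℝ)*r+1) = n := by
      rw [← Real.rpow_add hn0]
      norm_num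
    have hpow0 : (0:ℝ) < (n:ℝ)^((2:ℝ)*r+1) := Real.rpow_pos_of_pos hn0 _
    rw [show ((n:ℝ)+1) * ((n:ℝ) ^ ((2:ℝ)*r+1))⁻¹ = ((n:ℝ)+1) / ((n:ℝ) ^ ((2:ℝ)*r+1)) by ring,
      div_le_iff₀ hpow0]
    have hn1 : (1:ℝ) ≤ n := by exact_mod_cast hn
    calc (n:ℝ)+1 ≤ 2*n := by linarith
    _ = 2*((n:ℝ)^(-(2*r)) * (n:ℝ)^((2:ℝ)*r+1)) := by rw [hkey]
    _ = 2*(n:ℝ)^(-(2*r)) * (n:ℝ)^((2:ℝ)*r+1) := by ring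

set_option maxHeartbeats 2000000 in
lemma prob_bad (n : ℕ) (Ω : Type*) [MeasureSpace Ω] [IsProbabilityMeasure (ℙ : Measure Ω)]
    (A : Ω → Matrix (Fin n) (Fin n) ℝ) (p : Matrix (Fin n) (Fin n) ℝ) (d r : ℝ)
    (hmeas : ∀ i j, Measurable fun ω => A ω i j)
    (h01 : ∀ ω i j, A ω i j = 0 ∨ A ω i j = 1)
    (hsym : ∀ ω i j, A ω i j = A ω j i)
    (hindep : iIndepFun
      (fun (q : {q : Fin n × Fin n // q.1 ≤ q.2}) ω => A ω q.1.1 q.1.2) ℙ)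
    (hmean : ∀ i j, (∫ ω, A ω i j) = p i j)
    (hd : Real.exp 1 ≤ d)
    (hmax : ∀ i j, (n : ℝ) * p i j ≤ d)
    (hr : 1 ≤ r) (t : ℕ) (ht : t = ⌊20*r*Real.log d⌋₊ + 1) :
    ℙ {ω | ¬ ∀ X : Finset (Fin n), (X.card:ℝ)*d ≤ n →
        2 * (Finset.univ.filter fun j => t ≤ (X.filter fun i => A ω i j = 1).card).card
          ≤ X.card}
      ≤ ENNReal.ofReal (2 * (n:ℝ) ^ (-(2*r))) := by
  classical
  have hE1 : (1:ℝ) ≤ Real.exp 1 := Real.one_le_exp (by norm_num)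
  have hd0 : (0:ℝ) < d := lt_of_lt_of_le (Real.exp_pos 1) hd
  have hlogd : (1:ℝ) ≤ Real.log d := by
    rw [← Real.log_exp 1]; exact Real.log_le_log (Real.exp_pos 1) hd
  have ht21 : 21 ≤ t := by
    rw [ht]
    have : (20:ℕ) ≤ ⌊20*r*Real.log d⌋₊ := by
      apply Nat.le_floor
      push_cast
      nlinarith
    omega
  have htT : 20*r*Real.log d < t := by
    rw [ht]
    push_cast
    exact Nat.lt_floor_add_one _
  -- the pieces of the union
  set hh : ℕ → ℕ := fun a => a/2 + 1 with hhdef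
  set uu : ℕ → ℕ := fun a => (t * (a/2+1) + 1)/2 with huudef
  set EQ : Finset (Fin n × Fin n) → Set Ω := fun Q => {ω | ∀ q ∈ Q, A ω q.1 q.2 = 1} with hEQdef
  set SX : Finset (Finset (Fin n)) :=
    Finset.univ.filter (fun X => t ≤ X.card ∧ (X.card:ℝ)*d ≤ n) with hSXdef
  set SY : Finset (Fin n) → Finset (Finset (Fin n)) :=
    fun X => Finset.univ.filter (fun Y => Y.card = hh X.card) with hSYdef
  set SQ : Finset (Fin n) → Finset (Fin n) → Finset (Finset (Fin n × Fin n)) :=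
    fun X Y => ((X ×ˢ Y).image swapFn).powerset.filter (fun Q => Q.card = uu X.card) with hSQdef
  -- inclusion
  have hincl : {ω | ¬ ∀ X : Finset (Fin n), (X.card:ℝ)*d ≤ n →
        2 * (Finset.univ.filter fun j => t ≤ (X.filter fun i => A ω i j = 1).card).card
          ≤ X.card}
      ⊆ ⋃ X ∈ SX, ⋃ Y ∈ SY X, ⋃ Q ∈ SQ X Y, EQ Q := by
    intro ω hω
    rw [Set.mem_setOf_eq] at hω
    push_neg at hω
    obtain ⟨X, hXd, hXbad⟩ := hω
    set H := Finset.univ.filter fun j => t ≤ (X.filter fun i => A ω i j = 1).card with hHdef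
    have hXbad' : X.card < 2 * H.card := by omega
    have hHne : H.Nonempty := by
      rw [← Finset.card_pos]
      omega
    obtain ⟨j₀, hj₀⟩ := hHne
    have htX : t ≤ X.card := by
      have h1 : t ≤ (X.filter fun i => A ω i j₀ = 1).card := (Finset.mem_filter.1 hj₀).2
      have h2 : (X.filter fun i => A ω i j₀ = 1).card ≤ X.card := Finset.card_filter_le _ _
      omega
    have hcard : hh X.card ≤ H.card := by
      show X.card/2 + 1 ≤ H.card
      omega
    obtain ⟨Y, hYH, hYcard⟩ := Finset.exists_subset_card_eq hcard
    have hheavy : ∀ j ∈ Y, t ≤ (X.filter fun i => A ω i j = 1).card := by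
      intro j hj
      exact (Finset.mem_filter.1 (hYH hj)).2
    obtain ⟨Q, hQsub, hQcard, hQones⟩ := extract (A ω) (hsym ω) t X Y hheavy
    apply Set.mem_biUnion (show X ∈ SX by
      rw [hSXdef, Finset.mem_filter]
      exact ⟨Finset.mem_univ _, htX, hXd⟩)
    apply Set.mem_biUnion (show Y ∈ SY X by
      rw [hSYdef, Finset.mem_filter]
      exact ⟨Finset.mem_univ _, hYcard⟩)
    apply Set.mem_biUnion (show Q ∈ SQ X Y by
      rw [hSQdef, Finset.mem_filter, Finset.mem_powerset]
      refine ⟨hQsub, ?_⟩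
      rw [hQcard, hYcard, huudef, hhdef])
    exact hQones
  -- per-X bound
  set F : ℕ → ℝ≥0∞ := fun a =>
    (n.choose (hh a) : ℝ≥0∞) * ((a * hh a).choose (uu a) : ℝ≥0∞)
      * (ENNReal.ofReal (d/n))^(uu a) with hFdef
  have hperX : ∀ X ∈ SX, ℙ (⋃ Y ∈ SY X, ⋃ Q ∈ SQ X Y, EQ Q) ≤ F X.card := by
    intro X _
    have hYbound : ∀ Y ∈ SY X, ℙ (⋃ Q ∈ SQ X Y, EQ Q)
        ≤ ((X.card * hh X.card).choose (uu X.card) : ℝ≥0∞) * (ENNReal.ofReal (d/n))^(uu X.card) := by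
      intro Y hY
      have hQbound : ∀ Q ∈ SQ X Y, ℙ (EQ Q) ≤ (ENNReal.ofReal (d/n))^(uu X.card) := by
        intro Q hQ
        rw [hSQdef, Finset.mem_filter, Finset.mem_powerset] at hQ
        have hQle : ∀ q ∈ Q, q.1 ≤ q.2 := by
          intro q hq
          have := hQ.1 hq
          rw [Finset.mem_image] at this
          obtain ⟨q₀, _, rfl⟩ := this
          exact swapFn_le q₀
        have := meas_all_ones A p d hmeas h01 hindep hmean hmax Q hQle
        rw [hQ.2] at this
        exact this
      calc ℙ (⋃ Q ∈ SQ X Y, EQ Q) ≤ ∑ Q ∈ SQ X Y, ℙ (EQ Q) := measure_biUnion_finset_le _ _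
      _ ≤ (SQ X Y).card • (ENNReal.ofReal (d/n))^(uu X.card) :=
          Finset.sum_le_card_nsmul _ _ _ hQbound
      _ = ((SQ X Y).card : ℝ≥0∞) * (ENNReal.ofReal (d/n))^(uu X.card) := by
          rw [nsmul_eq_mul]
      _ ≤ ((X.card * hh X.card).choose (uu X.card) : ℝ≥0∞) * (ENNReal.ofReal (d/n))^(uu X.card) := by
          apply mul_le_mul_left
          have hc : (SQ X Y).card ≤ (X.card * hh X.card).choose (uu X.card) := by
            simp only [hSQdef]
            have h1 : ((X ×ˢ Y).image swapFn).powerset.filter (fun Q => Q.card = uu X.card)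
                = Finset.powersetCard (uu X.card) ((X ×ˢ Y).image swapFn) := by
              rw [Finset.powersetCard_eq_filter]
            rw [h1, Finset.card_powersetCard]
            apply Nat.choose_le_choose
            calc ((X ×ˢ Y).image swapFn).card ≤ (X ×ˢ Y).card := Finset.card_image_le
            _ = X.card * Y.card := Finset.card_product _ _
            _ = X.card * hh X.card := by
                rw [hSYdef, Finset.mem_filter] at hY
                rw [hY.2]
          exact_mod_cast hc
    calc ℙ (⋃ Y ∈ SY X, ⋃ Q ∈ SQ X Y, EQ Q) ≤ ∑ Y ∈ SY X, ℙ (⋃ Q ∈ SQ X Y, EQ Q) :=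
        measure_biUnion_finset_le _ _
    _ ≤ (SY X).card • (((X.card * hh X.card).choose (uu X.card) : ℝ≥0∞)
          * (ENNReal.ofReal (d/n))^(uu X.card)) := Finset.sum_le_card_nsmul _ _ _ hYbound
    _ = ((SY X).card : ℝ≥0∞) * (((X.card * hh X.card).choose (uu X.card) : ℝ≥0∞)
          * (ENNReal.ofReal (d/n))^(uu X.card)) := by rw [nsmul_eq_mul]
    _ ≤ F X.card := by
        rw [hFdef]
        have hc : (SY X).card = n.choose (hh X.card) := by
          simp only [hSYdef]
          rw [show (Finset.univ : Finset (Finset (Fin n)))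
              = (Finset.univ : Finset (Fin n)).powerset from (Finset.powerset_univ).symm]
          rw [show (Finset.univ : Finset (Fin n)).powerset.filter (fun Y => Y.card = hh X.card)
              = Finset.powersetCard (hh X.card) (Finset.univ : Finset (Fin n)) from
            (Finset.powersetCard_eq_filter).symm]
          rw [Finset.card_powersetCard, Finset.card_univ, Fintype.card_fin]
        simp only [hFdef]
        rw [hc, mul_assoc]
  -- summation over X
  have hsumX : ∑ X ∈ SX, F X.card
      ≤ (Finset.range (n+1)).card • ENNReal.ofReal (((n:ℝ) ^ ((2:ℝ)*r+1))⁻¹) := by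
    set g : ℕ → ℝ≥0∞ := fun a => if (t ≤ a ∧ (a:ℝ)*d ≤ n) then F a else 0 with hgdef
    have h1 : ∑ X ∈ SX, F X.card = ∑ X ∈ (Finset.univ : Finset (Finset (Fin n))), g X.card := by
      simp only [hgdef, hSXdef, Finset.sum_filter]
    have h2 : ∑ X ∈ (Finset.univ : Finset (Finset (Fin n))), g X.card
        = ∑ m ∈ Finset.range (n+1), (n.choose m) • g m := by
      rw [show (Finset.univ : Finset (Finset (Fin n)))
          = (Finset.univ : Finset (Fin n)).powerset from (Finset.powerset_univ).symm]
      rw [Finset.sum_powerset_apply_card]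
      congr 1
      · rw [Finset.card_univ, Fintype.card_fin]
      · funext m
        rw [Finset.card_univ, Fintype.card_fin]
    rw [h1, h2]
    apply Finset.sum_le_card_nsmul
    intro m _
    simp only [hgdef]
    split_ifs with hcond
    · -- main numeric bound
      obtain ⟨htm, hmd⟩ := hcond
      have hmain := main_numeric hd hr ht21 htT (rfl : hh m = m/2+1) (rfl : uu m = (t*(hh m)+1)/2)
        htm hmd
      have hofpow : (ENNReal.ofReal (d/n))^(uu m) = ENNReal.ofReal ((d/n)^(uu m)) := by
        rw [ENNReal.ofReal_pow (by positivity)]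
      rw [nsmul_eq_mul]
      simp only [hFdef]
      rw [hofpow]
      rw [show ((n.choose m : ℝ≥0∞)) = ENNReal.ofReal (n.choose m) by
          rw [ENNReal.ofReal_natCast],
        show ((n.choose (hh m) : ℝ≥0∞)) = ENNReal.ofReal (n.choose (hh m)) by
          rw [ENNReal.ofReal_natCast],
        show (((m * hh m).choose (uu m) : ℝ≥0∞)) = ENNReal.ofReal ((m * hh m).choose (uu m)) by
          rw [ENNReal.ofReal_natCast]]
      rw [← ENNReal.ofReal_mul (by positivity), ← ENNReal.ofReal_mul (by positivity),
        ← ENNReal.ofReal_mul (by positivity)]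
      apply ENNReal.ofReal_le_ofReal
      calc (n.choose m : ℝ) * ((n.choose (hh m) : ℝ) * (((m * hh m).choose (uu m) : ℝ))
            * (d/n)^(uu m))
          = (n.choose m : ℝ) * (n.choose (hh m)) * (((m * hh m).choose (uu m))) * (d/n)^(uu m) := by
            ring
      _ ≤ ((n:ℝ) ^ ((2:ℝ)*r+1))⁻¹ := hmain
    · simp
  -- final
  calc ℙ _ ≤ ℙ (⋃ X ∈ SX, ⋃ Y ∈ SY X, ⋃ Q ∈ SQ X Y, EQ Q) := measure_mono hincl
  _ ≤ ∑ X ∈ SX, ℙ (⋃ Y ∈ SY X, ⋃ Q ∈ SQ X Y, EQ Q) := measure_biUnion_finset_le _ _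
  _ ≤ ∑ X ∈ SX, F X.card := Finset.sum_le_sum hperX
  _ ≤ (Finset.range (n+1)).card • ENNReal.ofReal (((n:ℝ) ^ ((2:ℝ)*r+1))⁻¹) := hsumX
  _ ≤ ENNReal.ofReal (2 * (n:ℝ) ^ (-(2*r))) := by
      rw [Finset.card_range, nsmul_eq_mul,
        show ((n+1 : ℕ) : ℝ≥0∞) = ENNReal.ofReal ((n:ℝ)+1) by
          rw [← ENNReal.ofReal_natCast]; norm_num,
        ← ENNReal.ofReal_mul (by positivity)]
      exact ENNReal.ofReal_le_ofReal (final_real n hr)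

lemma ofReal_one_sub {x : ℝ} (hx : 0 ≤ x) :
    ENNReal.ofReal (1 - x) ≤ 1 - ENNReal.ofReal x := by
  rw [ENNReal.ofReal_sub 1 hx, ENNReal.ofReal_one]


end Stmt14Aux

open Stmt14Aux in
/-- Decomposition of the residual, undirected graphs (Theorem 6.2). -/
theorem stmt14 (n : ℕ) (Ω : Type*) [MeasureSpace Ω] [IsProbabilityMeasure (ℙ : Measure Ω)]
    (A : Ω → Matrix (Fin n) (Fin n) ℝ) (p : Matrix (Fin n) (Fin n) ℝ) (d r : ℝ)
    (hmeas : ∀ i j, Measurable fun ω => A ω i j)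
    (h01 : ∀ ω i j, A ω i j = 0 ∨ A ω i j = 1)
    (hsym : ∀ ω i j, A ω i j = A ω j i)
    (hindep : iIndepFun
      (fun (q : {q : Fin n × Fin n // q.1 ≤ q.2}) ω => A ω q.1.1 q.1.2) ℙ)
    (hmean : ∀ i j, (∫ ω, A ω i j) = p i j)
    (hd : Real.exp 1 ≤ d)
    (hmax : ∀ i j, (n : ℝ) * p i j ≤ d)
    (hr : 1 ≤ r) :
    ENNReal.ofReal (1 - 2 * (n : ℝ) ^ (-(2 * r))) ≤
      ℙ {ω | ∀ I J : Finset (Fin n),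
        min (I.card : ℝ) (J.card : ℝ) ≤ n / d →
        ∃ R C : Finset (Fin n × Fin n), Disjoint R C ∧ R ∪ C = I ×ˢ J ∧
          (∀ i, (R.filter fun q => q.1 = i).card ≤ 2 * min I.card J.card) ∧
          (∀ j, (C.filter fun q => q.2 = j).card ≤ 2 * min I.card J.card) ∧
          (∀ i, ((R.filter fun q => q.1 = i ∧ A ω q.1 q.2 = 1).card : ℝ) ≤
            20 * r * Real.log d) ∧
          (∀ j, ((C.filter fun q => q.2 = j ∧ A ω q.1 q.2 = 1).card : ℝ) ≤
            20 * r * Real.log d)} := by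
  classical
  have hd0 : (0:ℝ) < d := lt_of_lt_of_le (Real.exp_pos 1) hd
  have hlogd : (1:ℝ) ≤ Real.log d := by
    rw [← Real.log_exp 1]; exact Real.log_le_log (Real.exp_pos 1) hd
  have hT0 : (0:ℝ) ≤ 20*r*Real.log d := by nlinarith
  set t : ℕ := ⌊20*r*Real.log d⌋₊ + 1 with htdef
  set E : Set Ω := {ω | ∀ X : Finset (Fin n), (X.card:ℝ)*d ≤ n →
      2 * (Finset.univ.filter fun j => t ≤ (X.filter fun i => A ω i j = 1).card).card
        ≤ X.card} with hEdef
  have hsubset : E ⊆ {ω | ∀ I J : Finset (Fin n),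
      min (I.card : ℝ) (J.card : ℝ) ≤ n / d →
      ∃ R C : Finset (Fin n × Fin n), Disjoint R C ∧ R ∪ C = I ×ˢ J ∧
        (∀ i, (R.filter fun q => q.1 = i).card ≤ 2 * min I.card J.card) ∧
        (∀ j, (C.filter fun q => q.2 = j).card ≤ 2 * min I.card J.card) ∧
        (∀ i, ((R.filter fun q => q.1 = i ∧ A ω q.1 q.2 = 1).card : ℝ) ≤
          20 * r * Real.log d) ∧
        (∀ j, ((C.filter fun q => q.2 = j ∧ A ω q.1 q.2 = 1).card : ℝ) ≤
          20 * r * Real.log d)} := by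
    intro ω hω
    intro I J hmin
    have hmin' : min (I.card : ℝ) (J.card : ℝ) * d ≤ n := by
      rw [← le_div_iff₀ hd0]
      exact hmin
    obtain ⟨R, C, hdisj, hun, hrow, hcol, hro, hco⟩ :=
      detMain d hd0 (A ω) (hsym ω) t (by omega) hω I J hmin'
    refine ⟨R, C, hdisj, hun, hrow, hcol, ?_, ?_⟩
    · intro i
      have h1 := hro i
      have h2 : (R.filter fun q => q.1 = i ∧ A ω q.1 q.2 = 1).card ≤ ⌊20*r*Real.log d⌋₊ := by
        omega
      calc ((R.filter fun q => q.1 = i ∧ A ω q.1 q.2 = 1).card : ℝ)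
          ≤ (⌊20*r*Real.log d⌋₊ : ℝ) := by exact_mod_cast h2
      _ ≤ 20*r*Real.log d := Nat.floor_le hT0
    · intro j
      have h1 := hco j
      have h2 : (C.filter fun q => q.2 = j ∧ A ω q.1 q.2 = 1).card ≤ ⌊20*r*Real.log d⌋₊ := by
        omega
      calc ((C.filter fun q => q.2 = j ∧ A ω q.1 q.2 = 1).card : ℝ)
          ≤ (⌊20*r*Real.log d⌋₊ : ℝ) := by exact_mod_cast h2
      _ ≤ 20*r*Real.log d := Nat.floor_le hT0
  have hbad : ℙ Eᶜ ≤ ENNReal.ofReal (2 * (n:ℝ) ^ (-(2*r))) := by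
    have hcompl : Eᶜ = {ω | ¬ ∀ X : Finset (Fin n), (X.card:ℝ)*d ≤ n →
        2 * (Finset.univ.filter fun j => t ≤ (X.filter fun i => A ω i j = 1).card).card
          ≤ X.card} := by
      rw [hEdef]
      rfl
    rw [hcompl]
    exact prob_bad n Ω A p d r hmeas h01 hsym hindep hmean hd hmax hr t htdef
  calc ENNReal.ofReal (1 - 2 * (n : ℝ) ^ (-(2 * r)))
      ≤ 1 - ENNReal.ofReal (2 * (n : ℝ) ^ (-(2 * r))) := ofReal_one_sub (by positivity)
  _ ≤ 1 - ℙ Eᶜ := tsub_le_tsub_left hbad 1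
  _ ≤ ℙ E := by
      rw [tsub_le_iff_right]
      calc (1:ℝ≥0∞) = ℙ (Set.univ : Set Ω) := measure_univ.symm
      _ = ℙ (E ∪ Eᶜ) := by rw [Set.union_compl_self]
      _ ≤ ℙ E + ℙ Eᶜ := measure_union_le _ _
  _ ≤ ℙ _ := measure_mono hsubset
end
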